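/- arXiv:1006.1460 — 5 statements merged into one kernel-verified Lean document; each statement's English description precedes it below -/
import Mathlib

section
/- Let s, t, p be nonzero real numbers with 0 < s < t, and suppose p ≤ min(2s, (2/3)(s+t)), with the strict inequality p < 2s required in case t = 2s. Then for all positive real numbers a ≠ b, s/t < (M_s(a,b)^p − G(a,b)^p)/(M_t(a,b)^p − G(a,b)^p) < min(1, 2^{p/t − p/s}). -/
open Real Set Filter Topology

/-- positivity from derivative positivity on `Ici 0` -/
lemma PMpos_of_deriv_pos {f : ℝ → ℝ} (hc : ContinuousOn f (Ici 0)) (h0 : f 0 = 0)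
    (hd : ∀ x ∈ Ioi (0:ℝ), 0 < deriv f x) {x : ℝ} (hx : 0 < x) : 0 < f x := by
  have hm : StrictMonoOn f (Ici 0) :=
    strictMonoOn_of_deriv_pos (convex_Ici 0) hc (by rwa [interior_Ici])
  have := hm (self_mem_Ici) (le_of_lt hx) hx
  rwa [h0] at this

lemma PMsinh_gt {x : ℝ} (hx : 0 < x) : x < sinh x := Real.self_lt_sinh_iff.mpr hx

lemma PMsinh_lt_mul_cosh {x : ℝ} (hx : 0 < x) : sinh x < x * cosh x := by
  have key : 0 < x * cosh x - sinh x := by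
    apply PMpos_of_deriv_pos (f := fun z => z * Real.cosh z - Real.sinh z)
    · fun_prop
    · simp
    · intro z hz
      have hder : HasDerivAt (fun z => z * Real.cosh z - Real.sinh z)
          ((1 * Real.cosh z + z * Real.sinh z) - Real.cosh z) z :=
        ((hasDerivAt_id z).mul (Real.hasDerivAt_cosh z)).sub (Real.hasDerivAt_sinh z)
      rw [hder.deriv]
      have : (1 * Real.cosh z + z * Real.sinh z) - Real.cosh z = z * Real.sinh z := by ring
      rw [this]
      exact mul_pos hz (Real.sinh_pos_iff.mpr hz)
    · exact hx
  linarith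

lemma PMsinh_div_strictMono : StrictMonoOn (fun z => Real.sinh z / z) (Ioi 0) := by
  apply strictMonoOn_of_deriv_pos (convex_Ioi 0)
  · apply ContinuousOn.div (Real.continuous_sinh.continuousOn) continuousOn_id
    intro z hz; exact ne_of_gt hz
  · rw [interior_Ioi]
    intro z hz
    have hder : HasDerivAt (fun z => Real.sinh z / z)
        ((Real.cosh z * z - Real.sinh z * 1) / z ^ 2) z :=
      (Real.hasDerivAt_sinh z).div (hasDerivAt_id z) (ne_of_gt hz)
    rw [hder.deriv]
    apply div_pos _ (pow_pos hz 2)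
    have := PMsinh_lt_mul_cosh hz
    nlinarith
lemma PMcoth_mul_monotone : MonotoneOn (fun z => z * Real.cosh z / Real.sinh z) (Ioi 0) := by
  apply monotoneOn_of_deriv_nonneg (convex_Ioi 0)
  · apply ContinuousOn.div (by fun_prop) (Real.continuous_sinh.continuousOn)
    intro z hz; exact ne_of_gt (Real.sinh_pos_iff.mpr hz)
  · rw [interior_Ioi]
    intro z hz
    apply DifferentiableAt.differentiableWithinAt
    apply DifferentiableAt.div (by fun_prop) (by fun_prop)
    exact ne_of_gt (Real.sinh_pos_iff.mpr hz)
  · rw [interior_Ioi]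
    intro z hz
    have hsz := Real.sinh_pos_iff.mpr hz
    have hder : HasDerivAt (fun z => z * Real.cosh z / Real.sinh z)
        (((1 * Real.cosh z + z * Real.sinh z) * Real.sinh z - z * Real.cosh z * Real.cosh z) / Real.sinh z ^ 2) z :=
      ((hasDerivAt_id z).mul (Real.hasDerivAt_cosh z)).div (Real.hasDerivAt_sinh z) (ne_of_gt hsz)
    rw [hder.deriv]
    apply div_nonneg _ (sq_nonneg _)
    have h1 : Real.cosh z ^ 2 = Real.sinh z ^ 2 + 1 := Real.cosh_sq z
    have h2 : z < Real.sinh z := PMsinh_gt hz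
    have h3 : 1 ≤ Real.cosh z := Real.one_le_cosh z
    nlinarith
/-- cross-multiplied: for `0 < w ≤ v`, `w * cosh w * sinh v ≤ v * cosh v * sinh w` -/
lemma PMcoth_cross {w v : ℝ} (hw : 0 < w) (hwv : w ≤ v) :
    w * Real.cosh w * Real.sinh v ≤ v * Real.cosh v * Real.sinh w := by
  have hv : 0 < v := lt_of_lt_of_le hw hwv
  have hsw := Real.sinh_pos_iff.mpr hw
  have hsv := Real.sinh_pos_iff.mpr hv
  have := PMcoth_mul_monotone hw (show v ∈ Ioi 0 from hv) hwv
  rw [div_le_div_iff₀ hsw hsv] at this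
  linarith
/-- for `0 < w < v`: `v * sinh w < w * sinh v` -/
lemma PMsinh_cross {w v : ℝ} (hw : 0 < w) (hwv : w < v) :
    v * Real.sinh w < w * Real.sinh v := by
  have hv : 0 < v := lt_trans hw hwv
  have := PMsinh_div_strictMono (show w ∈ Ioi 0 from hw) (show v ∈ Ioi 0 from hv) hwv
  rw [div_lt_div_iff₀ hw hv] at this
  linarith
lemma PMsinh_cross_le {w v : ℝ} (hw : 0 < w) (hwv : w ≤ v) :
    v * Real.sinh w ≤ w * Real.sinh v := by
  rcases eq_or_lt_of_le hwv with rfl | h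
  · exact le_rfl
  · exact le_of_lt (PMsinh_cross hw h)

lemma PMhlin (c z : ℝ) : HasDerivAt (fun z : ℝ => c*z) c z := by
  simpa using (hasDerivAt_id z).const_mul c

/-- L4 -/
lemma PML4 {d : ℝ} (hd : 0 < d) : 3*d*Real.sinh (2*d) < 2*Real.sinh d*Real.sinh (3*d) := by
  have hS : 0 < Real.sinh d := Real.sinh_pos_iff.mpr hd
  have hdS : d < Real.sinh d := PMsinh_gt hd
  have hC : 0 < Real.cosh d := Real.cosh_pos d
  have hC2 : Real.cosh d ^ 2 = Real.sinh d ^ 2 + 1 := Real.cosh_sq d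
  have hCle : Real.cosh d ≤ 1 + Real.sinh d ^ 2 / 2 := by nlinarith
  have h2 : Real.sinh (2*d) = 2*Real.sinh d*Real.cosh d := Real.sinh_two_mul d
  have h3 : Real.sinh (3*d) = Real.sinh d * (3 + 4 * Real.sinh d ^ 2) := by
    have e : (3:ℝ)*d = 2*d + d := by ring
    rw [e, Real.sinh_add, h2, Real.cosh_two_mul]
    nlinarith [hC2]
  rw [h2, h3]
  have hSC : 0 < Real.sinh d * Real.cosh d := mul_pos hS hC
  have t1 : 6*d*(Real.sinh d*Real.cosh d) < 6*Real.sinh d*(Real.sinh d*Real.cosh d) := by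
    nlinarith [hSC]
  have t2 : Real.sinh d * Real.cosh d ≤ Real.sinh d * (1 + Real.sinh d^2/2) :=
    mul_le_mul_of_nonneg_left hCle (le_of_lt hS)
  nlinarith [mul_pos hS hS, pow_pos hS 4, t1, t2]

/-- L5 -/
lemma PML5 {d : ℝ} (hd : 0 < d) : 6*d*Real.cosh (2*d) < Real.sinh (4*d) + Real.sinh (2*d) := by
  have key : 0 < Real.sinh (4*d) + Real.sinh (2*d) - 6*d*Real.cosh (2*d) := by
    apply PMpos_of_deriv_pos
      (f := fun z => Real.sinh (4*z) + Real.sinh (2*z) - 6*z*Real.cosh (2*z))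
    · fun_prop
    · simp
    · intro z hz
      have d1 : HasDerivAt (fun z : ℝ => Real.sinh (4*z)) (Real.cosh (4*z) * 4) z :=
        (PMhlin 4 z).sinh
      have d2 : HasDerivAt (fun z : ℝ => Real.sinh (2*z)) (Real.cosh (2*z) * 2) z :=
        (PMhlin 2 z).sinh
      have d3 : HasDerivAt (fun z : ℝ => Real.cosh (2*z)) (Real.sinh (2*z) * 2) z :=
        (PMhlin 2 z).cosh
      have d4 : HasDerivAt (fun z : ℝ => 6*z*Real.cosh (2*z))
          (6 * Real.cosh (2*z) + 6*z*(Real.sinh (2*z)*2)) z := by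
        have := ((PMhlin 6 z).mul d3)
        exact this
      have hder : HasDerivAt (fun z => Real.sinh (4*z) + Real.sinh (2*z) - 6*z*Real.cosh (2*z))
          (Real.cosh (4*z)*4 + Real.cosh (2*z)*2 - (6*Real.cosh (2*z) + 6*z*(Real.sinh (2*z)*2))) z :=
        (d1.add d2).sub d4
      rw [hder.deriv]
      have hid : Real.cosh (4*z) - Real.cosh (2*z) = 2 * Real.sinh z * Real.sinh (3*z) := by
        have e1 : (4:ℝ)*z = 3*z + z := by ring
        have e2 : (2:ℝ)*z = 3*z - z := by ring
        rw [e1, Real.cosh_add, e2, Real.cosh_sub]; ring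
      have := PML4 hz
      nlinarith [hid]
    · exact hd
  linarith

/-- E2 -/
lemma PME2 {d σ : ℝ} (hd : 0 < d) (hσ : 3*d ≤ σ) :
    3*d*Real.cosh d*Real.sinh σ ≤ Real.sinh d * (2*Real.sinh σ + σ*Real.cosh σ) := by
  have h3d : 0 < 3*d := by linarith
  have hσ0 : 0 < σ := lt_of_lt_of_le h3d hσ
  have hs3 : 0 < Real.sinh (3*d) := Real.sinh_pos_iff.mpr h3d
  have hsσ : 0 < Real.sinh σ := Real.sinh_pos_iff.mpr hσ0
  have hsd : 0 < Real.sinh d := Real.sinh_pos_iff.mpr hd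
  have h1 : 3*d*Real.cosh (3*d)*Real.sinh σ ≤ σ*Real.cosh σ*Real.sinh (3*d) :=
    PMcoth_cross h3d hσ
  have h2 : 3*d*Real.sinh (2*d) ≤ 2*Real.sinh d*Real.sinh (3*d) := le_of_lt (PML4 hd)
  have hid : Real.sinh (2*d) = Real.cosh d * Real.sinh (3*d) - Real.sinh d * Real.cosh (3*d) := by
    have e : (2:ℝ)*d = 3*d - d := by ring
    rw [e, Real.sinh_sub]; ring
  rw [← mul_le_mul_iff_of_pos_right hs3]
  have t1 : (3*d*Real.sinh (2*d))*Real.sinh σ ≤ (2*Real.sinh d*Real.sinh (3*d))*Real.sinh σ :=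
    mul_le_mul_of_nonneg_right h2 (le_of_lt hsσ)
  have t2 : Real.sinh d*(3*d*Real.cosh (3*d)*Real.sinh σ) ≤ Real.sinh d*(σ*Real.cosh σ*Real.sinh (3*d)) :=
    mul_le_mul_of_nonneg_left h1 (le_of_lt hsd)
  have e : 3*d*Real.cosh d*Real.sinh σ*Real.sinh (3*d) =
      3*d*Real.sinh (2*d)*Real.sinh σ + Real.sinh d*(3*d*Real.cosh (3*d)*Real.sinh σ) := by
    rw [hid]; ring
  have e2 : Real.sinh d * (2*Real.sinh σ + σ*Real.cosh σ) * Real.sinh (3*d) =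
      2*Real.sinh d*Real.sinh (3*d)*Real.sinh σ + Real.sinh d*(σ*Real.cosh σ*Real.sinh (3*d)) := by
    ring
  linarith [t1, t2]

lemma PMaddlin (c z : ℝ) : HasDerivAt (fun z : ℝ => c + z) 1 z :=
  (hasDerivAt_id z).const_add c

/-- Lemma E -/
lemma PMLemE {d σ : ℝ} (hd : 0 < d) (hσ : 3*d < σ) :
    0 < (σ-3*d)*Real.sinh (σ+d) - (σ+3*d)*Real.sinh (σ-d) + 2*σ*Real.sinh (2*d) := by
  set F : ℝ → ℝ := fun τ => τ*Real.sinh (4*d+τ) - (6*d+τ)*Real.sinh (2*d+τ)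
      + 2*(3*d+τ)*Real.sinh (2*d) with hF
  set F1 : ℝ → ℝ := fun τ => Real.sinh (4*d+τ) + τ*Real.cosh (4*d+τ)
      - Real.sinh (2*d+τ) - (6*d+τ)*Real.cosh (2*d+τ) + 2*Real.sinh (2*d) with hF1
  have hdF : ∀ τ : ℝ, HasDerivAt F (F1 τ) τ := by
    intro τ
    have a1 : HasDerivAt (fun τ : ℝ => Real.sinh (4*d+τ)) (Real.cosh (4*d+τ) * 1) τ :=
      (PMaddlin (4*d) τ).sinh
    have a2 : HasDerivAt (fun τ : ℝ => τ * Real.sinh (4*d+τ))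
        (1 * Real.sinh (4*d+τ) + τ * (Real.cosh (4*d+τ) * 1)) τ :=
      (hasDerivAt_id τ).mul a1
    have b1 : HasDerivAt (fun τ : ℝ => Real.sinh (2*d+τ)) (Real.cosh (2*d+τ) * 1) τ :=
      (PMaddlin (2*d) τ).sinh
    have b2 : HasDerivAt (fun τ : ℝ => (6*d+τ) * Real.sinh (2*d+τ))
        (1 * Real.sinh (2*d+τ) + (6*d+τ) * (Real.cosh (2*d+τ) * 1)) τ :=
      (PMaddlin (6*d) τ).mul b1
    have c2 : HasDerivAt (fun τ : ℝ => 2*(3*d+τ)*Real.sinh (2*d))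
        ((2*1) * Real.sinh (2*d)) τ := by
      have : HasDerivAt (fun τ : ℝ => 2*(3*d+τ)) (2*1) τ := (PMaddlin (3*d) τ).const_mul 2
      exact this.mul_const _
    have := (a2.sub b2).add c2
    convert this using 1 <;> try rfl
    simp [hF1]; ring
  have hdF1 : ∀ τ : ℝ, HasDerivAt F1
      (2*Real.cosh (4*d+τ) + τ*Real.sinh (4*d+τ)
        - 2*Real.cosh (2*d+τ) - (6*d+τ)*Real.sinh (2*d+τ)) τ := by
    intro τ
    have a1 : HasDerivAt (fun τ : ℝ => Real.sinh (4*d+τ)) (Real.cosh (4*d+τ) * 1) τ :=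
      (PMaddlin (4*d) τ).sinh
    have a2 : HasDerivAt (fun τ : ℝ => τ * Real.cosh (4*d+τ))
        (1 * Real.cosh (4*d+τ) + τ * (Real.sinh (4*d+τ) * 1)) τ :=
      (hasDerivAt_id τ).mul (PMaddlin (4*d) τ).cosh
    have b1 : HasDerivAt (fun τ : ℝ => Real.sinh (2*d+τ)) (Real.cosh (2*d+τ) * 1) τ :=
      (PMaddlin (2*d) τ).sinh
    have b2 : HasDerivAt (fun τ : ℝ => (6*d+τ) * Real.cosh (2*d+τ))
        (1 * Real.cosh (2*d+τ) + (6*d+τ) * (Real.sinh (2*d+τ) * 1)) τ :=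
      (PMaddlin (6*d) τ).mul (PMaddlin (2*d) τ).cosh
    have := (((a1.add a2).sub b1).sub b2).add (hasDerivAt_const τ (2*Real.sinh (2*d)))
    convert this using 1 <;> try rfl
    ring
  -- F2 ≥ 0 on τ ≥ 0
  have hF2 : ∀ τ : ℝ, 0 ≤ τ → 0 ≤ 2*Real.cosh (4*d+τ) + τ*Real.sinh (4*d+τ)
        - 2*Real.cosh (2*d+τ) - (6*d+τ)*Real.sinh (2*d+τ) := by
    intro τ hτ
    have he := PME2 hd (show 3*d ≤ 3*d+τ by linarith)
    have e1 : Real.cosh (4*d+τ) = Real.cosh (3*d+τ)*Real.cosh d + Real.sinh (3*d+τ)*Real.sinh d := by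
      rw [show 4*d+τ = (3*d+τ)+d by ring, Real.cosh_add]
    have e2 : Real.cosh (2*d+τ) = Real.cosh (3*d+τ)*Real.cosh d - Real.sinh (3*d+τ)*Real.sinh d := by
      rw [show 2*d+τ = (3*d+τ)-d by ring, Real.cosh_sub]
    have e3 : Real.sinh (4*d+τ) = Real.sinh (3*d+τ)*Real.cosh d + Real.cosh (3*d+τ)*Real.sinh d := by
      rw [show 4*d+τ = (3*d+τ)+d by ring, Real.sinh_add]
    have e4 : Real.sinh (2*d+τ) = Real.sinh (3*d+τ)*Real.cosh d - Real.cosh (3*d+τ)*Real.sinh d := by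
      rw [show 2*d+τ = (3*d+τ)-d by ring, Real.sinh_sub]
    rw [e1, e2, e3, e4]
    nlinarith [he]
  -- F1 monotone on Ici 0, so F1 τ ≥ F1 0 > 0
  have hF1mono : MonotoneOn F1 (Ici 0) := by
    apply monotoneOn_of_deriv_nonneg (convex_Ici 0)
    · exact fun x _ => ((hdF1 x).continuousAt).continuousWithinAt
    · intro x hx
      exact ((hdF1 x).differentiableAt).differentiableWithinAt
    · intro x hx
      rw [interior_Ici] at hx
      rw [(hdF1 x).deriv]
      exact hF2 x (le_of_lt hx)
  have hF10 : 0 < F1 0 := by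
    have := PML5 hd
    simp only [hF1]
    norm_num
    nlinarith [this]
  have hF1pos : ∀ τ : ℝ, 0 < τ → 0 < F1 τ := by
    intro τ hτ
    have := hF1mono (self_mem_Ici) (le_of_lt hτ : (0:ℝ) ≤ τ) (le_of_lt hτ)
    linarith
  have hFpos : 0 < F (σ - 3*d) := by
    apply PMpos_of_deriv_pos (f := F)
    · exact fun x _ => ((hdF x).continuousAt).continuousWithinAt
    · simp [hF]; ring
    · intro x hx
      rw [(hdF x).deriv]
      exact hF1pos x hx
    · linarith
  have e1 : 4*d+(σ-3*d) = σ + d := by ring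
  have e2 : 2*d+(σ-3*d) = σ - d := by ring
  have e3 : 3*d+(σ-3*d) = σ := by ring
  simp only [hF, e1, e2, e3] at hFpos
  linarith [hFpos]

/-- the crux inequality G' -/
lemma PMGp {X Y P : ℝ} (hX : 0 < X) (hXY : X < Y) (hP1 : P ≤ X) (hP2 : P ≤ (X+Y)/3)
    (hexc : Y = 2*X → P < X) :
    P*(Real.sinh Y - Real.sinh X - Real.sinh (Y-X)) < X*Real.sinh Y - Y*Real.sinh X := by
  have hY : 0 < Y := lt_trans hX hXY
  have hYX : 0 < Y - X := by linarith
  have hsupid : Real.sinh Y - Real.sinh X - Real.sinh (Y-X)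
      = Real.sinh (Y-X)*(Real.cosh X - 1) + Real.sinh X*(Real.cosh (Y-X) - 1) := by
    rw [show Y = (Y-X) + X by ring, Real.sinh_add]
    ring_nf
  have hsup : 0 < Real.sinh Y - Real.sinh X - Real.sinh (Y-X) := by
    rw [hsupid]
    have h1 : 1 < Real.cosh X := Real.one_lt_cosh.mpr (ne_of_gt hX)
    have h2 : 1 < Real.cosh (Y-X) := Real.one_lt_cosh.mpr (ne_of_gt hYX)
    have h3 : 0 < Real.sinh (Y-X) := Real.sinh_pos_iff.mpr hYX
    have h4 : 0 < Real.sinh X := Real.sinh_pos_iff.mpr hX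
    nlinarith
  have hL : 0 < X*Real.sinh Y - Y*Real.sinh X := by
    have := PMsinh_cross hX hXY; linarith
  rcases le_or_gt P 0 with hP0 | hP0
  · nlinarith [mul_nonpos_of_nonpos_of_nonneg hP0 (le_of_lt hsup)]
  rcases lt_trichotomy Y (2*X) with hc | hc | hc
  · -- Y < 2X : use Lemma E
    have hd : 0 < (Y-X)/2 := by linarith
    have hσ : 3*((Y-X)/2) < (X+Y)/2 := by linarith
    have hE := PMLemE hd hσ
    rw [show (X+Y)/2 + (Y-X)/2 = Y by ring, show (X+Y)/2 - (Y-X)/2 = X by ring,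
        show 2*((Y-X)/2) = Y - X by ring] at hE
    have key : (X+Y)/3 * (Real.sinh Y - Real.sinh X - Real.sinh (Y-X))
        < X*Real.sinh Y - Y*Real.sinh X := by nlinarith [hE]
    calc P*(Real.sinh Y - Real.sinh X - Real.sinh (Y-X))
        ≤ (X+Y)/3*(Real.sinh Y - Real.sinh X - Real.sinh (Y-X)) :=
          mul_le_mul_of_nonneg_right hP2 (le_of_lt hsup)
      _ < _ := key
  · -- Y = 2X
    have hPX := hexc hc
    have hid : X*Real.sinh (Y-X) = (Y-X)*Real.sinh X := by
      rw [show Y - X = X by linarith]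
    have key : X * (Real.sinh Y - Real.sinh X - Real.sinh (Y-X))
        = X*Real.sinh Y - Y*Real.sinh X := by nlinarith [hid]
    calc P*(Real.sinh Y - Real.sinh X - Real.sinh (Y-X))
        < X*(Real.sinh Y - Real.sinh X - Real.sinh (Y-X)) :=
          mul_lt_mul_of_pos_right hPX hsup
      _ = _ := key
  · -- Y > 2X
    have hcross := PMsinh_cross hX (show X < Y - X by linarith)
    have key : X * (Real.sinh Y - Real.sinh X - Real.sinh (Y-X))
        < X*Real.sinh Y - Y*Real.sinh X := by nlinarith
    calc P*(Real.sinh Y - Real.sinh X - Real.sinh (Y-X))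
        ≤ X*(Real.sinh Y - Real.sinh X - Real.sinh (Y-X)) :=
          mul_le_mul_of_nonneg_right hP1 (le_of_lt hsup)
      _ < _ := key

noncomputable def PMJ (s t p u : ℝ) : ℝ :=
  Real.log (Real.sinh (s*u)) + (p/s-1)*Real.log (Real.cosh (s*u))
    - Real.log (Real.sinh (t*u)) - (p/t-1)*Real.log (Real.cosh (t*u))

noncomputable def PMDJ (s t p u : ℝ) : ℝ :=
  (Real.cosh (s*u)*s/Real.sinh (s*u) + (p/s-1)*(Real.sinh (s*u)*s/Real.cosh (s*u)))
  - (Real.cosh (t*u)*t/Real.sinh (t*u) + (p/t-1)*(Real.sinh (t*u)*t/Real.cosh (t*u)))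

lemma PMJ_hasDeriv {s t p u : ℝ} (h0s : 0 < s) (h0t : 0 < t) (hu : 0 < u) :
    HasDerivAt (PMJ s t p) (PMDJ s t p u) u := by
  have hsx : Real.sinh (s*u) ≠ 0 := ne_of_gt (Real.sinh_pos_iff.mpr (mul_pos h0s hu))
  have htx : Real.sinh (t*u) ≠ 0 := ne_of_gt (Real.sinh_pos_iff.mpr (mul_pos h0t hu))
  have hcx : Real.cosh (s*u) ≠ 0 := ne_of_gt (Real.cosh_pos _)
  have hcy : Real.cosh (t*u) ≠ 0 := ne_of_gt (Real.cosh_pos _)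
  have d1 : HasDerivAt (fun u : ℝ => Real.log (Real.sinh (s*u)))
      (Real.cosh (s*u)*s/Real.sinh (s*u)) u := ((PMhlin s u).sinh).log hsx
  have d2 : HasDerivAt (fun u : ℝ => Real.log (Real.cosh (s*u)))
      (Real.sinh (s*u)*s/Real.cosh (s*u)) u := ((PMhlin s u).cosh).log hcx
  have d3 : HasDerivAt (fun u : ℝ => Real.log (Real.sinh (t*u)))
      (Real.cosh (t*u)*t/Real.sinh (t*u)) u := ((PMhlin t u).sinh).log htx
  have d4 : HasDerivAt (fun u : ℝ => Real.log (Real.cosh (t*u)))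
      (Real.sinh (t*u)*t/Real.cosh (t*u)) u := ((PMhlin t u).cosh).log hcy
  have := ((d1.add (d2.const_mul (p/s-1))).sub d3).sub (d4.const_mul (p/t-1))
  unfold PMJ PMDJ
  convert this using 1 <;> try rfl
  ring

lemma PMDJ_pos {s t p u : ℝ} (h0s : 0 < s) (hst : s < t)
    (hps : p ≤ 2*s) (hpst : p ≤ 2/3*(s+t)) (hexc : t = 2*s → p < 2*s) (hu : 0 < u) :
    0 < PMDJ s t p u := by
  have h0t : 0 < t := lt_trans h0s hst
  have hx : 0 < s*u := mul_pos h0s hu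
  have hy : 0 < t*u := mul_pos h0t hu
  have hsx : 0 < Real.sinh (s*u) := Real.sinh_pos_iff.mpr hx
  have hsy : 0 < Real.sinh (t*u) := Real.sinh_pos_iff.mpr hy
  have hcx : 0 < Real.cosh (s*u) := Real.cosh_pos _
  have hcy : 0 < Real.cosh (t*u) := Real.cosh_pos _
  -- apply G'
  have hGp := PMGp (X := 2*(s*u)) (Y := 2*(t*u)) (P := p*u)
    (by linarith) (by nlinarith) (by nlinarith) (by nlinarith)
    (by intro h
        have ht2s : t = 2*s := by
          have : (t - 2*s)*u = 0 := by linarith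
          rcases mul_eq_zero.mp this with h' | h'
          · linarith
          · exfalso; linarith
        have := hexc ht2s
        nlinarith)
  have hT : 0 < (s + p*Real.sinh (s*u)^2)*(Real.sinh (t*u)*Real.cosh (t*u))
      - (t + p*Real.sinh (t*u)^2)*(Real.sinh (s*u)*Real.cosh (s*u)) := by
    have hEq : 2*(s*u)*Real.sinh (2*(t*u)) - 2*(t*u)*Real.sinh (2*(s*u))
        - p*u*(Real.sinh (2*(t*u)) - Real.sinh (2*(s*u)) - Real.sinh (2*(t*u) - 2*(s*u)))
        = 4*u*((s + p*Real.sinh (s*u)^2)*(Real.sinh (t*u)*Real.cosh (t*u))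
          - (t + p*Real.sinh (t*u)^2)*(Real.sinh (s*u)*Real.cosh (s*u))) := by
      rw [Real.sinh_sub]
      simp only [Real.sinh_two_mul, Real.cosh_two_mul]
      rw [Real.cosh_sq (s*u), Real.cosh_sq (t*u)]
      ring
    have h4 : 0 < 4*u*((s + p*Real.sinh (s*u)^2)*(Real.sinh (t*u)*Real.cosh (t*u))
          - (t + p*Real.sinh (t*u)^2)*(Real.sinh (s*u)*Real.cosh (s*u))) := by
      rw [← hEq]; linarith [hGp]
    by_contra hcon
    push_neg at hcon
    nlinarith
  have hrepr : PMDJ s t p u =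
      ((s + p*Real.sinh (s*u)^2)*(Real.sinh (t*u)*Real.cosh (t*u))
        - (t + p*Real.sinh (t*u)^2)*(Real.sinh (s*u)*Real.cosh (s*u)))
      / (Real.sinh (s*u)*Real.cosh (s*u)*(Real.sinh (t*u)*Real.cosh (t*u))) := by
    have hA : Real.cosh (s*u)*s/Real.sinh (s*u) + (p/s-1)*(Real.sinh (s*u)*s/Real.cosh (s*u))
        = (s + p*Real.sinh (s*u)^2)/(Real.sinh (s*u)*Real.cosh (s*u)) := by
      have e1 := Real.cosh_sq (s*u)
      field_simp
      linear_combination s * e1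
    have hB : Real.cosh (t*u)*t/Real.sinh (t*u) + (p/t-1)*(Real.sinh (t*u)*t/Real.cosh (t*u))
        = (t + p*Real.sinh (t*u)^2)/(Real.sinh (t*u)*Real.cosh (t*u)) := by
      have e2 := Real.cosh_sq (t*u)
      field_simp
      linear_combination t * e2
    unfold PMDJ
    rw [hA, hB, div_sub_div _ _ (by positivity) (by positivity)]
    ring_nf
  rw [hrepr]
  exact div_pos hT (by positivity)

lemma PMsinh_div_self_tendsto : Tendsto (fun z : ℝ => Real.sinh z / z) (𝓝[≠] (0:ℝ)) (𝓝 1) := by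
  have h := Real.hasDerivAt_sinh 0
  rw [hasDerivAt_iff_tendsto_slope] at h
  rw [Real.cosh_zero] at h
  refine h.congr ?_
  intro z
  simp [slope_def_field, Real.sinh_zero]

lemma PMlin_tendsto {s : ℝ} (hs : 0 < s) :
    Tendsto (fun u : ℝ => s*u) (𝓝[>] (0:ℝ)) (𝓝[≠] (0:ℝ)) := by
  rw [tendsto_nhdsWithin_iff]
  constructor
  · have : Tendsto (fun u : ℝ => s*u) (𝓝 0) (𝓝 (s*0)) := (continuous_mul_left s).tendsto 0
    rw [mul_zero] at this
    exact this.mono_left nhdsWithin_le_nhds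
  · filter_upwards [self_mem_nhdsWithin] with u hu
    exact ne_of_gt (mul_pos hs hu)

lemma PMJ_tendsto_zero {s t p : ℝ} (h0s : 0 < s) (h0t : 0 < t) :
    Tendsto (PMJ s t p) (𝓝[>] (0:ℝ)) (𝓝 (Real.log (s/t))) := by
  have T1 : Tendsto (fun u : ℝ => Real.sinh (s*u)/(s*u)) (𝓝[>] (0:ℝ)) (𝓝 1) :=
    PMsinh_div_self_tendsto.comp (PMlin_tendsto h0s)
  have T2 : Tendsto (fun u : ℝ => Real.sinh (t*u)/(t*u)) (𝓝[>] (0:ℝ)) (𝓝 1) :=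
    PMsinh_div_self_tendsto.comp (PMlin_tendsto h0t)
  have Tq : Tendsto (fun u : ℝ => (Real.sinh (s*u)/(s*u))/(Real.sinh (t*u)/(t*u))*(s/t))
      (𝓝[>] (0:ℝ)) (𝓝 (s/t)) := by
    have := (T1.div T2 one_ne_zero).mul_const (s/t)
    simpa using this
  have Tratio : Tendsto (fun u : ℝ => Real.sinh (s*u)/Real.sinh (t*u))
      (𝓝[>] (0:ℝ)) (𝓝 (s/t)) := by
    refine Tq.congr' ?_
    filter_upwards [self_mem_nhdsWithin] with u hu
    have hu0 : (0:ℝ) < u := hu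
    have h1 : Real.sinh (t*u) ≠ 0 := ne_of_gt (Real.sinh_pos_iff.mpr (mul_pos h0t hu0))
    field_simp
  have Tlog : Tendsto (fun u : ℝ => Real.log (Real.sinh (s*u)/Real.sinh (t*u)))
      (𝓝[>] (0:ℝ)) (𝓝 (Real.log (s/t))) :=
    ((Real.continuousAt_log (ne_of_gt (div_pos h0s h0t))).tendsto).comp Tratio
  have Tc : ∀ r : ℝ, Tendsto (fun u : ℝ => Real.log (Real.cosh (r*u))) (𝓝[>] (0:ℝ)) (𝓝 0) := by
    intro r
    have hc : ContinuousAt (fun u : ℝ => Real.log (Real.cosh (r*u))) 0 :=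
      ContinuousAt.log ((Real.continuous_cosh.comp (continuous_mul_left r)).continuousAt)
        (ne_of_gt (Real.cosh_pos _))
    have h2 : Tendsto (fun u : ℝ => Real.log (Real.cosh (r*u))) (𝓝[>] (0:ℝ))
        (𝓝 (Real.log (Real.cosh (r*0)))) :=
      hc.tendsto.mono_left nhdsWithin_le_nhds
    simpa using h2
  have Tsum : Tendsto (fun u : ℝ => Real.log (Real.sinh (s*u)/Real.sinh (t*u))
      + (p/s-1)*Real.log (Real.cosh (s*u)) - (p/t-1)*Real.log (Real.cosh (t*u)))
      (𝓝[>] (0:ℝ)) (𝓝 (Real.log (s/t) + (p/s-1)*0 - (p/t-1)*0)) :=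
    (Tlog.add ((Tc s).const_mul _)).sub ((Tc t).const_mul _)
  rw [show Real.log (s/t) + (p/s-1)*0 - (p/t-1)*0 = Real.log (s/t) by ring] at Tsum
  refine Tsum.congr' ?_
  filter_upwards [self_mem_nhdsWithin] with u hu
  have hu0 : (0:ℝ) < u := hu
  have h1 : Real.sinh (s*u) ≠ 0 := ne_of_gt (Real.sinh_pos_iff.mpr (mul_pos h0s hu0))
  have h2 : Real.sinh (t*u) ≠ 0 := ne_of_gt (Real.sinh_pos_iff.mpr (mul_pos h0t hu0))
  rw [Real.log_div h1 h2]
  unfold PMJ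
  ring

lemma PMlog_sinh {x : ℝ} (hx : 0 < x) :
    Real.log (Real.sinh x) = x + Real.log (1 - Real.exp (-2*x)) - Real.log 2 := by
  have he : Real.exp (-2*x) < 1 := by
    rw [Real.exp_lt_one_iff]; linarith
  have hA : (0:ℝ) < 1 - Real.exp (-2*x) := by linarith
  have hid : Real.sinh x = Real.exp x * (1 - Real.exp (-2*x)) / 2 := by
    rw [Real.sinh_eq]
    have h2 : Real.exp x * Real.exp (-(2*x)) = Real.exp (-x) := by
      rw [← Real.exp_add]; ring_nf
    field_simp
    rw [mul_comm x 2]; linarith [h2]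
  rw [hid, Real.log_div (by positivity) two_ne_zero, Real.log_mul (by positivity) (ne_of_gt hA),
    Real.log_exp]

lemma PMlog_cosh (x : ℝ) :
    Real.log (Real.cosh x) = x + Real.log (1 + Real.exp (-2*x)) - Real.log 2 := by
  have hA : (0:ℝ) < 1 + Real.exp (-2*x) := by positivity
  have hid : Real.cosh x = Real.exp x * (1 + Real.exp (-2*x)) / 2 := by
    rw [Real.cosh_eq]
    have h2 : Real.exp x * Real.exp (-(2*x)) = Real.exp (-x) := by
      rw [← Real.exp_add]; ring_nf
    field_simp
    rw [mul_comm x 2]; linarith [h2]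
  rw [hid, Real.log_div (by positivity) two_ne_zero, Real.log_mul (by positivity) (ne_of_gt hA),
    Real.log_exp]

lemma PMexp_tendsto {r : ℝ} (hr : 0 < r) :
    Tendsto (fun u : ℝ => Real.exp (-2*(r*u))) atTop (𝓝 0) := by
  apply Real.tendsto_exp_atBot.comp
  have : Tendsto (fun u : ℝ => (-2*r)*u) atTop atBot :=
    tendsto_id.const_mul_atTop_of_neg (by linarith)
  refine this.congr (fun u => by ring)

lemma PMJ_tendsto_top {s t p : ℝ} (hs : s ≠ 0) (ht : t ≠ 0) (h0s : 0 < s) (h0t : 0 < t) :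
    Tendsto (PMJ s t p) atTop (𝓝 ((p/t - p/s) * Real.log 2)) := by
  have TL : ∀ r : ℝ, 0 < r → Tendsto (fun u : ℝ => Real.log (1 - Real.exp (-2*(r*u)))) atTop (𝓝 0) := by
    intro r hr
    have h1 : Tendsto (fun u : ℝ => 1 - Real.exp (-2*(r*u))) atTop (𝓝 1) := by
      have := (PMexp_tendsto hr).const_sub 1
      simpa using this
    have := ((Real.continuousAt_log one_ne_zero).tendsto).comp h1
    simpa [Function.comp_def] using this
  have TP : ∀ r : ℝ, 0 < r → Tendsto (fun u : ℝ => Real.log (1 + Real.exp (-2*(r*u)))) atTop (𝓝 0) := by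
    intro r hr
    have h1 : Tendsto (fun u : ℝ => 1 + Real.exp (-2*(r*u))) atTop (𝓝 1) := by
      have := (PMexp_tendsto hr).const_add 1
      simpa using this
    have := ((Real.continuousAt_log one_ne_zero).tendsto).comp h1
    simpa [Function.comp_def] using this
  have Tsum : Tendsto (fun u : ℝ => (p/t - p/s)*Real.log 2
      + (Real.log (1 - Real.exp (-2*(s*u))) + (p/s-1)*Real.log (1 + Real.exp (-2*(s*u)))
        - Real.log (1 - Real.exp (-2*(t*u))) - (p/t-1)*Real.log (1 + Real.exp (-2*(t*u)))))
      atTop (𝓝 ((p/t - p/s)*Real.log 2 + (0 + (p/s-1)*0 - 0 - (p/t-1)*0))) :=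
    tendsto_const_nhds.add ((((TL s h0s).add ((TP s h0s).const_mul _)).sub (TL t h0t)).sub
      ((TP t h0t).const_mul _))
  rw [show (p/t - p/s)*Real.log 2 + (0 + (p/s-1)*0 - 0 - (p/t-1)*0) = (p/t-p/s)*Real.log 2 by ring] at Tsum
  refine Tsum.congr' ?_
  filter_upwards [eventually_gt_atTop 0] with u hu
  unfold PMJ
  rw [PMlog_sinh (mul_pos h0s hu), PMlog_sinh (mul_pos h0t hu), PMlog_cosh, PMlog_cosh]
  field_simp
  ring

section Jbounds
variable {s t p : ℝ} (h0s : 0 < s) (hst : s < t)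
  (hps : p ≤ 2*s) (hpst : p ≤ 2/3*(s+t)) (hexc : t = 2*s → p < 2*s)

include h0s hst hps hpst hexc

lemma PMJ_strictMono : StrictMonoOn (PMJ s t p) (Ioi 0) := by
  have h0t : 0 < t := lt_trans h0s hst
  apply strictMonoOn_of_deriv_pos (convex_Ioi 0)
  · exact fun u hu => ((PMJ_hasDeriv h0s h0t hu).continuousAt).continuousWithinAt
  · rw [interior_Ioi]
    intro u hu
    rw [(PMJ_hasDeriv h0s h0t hu).deriv]
    exact PMDJ_pos h0s hst hps hpst hexc hu

lemma PMJ_lower {u : ℝ} (hu : 0 < u) : Real.log (s/t) < PMJ s t p u := by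
  have h0t : 0 < t := lt_trans h0s hst
  have hmono := PMJ_strictMono h0s hst hps hpst hexc
  have hhalf : Real.log (s/t) ≤ PMJ s t p (u/2) := by
    apply le_of_tendsto (PMJ_tendsto_zero h0s h0t)
    filter_upwards [Ioo_mem_nhdsGT_of_mem (show (0:ℝ) ∈ Ico (0:ℝ) (u/2) from ⟨le_refl _, by linarith⟩)]
      with v hv
    exact le_of_lt (hmono (show v ∈ Ioi (0:ℝ) from hv.1) (show u/2 ∈ Ioi (0:ℝ) by simp; linarith) hv.2)
  have := hmono (show u/2 ∈ Ioi (0:ℝ) by simp; linarith) (show u ∈ Ioi (0:ℝ) from hu) (by linarith)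
  linarith

lemma PMJ_upper {u : ℝ} (hu : 0 < u) : PMJ s t p u < (p/t - p/s) * Real.log 2 := by
  have h0t : 0 < t := lt_trans h0s hst
  have hmono := PMJ_strictMono h0s hst hps hpst hexc
  have hnext : PMJ s t p (u+1) ≤ (p/t - p/s) * Real.log 2 := by
    apply ge_of_tendsto (PMJ_tendsto_top (ne_of_gt h0s) (ne_of_gt h0t) h0s h0t)
    filter_upwards [eventually_ge_atTop (u+1)] with w hw
    exact hmono.monotoneOn (show u+1 ∈ Ioi (0:ℝ) by simp; linarith)
      (show w ∈ Ioi (0:ℝ) by simp; linarith) hw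
  have := hmono (show u ∈ Ioi (0:ℝ) from hu) (show u+1 ∈ Ioi (0:ℝ) by simp; linarith) (by linarith)
  linarith

end Jbounds

/-- `cosh x * log (cosh x) < x * sinh x` for `x > 0` -/
lemma PMcoshlog {x : ℝ} (hx : 0 < x) : Real.cosh x * Real.log (Real.cosh x) < x * Real.sinh x := by
  have key : 0 < x * Real.sinh x - Real.cosh x * Real.log (Real.cosh x) := by
    apply PMpos_of_deriv_pos (f := fun z => z * Real.sinh z - Real.cosh z * Real.log (Real.cosh z))
    · apply ContinuousOn.sub (by fun_prop)
      apply ContinuousOn.mul (by fun_prop)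
      apply ContinuousOn.log (by fun_prop)
      exact fun z _ => ne_of_gt (Real.cosh_pos z)
    · simp
    · intro z hz
      have hz' : (0:ℝ) < z := hz
      have hcz : 0 < Real.cosh z := Real.cosh_pos z
      have d1 : HasDerivAt (fun z : ℝ => z * Real.sinh z) (1 * Real.sinh z + z * Real.cosh z) z :=
        (hasDerivAt_id z).mul (Real.hasDerivAt_sinh z)
      have d2 : HasDerivAt (fun z : ℝ => Real.cosh z * Real.log (Real.cosh z))
          (Real.sinh z * Real.log (Real.cosh z) + Real.cosh z * (Real.sinh z / Real.cosh z)) z :=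
        (Real.hasDerivAt_cosh z).mul ((Real.hasDerivAt_cosh z).log (ne_of_gt hcz))
      erw [(d1.sub d2).deriv]
      have e1 : Real.cosh z * (Real.sinh z / Real.cosh z) = Real.sinh z := by
        field_simp
      rw [e1]
      -- = z cosh z - sinh z * log cosh z > 0
      have hlc : Real.log (Real.cosh z) < z := by
        have h1 : Real.cosh z < Real.exp z := by
          have := Real.cosh_eq z
          have h2 : Real.exp (-z) < Real.exp z := by
            apply Real.exp_lt_exp.mpr; linarith [hz']
          nlinarith [Real.exp_pos z, Real.exp_pos (-z)]
        calc Real.log (Real.cosh z) < Real.log (Real.exp z) := Real.log_lt_log hcz h1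
          _ = z := Real.log_exp z
      have hlc0 : 0 ≤ Real.log (Real.cosh z) := Real.log_nonneg (Real.one_le_cosh z)
      have hsz : 0 < Real.sinh z := Real.sinh_pos_iff.mpr hz
      have hsc : Real.sinh z < Real.cosh z := Real.sinh_lt_cosh z
      nlinarith
    · exact hx
  linarith

/-- monotonicity of `log (cosh z) / z`: for `0 < x < y`, `t`-scaled version -/
lemma PMlogcosh_mono {x y : ℝ} (hx : 0 < x) (hxy : x < y) :
    y * Real.log (Real.cosh x) < x * Real.log (Real.cosh y) := by
  have hy : 0 < y := lt_trans hx hxy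
  have hmono : StrictMonoOn (fun z => Real.log (Real.cosh z) / z) (Ioi 0) := by
    apply strictMonoOn_of_deriv_pos (convex_Ioi 0)
    · apply ContinuousOn.div _ continuousOn_id (fun z hz => ne_of_gt hz)
      apply ContinuousOn.log (by fun_prop)
      exact fun z _ => ne_of_gt (Real.cosh_pos z)
    · rw [interior_Ioi]
      intro z hz
      have hcz : 0 < Real.cosh z := Real.cosh_pos z
      have d1 : HasDerivAt (fun z : ℝ => Real.log (Real.cosh z) / z)
          ((Real.sinh z / Real.cosh z * z - Real.log (Real.cosh z) * 1) / z^2) z :=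
        ((Real.hasDerivAt_cosh z).log (ne_of_gt hcz)).div (hasDerivAt_id z) (ne_of_gt hz)
      rw [d1.deriv]
      apply div_pos _ (pow_pos hz 2)
      have := PMcoshlog hz
      rw [div_mul_eq_mul_div, mul_one, sub_pos, lt_div_iff₀ hcz]
      nlinarith
  have := hmono (show x ∈ Ioi (0:ℝ) from hx) (show y ∈ Ioi (0:ℝ) from hy) hxy
  rw [div_lt_div_iff₀ hx hy] at this
  linarith

lemma PMcore {s t p : ℝ} (hp : p ≠ 0) (h0s : 0 < s) (hst : s < t)
    (hps : p ≤ 2*s) (hpst : p ≤ 2/3*(s+t)) (hexc : t = 2*s → p < 2*s)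
    {u : ℝ} (hu : 0 < u) :
    s/t < (Real.cosh (s*u) ^ (p/s) - 1)/(Real.cosh (t*u) ^ (p/t) - 1) ∧
    (Real.cosh (s*u) ^ (p/s) - 1)/(Real.cosh (t*u) ^ (p/t) - 1) < min 1 ((2:ℝ)^(p/t - p/s)) := by
  have h0t : 0 < t := lt_trans h0s hst
  have hcs : ∀ v : ℝ, (0:ℝ) < Real.cosh (s*v) := fun v => Real.cosh_pos _
  have hct : ∀ v : ℝ, (0:ℝ) < Real.cosh (t*v) := fun v => Real.cosh_pos _
  -- A-quantities
  set As : ℝ → ℝ := fun v => Real.sinh (s*v) * Real.cosh (s*v) ^ (p/s-1) with hAs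
  set At : ℝ → ℝ := fun v => Real.sinh (t*v) * Real.cosh (t*v) ^ (p/t-1) with hAt
  have hAspos : ∀ v : ℝ, 0 < v → 0 < As v := fun v hv =>
    mul_pos (Real.sinh_pos_iff.mpr (mul_pos h0s hv)) (Real.rpow_pos_of_pos (hcs v) _)
  have hAtpos : ∀ v : ℝ, 0 < v → 0 < At v := fun v hv =>
    mul_pos (Real.sinh_pos_iff.mpr (mul_pos h0t hv)) (Real.rpow_pos_of_pos (hct v) _)
  have hJrepr : ∀ v : ℝ, 0 < v → PMJ s t p v = Real.log (As v) - Real.log (At v) := by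
    intro v hv
    have h1 : Real.sinh (s*v) ≠ 0 := ne_of_gt (Real.sinh_pos_iff.mpr (mul_pos h0s hv))
    have h2 : Real.sinh (t*v) ≠ 0 := ne_of_gt (Real.sinh_pos_iff.mpr (mul_pos h0t hv))
    simp only [hAs, hAt]
    rw [Real.log_mul h1 (ne_of_gt (Real.rpow_pos_of_pos (hcs v) _)),
        Real.log_mul h2 (ne_of_gt (Real.rpow_pos_of_pos (hct v) _)),
        Real.log_rpow (hcs v), Real.log_rpow (hct v)]
    unfold PMJ; ring
  -- key pointwise inequalities
  have key1 : ∀ v : ℝ, 0 < v → s * At v < t * As v := by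
    intro v hv
    have hJ := PMJ_lower h0s hst hps hpst hexc hv
    rw [hJrepr v hv] at hJ
    have h3 : Real.log (s/t * At v) < Real.log (As v) := by
      rw [Real.log_mul (ne_of_gt (div_pos h0s h0t)) (ne_of_gt (hAtpos v hv))]
      linarith
    have h4 : s/t * At v < As v := by
      have := Real.exp_lt_exp.mpr h3
      rwa [Real.exp_log (mul_pos (div_pos h0s h0t) (hAtpos v hv)),
        Real.exp_log (hAspos v hv)] at this
    have := mul_lt_mul_of_pos_left h4 h0t
    calc s * At v = t * (s/t * At v) := by field_simp
      _ < t * As v := this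
  have key2 : ∀ v : ℝ, 0 < v → As v < (2:ℝ)^(p/t-p/s) * At v := by
    intro v hv
    have hJ := PMJ_upper h0s hst hps hpst hexc hv
    rw [hJrepr v hv] at hJ
    have h3 : Real.log (As v) < Real.log ((2:ℝ)^(p/t-p/s) * At v) := by
      rw [Real.log_mul (ne_of_gt (Real.rpow_pos_of_pos two_pos _)) (ne_of_gt (hAtpos v hv)),
        Real.log_rpow two_pos]
      linarith
    have := Real.exp_lt_exp.mpr h3
    rwa [Real.exp_log (hAspos v hv),
      Real.exp_log (mul_pos (Real.rpow_pos_of_pos two_pos _) (hAtpos v hv))] at this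
  -- derivatives of the N and D functions
  have hNd : ∀ v : ℝ, HasDerivAt (fun w : ℝ => Real.cosh (s*w) ^ (p/s) - 1)
      ((Real.sinh (s*v)*s) * (p/s) * Real.cosh (s*v) ^ (p/s-1)) v := by
    intro v
    exact (((PMhlin s v).cosh).rpow_const (Or.inl (ne_of_gt (hcs v)))).sub_const 1
  have hDd : ∀ v : ℝ, HasDerivAt (fun w : ℝ => Real.cosh (t*w) ^ (p/t) - 1)
      ((Real.sinh (t*v)*t) * (p/t) * Real.cosh (t*v) ^ (p/t-1)) v := by
    intro v
    exact (((PMhlin t v).cosh).rpow_const (Or.inl (ne_of_gt (hct v)))).sub_const 1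
  set N : ℝ → ℝ := fun w => Real.cosh (s*w) ^ (p/s) - 1 with hN
  set D : ℝ → ℝ := fun w => Real.cosh (t*w) ^ (p/t) - 1 with hD
  show s/t < N u / D u ∧ N u / D u < min 1 ((2:ℝ)^(p/t - p/s))
  rcases lt_or_gt_of_ne hp with hp0 | hp0
  · -- p < 0
    have hDneg : D u < 0 := by
      have : Real.cosh (t*u) ^ (p/t) < 1 :=
        Real.rpow_lt_one_of_one_lt_of_neg (Real.one_lt_cosh.mpr (ne_of_gt (mul_pos h0t hu)))
          (div_neg_of_neg_of_pos hp0 h0t)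
      simp only [hD]; linarith
    have hW : 0 < s * D u - t * N u := by
      apply PMpos_of_deriv_pos (f := fun w => s * D w - t * N w)
      · intro w _
        exact ((((hDd w).const_mul s).sub ((hNd w).const_mul t)).continuousAt).continuousWithinAt
      · simp [hN, hD]
      · intro w hw
        erw [(((hDd w).const_mul s).sub ((hNd w).const_mul t)).deriv]
        have e : s * ((Real.sinh (t*w)*t) * (p/t) * Real.cosh (t*w) ^ (p/t-1))
            - t * ((Real.sinh (s*w)*s) * (p/s) * Real.cosh (s*w) ^ (p/s-1))
            = (-p) * (t * As w - s * At w) := by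
          simp only [hAs, hAt]; field_simp; ring
        rw [e]
        exact mul_pos (by linarith) (by linarith [key1 w hw])
      · exact hu
    have hDne : D u ≠ 0 := ne_of_lt hDneg
    constructor
    · -- lower bound
      have hid : s/t - N u/D u = (s * D u - t * N u)/(t * D u) :=
        div_sub_div s (N u) (ne_of_gt h0t) hDne
      have hfrac : (s * D u - t * N u)/(t * D u) < 0 :=
        div_neg_of_pos_of_neg hW (by nlinarith)
      linarith [hid ▸ hfrac]
    · -- upper bound: min is 1
      have hBgt : (1:ℝ) < (2:ℝ)^(p/t-p/s) := by
        apply (Real.one_lt_rpow_iff_of_pos two_pos).mpr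
        refine Or.inl ⟨one_lt_two, ?_⟩
        have e : p/t - p/s = (-p)*(t-s)/(s*t) := by field_simp; ring
        rw [e]
        exact div_pos (mul_pos (by linarith) (by linarith)) (by positivity)
      rw [min_eq_left (le_of_lt hBgt)]
      -- N u > D u hence N/D < 1 (both negative)
      have hND : D u < N u := by
        have hcross := PMlogcosh_mono (mul_pos h0s hu) (by nlinarith : s*u < t*u)
        have e1 : Real.log (Real.cosh (s*u)) * (p/s) = p*(t*u*Real.log (Real.cosh (s*u)))/(s*t*u) := by
          field_simp
        have e2 : Real.log (Real.cosh (t*u)) * (p/t) = p*(s*u*Real.log (Real.cosh (t*u)))/(s*t*u) := by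
          field_simp
        have hnum : p * (s*u*Real.log (Real.cosh (t*u))) < p * (t*u*Real.log (Real.cosh (s*u))) := by
          have h5 := mul_lt_mul_of_neg_left hcross hp0
          nlinarith [h5]
        have hLs : Real.log (Real.cosh (t*u)) * (p/t) < Real.log (Real.cosh (s*u)) * (p/s) := by
          rw [e1, e2]
          have hc : (0:ℝ) < s*t*u := by positivity
          have h6 := mul_lt_mul_of_pos_right hnum (inv_pos.mpr hc)
          rw [div_eq_mul_inv, div_eq_mul_inv]
          exact h6
        have h7 : Real.cosh (t*u) ^ (p/t) < Real.cosh (s*u) ^ (p/s) := by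
          rw [Real.rpow_def_of_pos (hct u), Real.rpow_def_of_pos (hcs u)]
          exact Real.exp_lt_exp.mpr hLs
        simp only [hN, hD]
        linarith
      have hid : N u / D u - 1 = (N u - D u)/(D u) := by
        rw [eq_div_iff hDne, sub_mul, div_mul_cancel₀ _ hDne, one_mul]
      have hfr : (N u - D u)/(D u) < 0 := div_neg_of_pos_of_neg (by linarith) hDneg
      linarith [hid ▸ hfr]
  · -- p > 0
    have hDpos : 0 < D u := by
      have : 1 < Real.cosh (t*u) ^ (p/t) := by
        apply (Real.one_lt_rpow_iff_of_pos (hct u)).mpr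
        exact Or.inl ⟨Real.one_lt_cosh.mpr (ne_of_gt (mul_pos h0t hu)), div_pos hp0 h0t⟩
      simp only [hD]; linarith
    have hW : 0 < t * N u - s * D u := by
      apply PMpos_of_deriv_pos (f := fun w => t * N w - s * D w)
      · intro w _
        exact ((((hNd w).const_mul t).sub ((hDd w).const_mul s)).continuousAt).continuousWithinAt
      · simp [hN, hD]
      · intro w hw
        erw [(((hNd w).const_mul t).sub ((hDd w).const_mul s)).deriv]
        have e : t * ((Real.sinh (s*w)*s) * (p/s) * Real.cosh (s*w) ^ (p/s-1))
            - s * ((Real.sinh (t*w)*t) * (p/t) * Real.cosh (t*w) ^ (p/t-1))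
            = p * (t * As w - s * At w) := by
          simp only [hAs, hAt]; field_simp
        rw [e]
        exact mul_pos hp0 (by linarith [key1 w hw])
      · exact hu
    have hV : 0 < (2:ℝ)^(p/t-p/s) * D u - N u := by
      apply PMpos_of_deriv_pos (f := fun w => (2:ℝ)^(p/t-p/s) * D w - N w)
      · intro w _
        exact ((((hDd w).const_mul _).sub (hNd w)).continuousAt).continuousWithinAt
      · simp [hN, hD]
      · intro w hw
        erw [(((hDd w).const_mul _).sub (hNd w)).deriv]
        have e : (2:ℝ)^(p/t-p/s) * ((Real.sinh (t*w)*t) * (p/t) * Real.cosh (t*w) ^ (p/t-1))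
            - (Real.sinh (s*w)*s) * (p/s) * Real.cosh (s*w) ^ (p/s-1)
            = p * ((2:ℝ)^(p/t-p/s) * At w - As w) := by
          simp only [hAs, hAt]; field_simp
        rw [e]
        exact mul_pos hp0 (by linarith [key2 w hw])
      · exact hu
    constructor
    · rw [div_lt_div_iff₀ h0t hDpos]
      nlinarith [hW]
    · have hBlt : (2:ℝ)^(p/t-p/s) < 1 := by
        apply Real.rpow_lt_one_of_one_lt_of_neg one_lt_two
        have e : p/t - p/s = -(p*(t-s)/(s*t)) := by field_simp; ring
        have : 0 < p*(t-s)/(s*t) := div_pos (mul_pos hp0 (by linarith)) (mul_pos h0s h0t)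
        linarith [e]
      rw [min_eq_right (le_of_lt hBlt), div_lt_iff₀ hDpos]
      nlinarith [hV]

/-- The power mean of order `r` of `a` and `b`. -/
noncomputable def powerMean (r a b : ℝ) : ℝ := ((a ^ r + b ^ r) / 2) ^ (1 / r)

/-- The geometric mean of `a` and `b`. -/
noncomputable def geomMean (a b : ℝ) : ℝ := Real.sqrt (a * b)

lemma PMreduce {a b r : ℝ} (ha : 0 < a) (hb : 0 < b) (hr : r ≠ 0) :
    powerMean r a b = Real.sqrt (a*b) * Real.cosh (r * ((Real.log a - Real.log b)/2)) ^ (1/r) := by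
  set G := Real.sqrt (a*b) with hG
  set u := (Real.log a - Real.log b)/2 with hu
  have hab : (0:ℝ) < a*b := mul_pos ha hb
  have hGpos : 0 < G := Real.sqrt_pos.mpr hab
  have hlogG : Real.log G = (Real.log a + Real.log b)/2 := by
    rw [hG, Real.log_sqrt (le_of_lt hab), Real.log_mul (ne_of_gt ha) (ne_of_gt hb)]
  have hsum : a ^ r + b ^ r = 2 * (G ^ r * Real.cosh (r*u)) := by
    rw [Real.rpow_def_of_pos ha, Real.rpow_def_of_pos hb, Real.rpow_def_of_pos hGpos,
      Real.cosh_eq, hlogG, hu]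
    rw [show Real.log a * r = (Real.log a + Real.log b)/2 * r + r*((Real.log a - Real.log b)/2) by ring,
      show Real.log b * r = (Real.log a + Real.log b)/2 * r + -(r*((Real.log a - Real.log b)/2)) by ring,
      Real.exp_add, Real.exp_add]
    ring
  unfold powerMean
  rw [hsum, show 2 * (G ^ r * Real.cosh (r*u)) / 2 = G ^ r * Real.cosh (r*u) by ring]
  rw [Real.mul_rpow (le_of_lt (Real.rpow_pos_of_pos hGpos r)) (le_of_lt (Real.cosh_pos _))]
  rw [← Real.rpow_mul (le_of_lt hGpos), mul_one_div_cancel hr, Real.rpow_one]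

lemma PMreduce_pow {a b r p : ℝ} (ha : 0 < a) (hb : 0 < b) (hr : r ≠ 0) :
    powerMean r a b ^ p = Real.sqrt (a*b) ^ p
      * Real.cosh (r * ((Real.log a - Real.log b)/2)) ^ (p/r) := by
  rw [PMreduce ha hb hr]
  have hGpos : 0 < Real.sqrt (a*b) := Real.sqrt_pos.mpr (mul_pos ha hb)
  rw [Real.mul_rpow (le_of_lt hGpos)
    (le_of_lt (Real.rpow_pos_of_pos (Real.cosh_pos _) _))]
  rw [← Real.rpow_mul (le_of_lt (Real.cosh_pos _)), show 1/r*p = p/r by ring]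

/-- Theorem 3.1(a), second part. -/
theorem ratio_bounds_pos_small_p (s t p : ℝ) (hs : s ≠ 0) (ht : t ≠ 0) (hp : p ≠ 0)
    (h0s : 0 < s) (hst : s < t)
    (hple : p ≤ min (2 * s) (2 / 3 * (s + t)))
    (hexc : t = 2 * s → p < 2 * s) :
    ∀ a b : ℝ, 0 < a → 0 < b → a ≠ b →
      s / t <
        (powerMean s a b ^ p - geomMean a b ^ p) /
          (powerMean t a b ^ p - geomMean a b ^ p) ∧
      (powerMean s a b ^ p - geomMean a b ^ p) /
          (powerMean t a b ^ p - geomMean a b ^ p) <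
        min 1 ((2 : ℝ) ^ (p / t - p / s)) := by
  have h0t : 0 < t := lt_trans h0s hst
  have hps : p ≤ 2*s := le_trans hple (min_le_left _ _)
  have hpst : p ≤ 2/3*(s+t) := le_trans hple (min_le_right _ _)
  have main : ∀ a b : ℝ, 0 < a → 0 < b → b < a →
      s / t <
        (powerMean s a b ^ p - geomMean a b ^ p) /
          (powerMean t a b ^ p - geomMean a b ^ p) ∧
      (powerMean s a b ^ p - geomMean a b ^ p) /
          (powerMean t a b ^ p - geomMean a b ^ p) <
        min 1 ((2 : ℝ) ^ (p / t - p / s)) := by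
    intro a b ha hb hba
    set u := (Real.log a - Real.log b)/2 with hu
    have hupos : 0 < u := by
      have := Real.log_lt_log hb hba
      rw [hu]; linarith
    have hGpos : 0 < Real.sqrt (a*b) := Real.sqrt_pos.mpr (mul_pos ha hb)
    have hGp : 0 < Real.sqrt (a*b) ^ p := Real.rpow_pos_of_pos hGpos p
    have hnum : powerMean s a b ^ p - geomMean a b ^ p
        = Real.sqrt (a*b) ^ p * (Real.cosh (s*u) ^ (p/s) - 1) := by
      rw [PMreduce_pow ha hb hs]
      unfold geomMean
      ring
    have hden : powerMean t a b ^ p - geomMean a b ^ p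
        = Real.sqrt (a*b) ^ p * (Real.cosh (t*u) ^ (p/t) - 1) := by
      rw [PMreduce_pow ha hb ht]
      unfold geomMean
      ring
    rw [hnum, hden, mul_div_mul_left _ _ (ne_of_gt hGp)]
    exact PMcore hp h0s hst hps hpst hexc hupos
  intro a b ha hb hab
  rcases hab.lt_or_gt with h | h
  · have hcomm1 : ∀ r : ℝ, powerMean r a b = powerMean r b a := by
      intro r; unfold powerMean; rw [add_comm]
    have hcomm2 : geomMean a b = geomMean b a := by
      unfold geomMean; rw [mul_comm]
    rw [hcomm1 s, hcomm1 t, hcomm2]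
    exact main b a hb ha h
  · exact main a b ha hb h
end

section
/- Let s, t, p be nonzero real numbers with s < t < 0, and suppose p ≤ min(2t, (2/3)(s+t)), with the strict inequality p < 2t required in case s = 2t. Then for all positive real numbers a ≠ b, s/t < (M_s(a,b)^p − G(a,b)^p)/(M_t(a,b)^p − G(a,b)^p) < 2^{p/t − p/s}. -/
section RatioBoundsAux

open Real Set Filter Topology

noncomputable def T (z : ℝ) : ℝ := sinh z / cosh z

lemma hasDerivAt_T (z : ℝ) : HasDerivAt T (1 / cosh z ^ 2) z := by
  have h := (Real.hasDerivAt_sinh z).div (Real.hasDerivAt_cosh z) (ne_of_gt (cosh_pos z))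
  convert h using 1 <;> try rfl
  have := Real.cosh_sq_sub_sinh_sq z
  field_simp
  nlinarith [this]

lemma strictMonoOn_Icc_of_hasDerivAt {f f' : ℝ → ℝ} {a b : ℝ}
    (hd : ∀ x ∈ Icc a b, HasDerivAt f (f' x) x)
    (hpos : ∀ x ∈ Ioo a b, 0 < f' x) : StrictMonoOn f (Icc a b) := by
  refine strictMonoOn_of_deriv_pos (convex_Icc a b)
    (fun y hy => (hd y hy).continuousAt.continuousWithinAt) ?_
  intro y hy
  rw [interior_Icc] at hy
  rw [(hd y (Ioo_subset_Icc_self hy)).deriv]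
  exact hpos y hy

lemma strictAntiOn_Icc_of_hasDerivAt {f f' : ℝ → ℝ} {a b : ℝ}
    (hd : ∀ x ∈ Icc a b, HasDerivAt f (f' x) x)
    (hneg : ∀ x ∈ Ioo a b, f' x < 0) : StrictAntiOn f (Icc a b) := by
  refine strictAntiOn_of_deriv_neg (convex_Icc a b)
    (fun y hy => (hd y hy).continuousAt.continuousWithinAt) ?_
  intro y hy
  rw [interior_Icc] at hy
  rw [(hd y (Ioo_subset_Icc_self hy)).deriv]
  exact hneg y hy

lemma pos_of_deriv_pos {f f' : ℝ → ℝ} (hd : ∀ x, HasDerivAt f (f' x) x)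
    (h0 : f 0 = 0) (hpos : ∀ x, 0 < x → 0 < f' x) : ∀ x, 0 < x → 0 < f x := by
  intro x hx
  have mono : StrictMonoOn f (Ici 0) := by
    refine strictMonoOn_of_deriv_pos (convex_Ici 0)
      (fun y _ => (hd y).continuousAt.continuousWithinAt) ?_
    intro y hy
    rw [interior_Ici, mem_Ioi] at hy
    rw [(hd y).deriv]
    exact hpos y hy
  have := mono self_mem_Ici (mem_Ici.2 hx.le) hx
  simpa [h0] using this

/-- Key inequality: `3z < 2 sinh z + tanh z` for `z > 0`. -/
lemma key_ineq {z : ℝ} (hz : 0 < z) : 3 * z < 2 * sinh z + T z := by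
  have h := pos_of_deriv_pos (f := fun z => 2 * sinh z + T z - 3 * z)
    (f' := fun z => 2 * cosh z + 1 / cosh z ^ 2 - 3) ?_ ?_ ?_ z hz
  · change 0 < 2 * sinh z + T z - 3 * z at h
    linarith
  · intro x
    have h := (((Real.hasDerivAt_sinh x).const_mul 2).add (hasDerivAt_T x)).sub
      ((hasDerivAt_id x).const_mul 3)
    convert h using 1 <;> first | rfl | simp
  · simp [T]
  · intro x hx
    have hc : 1 < cosh x := Real.one_lt_cosh.2 (ne_of_gt hx)
    have hcp : (0:ℝ) < cosh x := cosh_pos x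
    have h9 : 2 * cosh x + 1 / cosh x ^ 2 - 3
        = (cosh x - 1) ^ 2 * (2 * cosh x + 1) / cosh x ^ 2 := by
      field_simp; ring
    have h10 : 0 < (cosh x - 1) ^ 2 * (2 * cosh x + 1) / cosh x ^ 2 :=
      div_pos (mul_pos (pow_pos (by linarith) 2) (by linarith)) (by positivity)
    linarith

/-- `m u = (u cosh u - sinh u)/(cosh u - 1)` is strictly increasing on `(0, ∞)`. -/
noncomputable def m (u : ℝ) : ℝ := (u * cosh u - sinh u) / (cosh u - 1)

lemma hasDerivAt_m {u : ℝ} (hu : 0 < u) : HasDerivAt m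
    (sinh u * (sinh u - u) / (cosh u - 1) ^ 2) u := by
  have hc : 1 < cosh u := Real.one_lt_cosh.2 (ne_of_gt hu)
  have h := (((hasDerivAt_id u).mul (Real.hasDerivAt_cosh u)).sub
      (Real.hasDerivAt_sinh u)).div
    ((Real.hasDerivAt_cosh u).sub_const 1) (by linarith)
  convert h using 1 <;> try rfl
  have h2 := Real.cosh_sq_sub_sinh_sq u
  simp only [id, Pi.sub_apply, Pi.mul_apply]
  field_simp
  ring

lemma m_strictMonoOn : StrictMonoOn m (Ioi 0) := by
  refine strictMonoOn_of_deriv_pos (convex_Ioi 0) ?_ ?_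
  · intro y hy
    exact (hasDerivAt_m hy).continuousAt.continuousWithinAt
  · intro y hy
    rw [interior_Ioi, mem_Ioi] at hy
    rw [(hasDerivAt_m hy).deriv]
    have h1 : 0 < sinh y := Real.sinh_pos_iff.2 hy -- check name
    have h2 : y < sinh y := Real.self_lt_sinh_iff.2 hy
    have hc : 1 < cosh y := Real.one_lt_cosh.2 (ne_of_gt hy)
    exact div_pos (mul_pos h1 (by linarith)) (pow_pos (by linarith) 2)

lemma key_identity {Y : ℝ} (hY : 0 < Y) :
    1 / sinh (2*Y) - 2 / sinh (2*(2*Y)) = T (2*Y) - T Y := by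
  have hs : 0 < sinh Y := Real.sinh_pos_iff.2 hY
  have hc : 0 < cosh Y := cosh_pos Y
  have hs2 : 0 < sinh (2*Y) := Real.sinh_pos_iff.2 (by linarith)
  have hc2 : 0 < cosh (2*Y) := cosh_pos (2*Y)
  have h2 : cosh Y ^ 2 - sinh Y ^ 2 = 1 := Real.cosh_sq_sub_sinh_sq Y
  have e1 : sinh (2*(2*Y)) = 2 * sinh (2*Y) * cosh (2*Y) := Real.sinh_two_mul _
  have e2 : sinh (2*Y) = 2 * sinh Y * cosh Y := Real.sinh_two_mul _
  have e3 : cosh (2*Y) = cosh Y ^ 2 + sinh Y ^ 2 := Real.cosh_two_mul _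
  unfold T
  rw [e1, e2, e3] at *
  field_simp
  linear_combination ((4*sinh Y*(1-2*sinh Y^2)*cosh Y^2*(cosh Y^2+sinh Y^2)) + (1 + -2*(sinh Y)^2 + -4*(cosh Y)^2*(sinh Y)^3 + -4*(cosh Y)^4*(sinh Y)^1 + 8*(cosh Y)^4*(sinh Y)^3 + 8*(cosh Y)^2*(sinh Y)^5)) * h2

lemma rho_hasDerivAt {Y A : ℝ} (hY : 0 < Y) (hA : 0 < A) :
    HasDerivAt (fun B => T B + B / (Y * sinh (2*B)))
      ((2*Y - m (2*A)) / (2*Y*cosh A ^ 2)) A := by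
  have hs2 : 0 < sinh (2*A) := Real.sinh_pos_iff.2 (by linarith)
  have hsA : 0 < sinh A := Real.sinh_pos_iff.2 hA
  have hcA : 0 < cosh A := cosh_pos A
  have hT : HasDerivAt T (1 / cosh A ^ 2) A := by
    have h := (Real.hasDerivAt_sinh A).div (Real.hasDerivAt_cosh A) (ne_of_gt hcA)
    convert h using 1 <;> try rfl
    have := Real.cosh_sq_sub_sinh_sq A
    field_simp
    nlinarith [this]
  have h0 : HasDerivAt (fun B : ℝ => 2*B) 2 A := by
    simpa using (hasDerivAt_id A).const_mul 2
  have hinner : HasDerivAt (fun B : ℝ => sinh (2*B)) (cosh (2*A) * 2) A :=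
    (Real.hasDerivAt_sinh (2*A)).comp A h0
  have hden : HasDerivAt (fun B : ℝ => Y * sinh (2*B)) (Y * (cosh (2*A) * 2)) A :=
    hinner.const_mul Y
  have hfrac : HasDerivAt (fun B : ℝ => B / (Y * sinh (2*B)))
      ((1 * (Y * sinh (2*A)) - A * (Y * (cosh (2*A) * 2))) / (Y * sinh (2*A))^2) A :=
    (hasDerivAt_id A).div hden (by positivity)
  have h := hT.add hfrac
  convert h using 1 <;> try rfl
  -- identity: rewrite everything
  have e2 : sinh (2*A) = 2 * sinh A * cosh A := Real.sinh_two_mul A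
  have e3 : cosh (2*A) = cosh A ^ 2 + sinh A ^ 2 := Real.cosh_two_mul A
  have hid : cosh A ^ 2 - sinh A ^ 2 = 1 := Real.cosh_sq_sub_sinh_sq A
  have hden1 : cosh (2*A) - 1 ≠ 0 := by rw [e3]; nlinarith [hid, hsA]
  unfold m
  rw [e2, e3] at *
  field_simp
  linear_combination ((-4*Y^2*cosh A^4*(-(A*cosh A^2) + sinh A*cosh A - A*sinh A^2)) + (4*(sinh A)^1*(cosh A)^5*Y^2 + -1*(sinh A)^1*(cosh A)^1 + -4*A^1*(cosh A)^6*Y^2 + 1*A^1*(cosh A)^2 + -4*A^1*(sinh A)^2*(cosh A)^4*Y^2 + 1*A^1*(sinh A)^2)) * hid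

/-- Case 1 < lam < 2 : `ρ(λY) > ρ(Y)`. -/
lemma rho_gt {Y lam : ℝ} (hY : 0 < Y) (h1 : 1 < lam) (h2 : lam < 2) :
    T Y + 1 / sinh (2*Y) < T (lam*Y) + lam / sinh (2*(lam*Y)) := by
  set rho : ℝ → ℝ := fun B => T B + B / (Y * sinh (2*B)) with hrho
  have hlY : 0 < lam * Y := by positivity
  have hsY : 0 < sinh (2*Y) := Real.sinh_pos_iff.2 (by linarith)
  have hslY : 0 < sinh (2*(lam*Y)) := Real.sinh_pos_iff.2 (by positivity)
  have hs2Y : 0 < sinh (2*(2*Y)) := Real.sinh_pos_iff.2 (by linarith)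
  have hvalY : rho Y = T Y + 1 / sinh (2*Y) := by
    simp only [hrho]
    congr 1
    field_simp
  have hvallY : rho (lam*Y) = T (lam*Y) + lam / sinh (2*(lam*Y)) := by
    simp only [hrho]
    congr 1
    field_simp
  have hval2Y : rho (2*Y) = rho Y := by
    have hki := key_identity hY
    simp only [hrho]
    have e1 : (2*Y) / (Y * sinh (2*(2*Y))) = 2 / sinh (2*(2*Y)) := by
      field_simp
    have e2 : Y / (Y * sinh (2*Y)) = 1 / sinh (2*Y) := by
      field_simp
    rw [e1, e2]
    linarith
  have main : rho Y < rho (lam*Y) := by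
    rcases le_or_gt (m (2*(lam*Y))) (2*Y) with hle | hlt
    · have mono : StrictMonoOn rho (Icc Y (lam*Y)) := by
        apply strictMonoOn_Icc_of_hasDerivAt
          (f' := fun A => (2*Y - m (2*A)) / (2*Y*cosh A ^ 2))
        · intro x hx
          exact rho_hasDerivAt hY (lt_of_lt_of_le hY hx.1)
        · intro x hx
          have hx0 : 0 < x := lt_trans hY hx.1
          have hmx : m (2*x) < m (2*(lam*Y)) :=
            m_strictMonoOn (by simp; positivity) (by simp; positivity) (by linarith [hx.2])
          have : m (2*x) < 2*Y := lt_of_lt_of_le hmx hle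
          apply div_pos (by linarith) (by positivity)
      exact mono (left_mem_Icc.2 (by nlinarith)) (right_mem_Icc.2 (by nlinarith))
        (by nlinarith)
    · have anti : StrictAntiOn rho (Icc (lam*Y) (2*Y)) := by
        apply strictAntiOn_Icc_of_hasDerivAt
          (f' := fun A => (2*Y - m (2*A)) / (2*Y*cosh A ^ 2))
        · intro x hx
          exact rho_hasDerivAt hY (lt_of_lt_of_le hlY hx.1)
        · intro x hx
          have hx0 : 0 < x := lt_trans hlY hx.1
          have hmx : m (2*(lam*Y)) < m (2*x) :=
            m_strictMonoOn (by simp; positivity) (by simp; positivity) (by linarith [hx.1])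
          have : 2*Y < m (2*x) := lt_trans hlt hmx
          apply div_neg_of_neg_of_pos (by linarith) (by positivity)
      have := anti (left_mem_Icc.2 (by nlinarith)) (right_mem_Icc.2 (by nlinarith))
        (by nlinarith)
      rw [hval2Y] at this
      exact this
  rw [hvalY, hvallY] at main
  exact main

noncomputable def gp (Y μ : ℝ) : ℝ :=
  (2/3)*(T (μ*Y) - T Y) + ((2/3)*(μ+1)*Y - m (2*(μ*Y))) / cosh (μ*Y)^2

lemma g_deriv {Y : ℝ} (hY : 0 < Y) {μ : ℝ} (hμ : 0 < μ) :
    HasDerivAt (fun ν => (2/3)*(ν+1)*(T (ν*Y) - T Y) + 2*ν/sinh (2*(ν*Y)) - 2/sinh (2*Y))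
      (gp Y μ) μ := by
  have hz : 0 < μ*Y := by positivity
  have hsz : 0 < sinh (μ*Y) := sinh_pos_iff.2 hz
  have hcz : 0 < cosh (μ*Y) := cosh_pos _
  have hS : 0 < sinh (2*(μ*Y)) := sinh_pos_iff.2 (by linarith)
  have hmulY : HasDerivAt (fun ν : ℝ => ν*Y) Y μ := by
    simpa using (hasDerivAt_id μ).mul_const Y
  have hTz : HasDerivAt (fun ν => T (ν*Y)) (1/cosh (μ*Y)^2 * Y) μ := by
    convert (hasDerivAt_T (μ*Y)).comp μ hmulY using 1 <;> try rfl
  have h1 : HasDerivAt (fun ν => (2/3)*(ν+1)*(T (ν*Y) - T Y))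
      ((2/3)*((T (μ*Y) - T Y) + (μ+1)*(1/cosh (μ*Y)^2 * Y))) μ := by
    have ha : HasDerivAt (fun ν : ℝ => (ν+1)*(T (ν*Y) - T Y))
        (1*(T (μ*Y) - T Y) + (μ+1)*(1/cosh (μ*Y)^2 * Y)) μ :=
      ((hasDerivAt_id μ).add_const 1).mul (hTz.sub_const (T Y))
    have hb := ha.const_mul (2/3 : ℝ)
    convert hb using 1 <;> try rfl
    · ext ν; ring
    · ring
  have hiSn : HasDerivAt (fun ν : ℝ => 2*(ν*Y)) (2*Y) μ := hmulY.const_mul 2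
  have hSn : HasDerivAt (fun ν => sinh (2*(ν*Y))) (cosh (2*(μ*Y)) * (2*Y)) μ := by
    convert (Real.hasDerivAt_sinh (2*(μ*Y))).comp μ hiSn using 1 <;> try rfl
  have h2 : HasDerivAt (fun ν => 2*ν/sinh (2*(ν*Y)))
      ((2*sinh (2*(μ*Y)) - 2*μ*(cosh (2*(μ*Y))*(2*Y)))/(sinh (2*(μ*Y)))^2) μ := by
    have := (((hasDerivAt_id μ).const_mul 2)).div hSn (ne_of_gt hS)
    convert this using 1 <;> try rfl
    simp only [id_eq]
    ring
  have h := (h1.add h2).sub_const (2/sinh (2*Y))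
  convert h using 1 <;> try rfl
  unfold gp m
  have e2 : sinh (2*(μ*Y)) = 2 * sinh (μ*Y) * cosh (μ*Y) := Real.sinh_two_mul _
  have e3 : cosh (2*(μ*Y)) = cosh (μ*Y)^2 + sinh (μ*Y)^2 := Real.cosh_two_mul _
  have hid : cosh (μ*Y)^2 - sinh (μ*Y)^2 = 1 := Real.cosh_sq_sub_sinh_sq _
  rw [e2, e3]
  have hden1 : cosh (μ*Y)^2 + sinh (μ*Y)^2 - 1 ≠ 0 := by nlinarith
  field_simp
  linear_combination ((108*cosh (μ*Y)^4*(μ*Y*(sinh (μ*Y)^2+cosh (μ*Y)^2) - sinh (μ*Y)*cosh (μ*Y))) + (-3*(sinh (μ * Y))^1*(cosh (μ * Y))^1 + 108*(sinh (μ * Y))^1*(cosh (μ * Y))^5 + 3*(cosh (μ * Y))^2*Y^1*μ^1 + -108*(cosh (μ * Y))^6*Y^1*μ^1 + 3*(sinh (μ * Y))^2*Y^1*μ^1 + -108*(sinh (μ * Y))^2*(cosh (μ * Y))^4*Y^1*μ^1)) * hid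

/-- positivity at the halfway point -/
lemma Tdiff {w : ℝ} (hw : 0 < w) :
    T (2*w) - T w = (cosh (2*w) - 1) / (sinh (2*w) * cosh (2*w)) := by
  have hs : 0 < sinh w := sinh_pos_iff.2 hw
  have hc : 0 < cosh w := cosh_pos w
  have hs2 : 0 < sinh (2*w) := sinh_pos_iff.2 (by linarith)
  have hc2 : 0 < cosh (2*w) := cosh_pos _
  have hidw : cosh w^2 - sinh w^2 = 1 := cosh_sq_sub_sinh_sq w
  have e3 : sinh (2*w) = 2 * sinh w * cosh w := sinh_two_mul _
  have e4 : cosh (2*w) = cosh w^2 + sinh w^2 := cosh_two_mul _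
  unfold T
  rw [e3, e4] at *
  field_simp
  linear_combination (((2*sinh w^2-1)*cosh w*(cosh w^2+sinh w^2)) + (2*(sinh w)^2 + 1*(sinh w)^2*(cosh w)^1 + -2*(sinh w)^2*(cosh w)^3 + -1 + 1*(cosh w)^3 + -2*(sinh w)^4*(cosh w)^1)) * hidw

lemma G2half {w : ℝ} (hw : 0 < w) :
    0 < (2/3)*(T (2*w) - T w)*cosh (2*w)^2 + (2/3)*(2*w + w) - m (2*(2*w)) := by
  have hkey : 3*(2*w) < 2*sinh (2*w) + T (2*w) := key_ineq (by linarith)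
  have hs2 : 0 < sinh (2*w) := sinh_pos_iff.2 (by linarith)
  have hc2 : 0 < cosh (2*w) := cosh_pos (2*w)
  have hid2 : cosh (2*w)^2 - sinh (2*w)^2 = 1 := cosh_sq_sub_sinh_sq (2*w)
  have hd : T (2*w)*cosh (2*w) = sinh (2*w) := by
    unfold T; field_simp
  have hkey2 : 6*w*cosh (2*w) < 2*sinh (2*w)*cosh (2*w) + sinh (2*w) := by
    nlinarith [mul_lt_mul_of_pos_right hkey hc2, hd]
  have idG2 : 3*sinh (2*w)^2*cosh (2*w)*((2/3)*(T (2*w) - T w)*cosh (2*w)^2 + (2/3)*(2*w + w) - m (2*(2*w)))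
      = cosh (2*w)^2*(2*sinh (2*w)*cosh (2*w) + sinh (2*w) - 6*w*cosh (2*w)) := by
    have e1 : sinh (2*(2*w)) = 2 * sinh (2*w) * cosh (2*w) := sinh_two_mul _
    have e2 : cosh (2*(2*w)) = cosh (2*w)^2 + sinh (2*w)^2 := cosh_two_mul _
    have hden : cosh (2*w)^2 + sinh (2*w)^2 - 1 ≠ 0 := by nlinarith
    rw [Tdiff hw]
    unfold m
    rw [e1, e2]
    field_simp
    linear_combination ((54*w*sinh (2*w)*cosh (2*w)^2*(sinh (2*w)^2+cosh (2*w)^2) - 27*sinh (2*w)^2*cosh (2*w)^3) + (-3*(sinh (2 * w))^1*(cosh (2 * w))^1 + -54*(sinh (2 * w))^1*(cosh (2 * w))^4*w^1 + 27*(sinh (2 * w))^2*(cosh (2 * w))^3 + 6*(cosh (2 * w))^2*w^1 + -54*(sinh (2 * w))^3*(cosh (2 * w))^2*w^1 + 6*(sinh (2 * w))^2*w^1)) * hid2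
  have h10 : 0 < 3*sinh (2*w)^2*cosh (2*w) := by positivity
  have h9 : 0 < cosh (2*w)^2*(2*sinh (2*w)*cosh (2*w) + sinh (2*w) - 6*w*cosh (2*w)) := by
    have : 0 < 2*sinh (2*w)*cosh (2*w) + sinh (2*w) - 6*w*cosh (2*w) := by linarith
    positivity
  nlinarith [idG2, h9, h10]

lemma gp_pos {Y : ℝ} (hY : 0 < Y) {μ : ℝ} (hμ : 2 < μ) : 0 < gp Y μ := by
  have hz : 0 < μ*Y := by positivity
  have hcz : 0 < cosh (μ*Y) := cosh_pos _
  set z := μ*Y with hzdef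
  have h2Y : 2*Y < z := by rw [hzdef]; nlinarith
  -- F B = (2/3)*(T z - T B)*cosh z^2 + (2/3)*(z + B) - m (2*z), strictly decreasing in B on [Y, z/2]
  have anti : StrictAntiOn (fun B => (2/3)*(T z - T B)*cosh z^2 + (2/3)*(z + B) - m (2*z))
      (Icc Y (z/2)) := by
    apply strictAntiOn_Icc_of_hasDerivAt
      (f' := fun B => 2/3 * -(1/cosh B^2) * cosh z^2 + 2/3*1)
    · intro B hB
      have h1 := ((hasDerivAt_T B).const_sub (T z)).const_mul (2/3:ℝ)
      have h2 := h1.mul_const (cosh z^2)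
      have h3 := ((hasDerivAt_id' B).const_add z).const_mul (2/3:ℝ)
      exact (h2.add h3).sub_const (m (2*z))
    · intro B hB
      obtain ⟨hB1, hB2⟩ := hB
      have hB0 : 0 < B := lt_trans hY hB1
      have hBz : B < z := by linarith
      have hcB : cosh B < cosh z := by
        rw [cosh_lt_cosh, abs_of_pos hB0, abs_of_pos hz]
        exact hBz
      have hcBp : 0 < cosh B := cosh_pos _
      have hq : cosh z^2 / cosh B^2 > 1 := by
        rw [gt_iff_lt, lt_div_iff₀ (by positivity)]
        nlinarith
      have hrw : 2/3 * -(1/cosh B^2) * cosh z^2 + 2/3*1 = (2/3)*(1 - cosh z^2/cosh B^2) := by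
        field_simp
        ring
      rw [hrw]
      nlinarith
  have hYmem : Y ∈ Icc Y (z/2) := ⟨le_refl Y, by linarith⟩
  have hhalfmem : (z/2) ∈ Icc Y (z/2) := ⟨by linarith, le_refl _⟩
  have hstep := anti hYmem hhalfmem (by linarith)
  have hhalf : 0 < (2/3)*(T z - T (z/2))*cosh z^2 + (2/3)*(z + z/2) - m (2*z) := by
    have := G2half (w := z/2) (by linarith)
    rw [show 2*(z/2) = z by ring] at this
    convert this using 2 <;> ring
  have hFY : 0 < (2/3)*(T z - T Y)*cosh z^2 + (2/3)*(z + Y) - m (2*z) := by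
    dsimp at hstep
    linarith
  -- now gp = FY / cosh z^2 ... rather: show gp equals that over cosh z^2
  unfold gp
  rw [← hzdef]
  have hgp : (2/3)*(T z - T Y) + ((2/3)*(μ+1)*Y - m (2*z)) / cosh z^2
      = ((2/3)*(T z - T Y)*cosh z^2 + (2/3)*(z + Y) - m (2*z)) / cosh z^2 := by
    rw [hzdef]
    field_simp
    ring
  rw [hgp]
  positivity

lemma case_large {Y lam : ℝ} (hY : 0 < Y) (hlam : 2 < lam) :
    0 < (2/3)*(lam+1)*(T (lam*Y) - T Y) + 2*lam/sinh (2*(lam*Y)) - 2/sinh (2*Y) := by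
  set g : ℝ → ℝ :=
    fun μ => (2/3)*(μ+1)*(T (μ*Y) - T Y) + 2*μ/sinh (2*(μ*Y)) - 2/sinh (2*Y) with hgdef
  have hg2 : g 2 = 0 := by
    have hki := key_identity hY
    simp only [hgdef]
    have : sinh (2*(2*Y)) ≠ 0 := ne_of_gt (sinh_pos_iff.2 (by linarith))
    have h2Y : sinh (2*Y) ≠ 0 := ne_of_gt (sinh_pos_iff.2 (by linarith))
    -- goal : (2/3)*(2+1)*(T (2*Y) - T Y) + 2*2/sinh (2*(2*Y)) - 2/sinh (2*Y) = 0
    linear_combination (-2 : ℝ)*hki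
  have mono : StrictMonoOn g (Icc 2 lam) := by
    apply strictMonoOn_Icc_of_hasDerivAt (f' := gp Y)
    · intro μ hμ
      exact g_deriv hY (by linarith [hμ.1])
    · intro μ hμ
      exact gp_pos hY hμ.1
  have := mono ⟨le_refl 2, hlam.le⟩ ⟨by linarith, le_refl lam⟩ hlam
  rw [hg2] at this
  exact this

lemma T_lt {a b : ℝ} (h : a < b) : T a < T b := by
  unfold T
  rw [div_lt_div_iff₀ (cosh_pos a) (cosh_pos b)]
  have hs := Real.sinh_sub a b
  have : sinh (a - b) < 0 := sinh_neg_iff.2 (by linarith)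
  nlinarith [this, hs]

lemma J_pos {Y lam q : ℝ} (hY : 0 < Y) (hlam : 1 < lam) (hq2 : 2 ≤ q)
    (hq3 : 2/3*(lam+1) ≤ q) (hexc : lam = 2 → 2 < q) :
    0 < q*(T (lam*Y) - T Y) + 2*lam/sinh (2*(lam*Y)) - 2/sinh (2*Y) := by
  have hTd : 0 < T (lam*Y) - T Y := by
    have := T_lt (show Y < lam*Y by nlinarith)
    linarith
  rcases lt_trichotomy lam 2 with h2 | h2 | h2
  · have hrho := rho_gt hY hlam h2
    have h1 : 0 ≤ (q - 2)*(T (lam*Y) - T Y) := mul_nonneg (by linarith) hTd.le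
    simp only [div_eq_mul_inv] at *
    linarith
  · subst h2
    have hq : 2 < q := hexc rfl
    have hki := key_identity hY
    have h1 : 0 < (q - 2)*(T (2*Y) - T Y) := mul_pos (by linarith) hTd
    simp only [div_eq_mul_inv] at *
    linarith
  · have hcl := case_large hY h2
    have h1 : 0 ≤ (q - 2/3*(lam+1))*(T (lam*Y) - T Y) := mul_nonneg (by linarith) hTd.le
    simp only [div_eq_mul_inv] at *
    linarith

noncomputable def lnH (lam q Y : ℝ) : ℝ :=
  (q/lam - 1) * log (cosh (lam*Y)) + log (sinh (lam*Y))
    - ((q - 1) * log (cosh Y) + log (sinh Y))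

lemma lnH_hasDerivAt {lam q Y : ℝ} (hlam : 1 < lam) (hY : 0 < Y) :
    HasDerivAt (lnH lam q)
      (q*(T (lam*Y) - T Y) + 2*lam/sinh (2*(lam*Y)) - 2/sinh (2*Y)) Y := by
  have hlY : 0 < lam*Y := by nlinarith
  have hsl : 0 < sinh (lam*Y) := sinh_pos_iff.2 hlY
  have hcl : 0 < cosh (lam*Y) := cosh_pos _
  have hsY : 0 < sinh Y := sinh_pos_iff.2 hY
  have hcY : 0 < cosh Y := cosh_pos Y
  have hin : HasDerivAt (fun Y : ℝ => lam*Y) lam Y := by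
    simpa using (hasDerivAt_id Y).const_mul lam
  have hcosh : HasDerivAt (fun Y => cosh (lam*Y)) (sinh (lam*Y)*lam) Y :=
    (Real.hasDerivAt_cosh (lam*Y)).comp Y hin
  have hsinh : HasDerivAt (fun Y => sinh (lam*Y)) (cosh (lam*Y)*lam) Y :=
    (Real.hasDerivAt_sinh (lam*Y)).comp Y hin
  have h1 : HasDerivAt (fun Y => (q/lam - 1) * log (cosh (lam*Y)))
      ((q/lam - 1) * (sinh (lam*Y)*lam / cosh (lam*Y))) Y :=
    (hcosh.log (ne_of_gt hcl)).const_mul _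
  have h2 : HasDerivAt (fun Y => log (sinh (lam*Y))) (cosh (lam*Y)*lam / sinh (lam*Y)) Y :=
    hsinh.log (ne_of_gt hsl)
  have h3 : HasDerivAt (fun Y => (q - 1) * log (cosh Y)) ((q-1) * (sinh Y / cosh Y)) Y :=
    ((Real.hasDerivAt_cosh Y).log (ne_of_gt hcY)).const_mul _
  have h4 : HasDerivAt (fun Y => log (sinh Y)) (cosh Y / sinh Y) Y :=
    (Real.hasDerivAt_sinh Y).log (ne_of_gt hsY)
  have h := (h1.add h2).sub (h3.add h4)
  convert h using 1 <;> try rfl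
  unfold T
  have e1 : sinh (2*(lam*Y)) = 2 * sinh (lam*Y) * cosh (lam*Y) := sinh_two_mul _
  have e2 : sinh (2*Y) = 2 * sinh Y * cosh Y := sinh_two_mul _
  have hidl : cosh (lam*Y)^2 - sinh (lam*Y)^2 = 1 := cosh_sq_sub_sinh_sq _
  have hidY : cosh Y^2 - sinh Y^2 = 1 := cosh_sq_sub_sinh_sq Y
  have hlam0 : lam ≠ 0 := by linarith
  rw [e1, e2]
  field_simp
  linear_combination (4*(sinh Y)^1*(sinh (lam * Y))^2*(cosh Y)^2*(cosh (lam * Y))^1*lam^1 + -4*(sinh Y)^1*(sinh (lam * Y))^2*(cosh Y)^4*(cosh (lam * Y))^1*lam^1 + -1*(sinh Y)^1*(cosh Y)^1*lam^1 + 4*(sinh Y)^2*(sinh (lam * Y))^1*(cosh Y)^3*(cosh (lam * Y))^2*lam^2 + 4*(sinh Y)^3*(sinh (lam * Y))^2*(cosh Y)^2*(cosh (lam * Y))^1*lam^1) * hidl + ((4*lam*sinh (lam*Y)^2*cosh (lam*Y)^3*sinh Y*cosh Y^2) + (1*(sinh (lam * Y))^1*(cosh (lam * Y))^1 + -4*(sinh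 Y)^1*(sinh (lam * Y))^4*(cosh Y)^2*(cosh (lam * Y))^1*lam^1 + -4*(sinh Y)^1*(sinh (lam * Y))^2*(cosh Y)^2*(cosh (lam * Y))^1*lam^1)) * hidY
    - (4*lam^2*sinh (lam*Y)*cosh Y^3*sinh Y^2*cosh (lam*Y)^2) * hidl

lemma log_cosh_eq (z : ℝ) : log (cosh z) = z + log (1 + exp (-2*z)) - log 2 := by
  have h1 : cosh z = exp z * (1 + exp (-2*z)) / 2 := by
    rw [Real.cosh_eq]
    have : exp (-z) = exp z * exp (-2*z) := by
      rw [← Real.exp_add]; ring_nf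
    rw [this]; ring
  rw [h1, Real.log_div (by positivity) (by norm_num), Real.log_mul (by positivity) (by positivity),
    Real.log_exp]

lemma log_sinh_eq {z : ℝ} (hz : 0 < z) : log (sinh z) = z + log (1 - exp (-2*z)) - log 2 := by
  have he : exp (-2*z) < 1 := by
    rw [Real.exp_lt_one_iff]; linarith
  have h1 : sinh z = exp z * (1 - exp (-2*z)) / 2 := by
    rw [Real.sinh_eq]
    have : exp (-z) = exp z * exp (-2*z) := by
      rw [← Real.exp_add]; ring_nf
    rw [this]; ring
  have h2 : 0 < 1 - exp (-2*z) := by linarith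
  rw [h1, Real.log_div (ne_of_gt (mul_pos (exp_pos z) h2)) (by norm_num),
    Real.log_mul (ne_of_gt (exp_pos z)) (ne_of_gt h2), Real.log_exp]

lemma lnH_tendsto_atTop {lam q : ℝ} (hlam : 1 < lam) :
    Tendsto (lnH lam q) atTop (𝓝 ((q - q/lam) * log 2)) := by
  have hlam0 : 0 < lam := by linarith
  -- rewrite on (0,∞)
  have heq : ∀ᶠ Y in atTop, lnH lam q Y =
      (q/lam - 1) * log (1 + exp (-2*(lam*Y))) + log (1 - exp (-2*(lam*Y)))
      - ((q - 1) * log (1 + exp (-2*Y)) + log (1 - exp (-2*Y))) + (q - q/lam) * log 2 := by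
    filter_upwards [eventually_gt_atTop (0:ℝ)] with Y hY
    have hlY : 0 < lam * Y := by positivity
    unfold lnH
    rw [log_cosh_eq (lam*Y), log_sinh_eq hlY, log_cosh_eq Y, log_sinh_eq hY]
    have hlamne : lam ≠ 0 := ne_of_gt hlam0
    field_simp
    ring
  rw [tendsto_congr' heq]
  have hexp : ∀ c : ℝ, 0 < c → Tendsto (fun Y : ℝ => exp (-2*(c*Y))) atTop (𝓝 0) := by
    intro c hc
    rw [Real.tendsto_exp_comp_nhds_zero]
    have h := Tendsto.const_mul_atTop_of_neg (show (-2*c:ℝ) < 0 by nlinarith)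
      (tendsto_id (α := ℝ) (x := atTop))
    refine h.congr (fun Y => ?_)
    simp [id]; ring
  have hlogp : ∀ c : ℝ, 0 < c →
      Tendsto (fun Y : ℝ => log (1 + exp (-2*(c*Y)))) atTop (𝓝 0) := by
    intro c hc
    have h1 : Tendsto (fun Y : ℝ => 1 + exp (-2*(c*Y))) atTop (𝓝 1) := by
      have := tendsto_const_nhds (α := ℝ) (f := atTop) (x := (1:ℝ))
      simpa using this.add (hexp c hc)
    have h2 := (Real.continuousAt_log (by norm_num : (1:ℝ) ≠ 0)).tendsto.comp h1
    convert h2 using 1 <;> first | rfl | simp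
  have hlogm : ∀ c : ℝ, 0 < c →
      Tendsto (fun Y : ℝ => log (1 - exp (-2*(c*Y)))) atTop (𝓝 0) := by
    intro c hc
    have h1 : Tendsto (fun Y : ℝ => 1 - exp (-2*(c*Y))) atTop (𝓝 1) := by
      have := tendsto_const_nhds (α := ℝ) (f := atTop) (x := (1:ℝ))
      simpa using this.sub (hexp c hc)
    have h2 := (Real.continuousAt_log (by norm_num : (1:ℝ) ≠ 0)).tendsto.comp h1
    convert h2 using 1 <;> first | rfl | simp
  have hY1 : Tendsto (fun Y : ℝ => exp (-2*Y)) atTop (𝓝 0) := by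
    have := hexp 1 one_pos
    simpa using this
  have hlogp1 : Tendsto (fun Y : ℝ => log (1 + exp (-2*Y))) atTop (𝓝 0) := by
    have := hlogp 1 one_pos
    simpa using this
  have hlogm1 : Tendsto (fun Y : ℝ => log (1 - exp (-2*Y))) atTop (𝓝 0) := by
    have := hlogm 1 one_pos
    simpa using this
  have htot := ((((hlogp lam hlam0).const_mul (q/lam - 1)).add (hlogm lam hlam0)).sub
      ((hlogp1.const_mul (q - 1)).add hlogm1)).add_const ((q - q/lam) * log 2)
  simpa using htot

lemma lnH_tendsto_zero {lam q : ℝ} (hlam : 1 < lam) :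
    Tendsto (lnH lam q) (𝓝[>] 0) (𝓝 (log lam)) := by
  have hlam0 : 0 < lam := by linarith
  have heq : ∀ᶠ Y in 𝓝[>] (0:ℝ), ((q/lam - 1) * log (cosh (lam*Y)) - (q - 1) * log (cosh Y)
      + log (sinh (lam*Y)/sinh Y)) = lnH lam q Y := by
    filter_upwards [self_mem_nhdsWithin] with Y hY
    have hY0 : (0:ℝ) < Y := hY
    have hsl : sinh (lam*Y) ≠ 0 := ne_of_gt (sinh_pos_iff.2 (by positivity))
    have hsY : sinh Y ≠ 0 := ne_of_gt (sinh_pos_iff.2 hY0)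
    unfold lnH
    rw [Real.log_div hsl hsY]
    ring
  rw [← tendsto_congr' heq]
  have hslope : Tendsto (fun z : ℝ => sinh z / z) (𝓝[≠] 0) (𝓝 1) := by
    have h := (Real.hasDerivAt_sinh 0)
    rw [hasDerivAt_iff_tendsto_slope] at h
    have : (fun z : ℝ => sinh z / z) = slope sinh 0 := by
      funext z
      rw [slope_def_field]
      simp [Real.sinh_zero]
    rw [this]
    simpa using h
  have hmapl : Tendsto (fun Y : ℝ => lam*Y) (𝓝[>] 0) (𝓝[≠] 0) := by
    apply tendsto_nhdsWithin_of_tendsto_nhds_of_eventually_within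
    · have : Tendsto (fun Y : ℝ => lam*Y) (𝓝 0) (𝓝 (lam*0)) :=
        (continuous_const.mul continuous_id).tendsto 0
      simpa using this.mono_left nhdsWithin_le_nhds
    · filter_upwards [self_mem_nhdsWithin] with Y hY
      have : (0:ℝ) < Y := hY
      exact ne_of_gt (by positivity)
  have hs1 : Tendsto (fun Y : ℝ => sinh (lam*Y) / (lam*Y)) (𝓝[>] 0) (𝓝 1) :=
    hslope.comp hmapl
  have hs2 : Tendsto (fun Y : ℝ => sinh Y / Y) (𝓝[>] 0) (𝓝 1) :=
    hslope.mono_left (nhdsWithin_mono 0 (fun x hx => ne_of_gt hx))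
  have hratio : Tendsto (fun Y : ℝ => sinh (lam*Y) / sinh Y) (𝓝[>] 0) (𝓝 lam) := by
    have h := ((hs1.mul_const lam).div hs2 (one_ne_zero))
    have heq2 : ∀ᶠ Y in 𝓝[>] (0:ℝ),
        (sinh (lam*Y) / (lam*Y) * lam) / (sinh Y / Y) = sinh (lam*Y) / sinh Y := by
      filter_upwards [self_mem_nhdsWithin] with Y hY
      have hY0 : (0:ℝ) < Y := hY
      have hsY : sinh Y ≠ 0 := ne_of_gt (sinh_pos_iff.2 hY0)
      have hYne : Y ≠ 0 := ne_of_gt hY0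
      have hlamne : lam ≠ 0 := ne_of_gt hlam0
      field_simp
    rw [← tendsto_congr' heq2]
    convert h using 1 <;> first | rfl | simp
  have p3 : Tendsto (fun Y : ℝ => log (sinh (lam*Y)/sinh Y)) (𝓝[>] 0) (𝓝 (log lam)) :=
    ((Real.continuousAt_log (ne_of_gt hlam0)).tendsto.comp hratio)
  have p1 : Tendsto (fun Y : ℝ => (q/lam - 1) * log (cosh (lam*Y))) (𝓝[>] 0) (𝓝 0) := by
    have hc1 : ContinuousAt (fun Y : ℝ => log (cosh (lam*Y))) 0 := by
      apply ContinuousAt.log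
      · exact (Real.continuous_cosh.comp (continuous_const.mul continuous_id)).continuousAt
      · exact ne_of_gt (cosh_pos _)
    have : Tendsto (fun Y : ℝ => log (cosh (lam*Y))) (𝓝 0) (𝓝 0) := by
      have := hc1.tendsto
      simpa using this
    simpa using (this.const_mul (q/lam - 1)).mono_left nhdsWithin_le_nhds
  have p2 : Tendsto (fun Y : ℝ => (q - 1) * log (cosh Y)) (𝓝[>] 0) (𝓝 0) := by
    have hc1 : ContinuousAt (fun Y : ℝ => log (cosh Y)) 0 := by
      apply ContinuousAt.log
      · exact Real.continuous_cosh.continuousAt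
      · exact ne_of_gt (cosh_pos _)
    have : Tendsto (fun Y : ℝ => log (cosh Y)) (𝓝 0) (𝓝 0) := by
      have := hc1.tendsto
      simpa using this
    simpa using (this.const_mul (q - 1)).mono_left nhdsWithin_le_nhds
  have htot := (p1.sub p2).add p3
  simpa using htot


lemma lnH_mono {lam q : ℝ} (hlam : 1 < lam) (hq2 : 2 ≤ q)
    (hq3 : 2/3*(lam+1) ≤ q) (hexc : lam = 2 → 2 < q) :
    StrictMonoOn (lnH lam q) (Ioi 0) := by
  refine strictMonoOn_of_deriv_pos (convex_Ioi 0) ?_ ?_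
  · intro Y hY
    exact (lnH_hasDerivAt hlam hY).continuousAt.continuousWithinAt
  · intro Y hY
    rw [interior_Ioi, mem_Ioi] at hY
    rw [(lnH_hasDerivAt hlam hY).deriv]
    exact J_pos hY hlam hq2 hq3 hexc

lemma lnH_bounds {lam q : ℝ} (hlam : 1 < lam) (hq2 : 2 ≤ q)
    (hq3 : 2/3*(lam+1) ≤ q) (hexc : lam = 2 → 2 < q) {Y : ℝ} (hY : 0 < Y) :
    log lam < lnH lam q Y ∧ lnH lam q Y < (q - q/lam) * log 2 := by
  have mono := lnH_mono hlam hq2 hq3 hexc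
  constructor
  · have h1 : log lam ≤ lnH lam q (Y/2) := by
      apply le_of_tendsto (lnH_tendsto_zero hlam)
      filter_upwards [Ioo_mem_nhdsGT_of_mem (show (0:ℝ) ∈ Ico (0:ℝ) (Y/2) by
        exact ⟨le_refl 0, by linarith⟩)] with z hz
      exact le_of_lt (mono hz.1 (by simp; linarith) hz.2)
    have h2 : lnH lam q (Y/2) < lnH lam q Y :=
      mono (by simp; linarith) (by simp; linarith) (by linarith)
    linarith
  · have h1 : lnH lam q (Y+1) ≤ (q - q/lam) * log 2 := by
      apply ge_of_tendsto (lnH_tendsto_atTop hlam)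
      filter_upwards [eventually_ge_atTop (Y+1)] with z hz
      rcases eq_or_lt_of_le hz with h | h
      · rw [← h]
      · exact le_of_lt (mono (by simp; linarith) (by simp; linarith) h)
    have h2 : lnH lam q Y < lnH lam q (Y+1) :=
      mono (by simp; linarith) (by simp; linarith) (by linarith)
    linarith

lemma pos_of_deriv_pos' {f f' : ℝ → ℝ} (hd : ∀ x, HasDerivAt f (f' x) x)
    (h0 : f 0 = 0) (hpos : ∀ x, 0 < x → 0 < f' x) : ∀ x, 0 < x → 0 < f x := by
  intro x hx
  have mono : StrictMonoOn f (Ici 0) := by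
    refine strictMonoOn_of_deriv_pos (convex_Ici 0)
      (fun y _ => (hd y).continuousAt.continuousWithinAt) ?_
    intro y hy
    rw [interior_Ici, mem_Ioi] at hy
    rw [(hd y).deriv]
    exact hpos y hy
  have := mono self_mem_Ici (mem_Ici.2 hx.le) hx
  simpa [h0] using this

lemma deriv_comparison {lam q : ℝ} (hlam : 1 < lam) (hq2 : 2 ≤ q)
    (hq3 : 2/3*(lam+1) ≤ q) (hexc : lam = 2 → 2 < q) {Y : ℝ} (hY : 0 < Y) :
    lam * (cosh Y ^ (q-1) * sinh Y) < cosh (lam*Y) ^ (q/lam - 1) * sinh (lam*Y) ∧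
    cosh (lam*Y) ^ (q/lam - 1) * sinh (lam*Y)
      < 2 ^ (q - q/lam) * (cosh Y ^ (q-1) * sinh Y) := by
  obtain ⟨hlo, hhi⟩ := lnH_bounds hlam hq2 hq3 hexc hY
  have hlam0 : 0 < lam := by linarith
  have hlY : 0 < lam*Y := by positivity
  have hsl : 0 < sinh (lam*Y) := sinh_pos_iff.2 hlY
  have hcl : 0 < cosh (lam*Y) := cosh_pos _
  have hsY : 0 < sinh Y := sinh_pos_iff.2 hY
  have hcY : 0 < cosh Y := cosh_pos Y
  have hB : 0 < cosh Y ^ (q-1) * sinh Y := by positivity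
  have hA : 0 < cosh (lam*Y) ^ (q/lam - 1) * sinh (lam*Y) := by positivity
  have hexpA : exp ((q/lam - 1) * log (cosh (lam*Y)) + log (sinh (lam*Y)))
      = cosh (lam*Y) ^ (q/lam - 1) * sinh (lam*Y) := by
    rw [Real.exp_add, Real.exp_log hsl, Real.rpow_def_of_pos hcl, mul_comm ((q/lam - 1)) _]
  have hexpB : exp ((q - 1) * log (cosh Y) + log (sinh Y))
      = cosh Y ^ (q-1) * sinh Y := by
    rw [Real.exp_add, Real.exp_log hsY, Real.rpow_def_of_pos hcY, mul_comm ((q - 1)) _]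
  have hexplnH : exp (lnH lam q Y) = (cosh (lam*Y) ^ (q/lam - 1) * sinh (lam*Y))
      / (cosh Y ^ (q-1) * sinh Y) := by
    unfold lnH
    rw [Real.exp_sub, hexpA, hexpB]
  constructor
  · have := Real.exp_lt_exp.2 hlo
    rw [Real.exp_log hlam0, hexplnH] at this
    rw [lt_div_iff₀ hB] at this
    linarith [this]
  · have := Real.exp_lt_exp.2 hhi
    rw [hexplnH] at this
    have h2 : exp ((q - q/lam) * log 2) = (2:ℝ) ^ (q - q/lam) := by
      rw [Real.rpow_def_of_pos (by norm_num : (0:ℝ) < 2), mul_comm]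
    rw [h2, div_lt_iff₀ hB] at this
    calc cosh (lam*Y) ^ (q/lam - 1) * sinh (lam*Y)
        < 2 ^ (q - q/lam) * (cosh Y ^ (q-1) * sinh Y) := this
      _ = _ := by ring

theorem core {lam q : ℝ} (hlam : 1 < lam) (hq2 : 2 ≤ q)
    (hq3 : 2/3*(lam+1) ≤ q) (hexc : lam = 2 → 2 < q) {Y : ℝ} (hY : 0 < Y) :
    lam * (cosh Y ^ q - 1) < cosh (lam*Y) ^ (q/lam) - 1 ∧
    cosh (lam*Y) ^ (q/lam) - 1 < 2 ^ (q - q/lam) * (cosh Y ^ q - 1) := by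
  have hlam0 : 0 < lam := by linarith
  have hlamne : lam ≠ 0 := ne_of_gt hlam0
  have hin : ∀ Y : ℝ, HasDerivAt (fun Y : ℝ => lam*Y) lam Y := fun Y => by
    simpa using (hasDerivAt_id Y).const_mul lam
  have hND : ∀ Y : ℝ, HasDerivAt (fun Y => cosh (lam*Y) ^ (q/lam) - 1)
      ((sinh (lam*Y)*lam) * (q/lam) * cosh (lam*Y) ^ (q/lam - 1)) Y := by
    intro Y
    have hcosh : HasDerivAt (fun Y => cosh (lam*Y)) (sinh (lam*Y)*lam) Y :=
      (Real.hasDerivAt_cosh (lam*Y)).comp Y (hin Y)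
    exact (hcosh.rpow_const (Or.inl (ne_of_gt (cosh_pos _)))).sub_const 1
  have hDD : ∀ Y : ℝ, HasDerivAt (fun Y => cosh Y ^ q - 1)
      (sinh Y * q * cosh Y ^ (q - 1)) Y := by
    intro Y
    exact ((Real.hasDerivAt_cosh Y).rpow_const (Or.inl (ne_of_gt (cosh_pos _)))).sub_const 1
  constructor
  · have := pos_of_deriv_pos'
      (f := fun Y => (cosh (lam*Y) ^ (q/lam) - 1) - lam * (cosh Y ^ q - 1))
      (f' := fun Y => (sinh (lam*Y)*lam) * (q/lam) * cosh (lam*Y) ^ (q/lam - 1)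
        - lam * (sinh Y * q * cosh Y ^ (q - 1)))
      (fun Y => ((hND Y).sub ((hDD Y).const_mul lam)))
      (by simp) ?_ Y hY
    · linarith [this]
    · intro x hx
      obtain ⟨h1, _⟩ := deriv_comparison hlam hq2 hq3 hexc hx
      have hq0 : 0 < q := by linarith
      have e1 : (sinh (lam*x)*lam) * (q/lam) * cosh (lam*x) ^ (q/lam - 1)
          = q * (cosh (lam*x) ^ (q/lam - 1) * sinh (lam*x)) := by
        field_simp
      have e2 : lam * (sinh x * q * cosh x ^ (q - 1))
          = q * (lam * (cosh x ^ (q-1) * sinh x)) := by ring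
      rw [e1, e2]
      have := mul_lt_mul_of_pos_left h1 hq0
      linarith [this]
  · have := pos_of_deriv_pos'
      (f := fun Y => 2 ^ (q - q/lam) * (cosh Y ^ q - 1) - (cosh (lam*Y) ^ (q/lam) - 1))
      (f' := fun Y => 2 ^ (q - q/lam) * (sinh Y * q * cosh Y ^ (q - 1))
        - (sinh (lam*Y)*lam) * (q/lam) * cosh (lam*Y) ^ (q/lam - 1))
      (fun Y => (((hDD Y).const_mul _).sub (hND Y)))
      (by simp) ?_ Y hY
    · linarith [this]
    · intro x hx
      obtain ⟨_, h2⟩ := deriv_comparison hlam hq2 hq3 hexc hx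
      have hq0 : 0 < q := by linarith
      have e1 : (sinh (lam*x)*lam) * (q/lam) * cosh (lam*x) ^ (q/lam - 1)
          = q * (cosh (lam*x) ^ (q/lam - 1) * sinh (lam*x)) := by
        field_simp
      rw [e1]
      have := mul_lt_mul_of_pos_left h2 hq0
      have e2 : q * (2 ^ (q - q/lam) * (cosh x ^ (q-1) * sinh x))
          = 2 ^ (q - q/lam) * (sinh x * q * cosh x ^ (q - 1)) := by ring
      linarith [this, e2.le]

lemma powerMean_rpow {a b : ℝ} (ha : 0 < a) (hb : 0 < b) {r : ℝ} (hr : r ≠ 0) (p : ℝ) :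
    powerMean r a b ^ p
      = exp ((log a + log b)/2) ^ p * cosh (r * ((log a - log b)/2)) ^ (p/r) := by
  set u := (log a + log b)/2 with hu
  set x := (log a - log b)/2 with hx
  have hsum : (a ^ r + b ^ r) / 2 = exp (u*r) * cosh (r*x) := by
    rw [Real.rpow_def_of_pos ha, Real.rpow_def_of_pos hb, Real.cosh_eq]
    have e1 : log a * r = u*r + r*x := by rw [hu, hx]; ring
    have e2 : log b * r = u*r + (-(r*x)) := by rw [hu, hx]; ring
    rw [e1, e2, Real.exp_add, Real.exp_add]
    ring
  have hcpos : 0 < cosh (r*x) := cosh_pos _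
  unfold powerMean
  rw [hsum, Real.mul_rpow (le_of_lt (exp_pos _)) hcpos.le]
  rw [← Real.exp_mul]
  rw [show u*r*(1/r) = u from by field_simp,
      Real.mul_rpow (exp_pos u).le (Real.rpow_nonneg hcpos.le _),
      ← Real.rpow_mul hcpos.le,
      show 1/r*p = p/r from by ring]


end RatioBoundsAux

open Real Set Filter Topology in
/-- Theorem 3.1(b), second part. -/
theorem ratio_bounds_neg_small_p (s t p : ℝ) (hs : s ≠ 0) (ht : t ≠ 0) (hp : p ≠ 0)
    (hst : s < t) (ht0 : t < 0)
    (hple : p ≤ min (2 * t) (2 / 3 * (s + t)))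
    (hexc : s = 2 * t → p < 2 * t) :
    ∀ a b : ℝ, 0 < a → 0 < b → a ≠ b →
      s / t <
        (powerMean s a b ^ p - geomMean a b ^ p) /
          (powerMean t a b ^ p - geomMean a b ^ p) ∧
      (powerMean s a b ^ p - geomMean a b ^ p) /
          (powerMean t a b ^ p - geomMean a b ^ p) <
        (2 : ℝ) ^ (p / t - p / s) := by
  intro a b ha hb hab
  set u := (log a + log b)/2 with hu
  set x := (log a - log b)/2 with hx
  have hs0 : s < 0 := lt_trans hst ht0
  have hxne : x ≠ 0 := by
    intro h
    apply hab
    have : log a = log b := by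
      have := h
      rw [hx] at this
      linarith [sub_eq_zero.1 (by linarith : log a - log b = 0)]
    calc a = exp (log a) := (Real.exp_log ha).symm
      _ = exp (log b) := by rw [this]
      _ = b := Real.exp_log hb
  have hG : geomMean a b = exp u := by
    unfold geomMean
    have h2 : a * b = (exp u) ^ 2 := by
      have h1 : exp u ^ 2 = exp (log a + log b) := by
        rw [sq, ← Real.exp_add, hu]
        congr 1
        ring
      rw [h1, Real.exp_add, Real.exp_log ha, Real.exp_log hb]
    rw [h2, Real.sqrt_sq (le_of_lt (exp_pos u))]
  set Y := |t*x| with hYdef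
  have hY : 0 < Y := abs_pos.2 (mul_ne_zero ht hxne)
  set lam := s/t with hlamdef
  set q := p/t with hqdef
  have hlt : lam * t = s := by rw [hlamdef]; field_simp
  have hqt : q * t = p := by rw [hqdef]; field_simp
  have hlam : 1 < lam := by nlinarith
  have hple1 : p ≤ 2*t := le_trans hple (min_le_left _ _)
  have hple2 : p ≤ 2/3*(s+t) := le_trans hple (min_le_right _ _)
  have hq2 : 2 ≤ q := by nlinarith
  have hq3 : 2/3*(lam+1) ≤ q := by nlinarith
  have hexc' : lam = 2 → 2 < q := by
    intro h
    have hs2t : s = 2*t := by rw [← hlt, h]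
    have := hexc hs2t
    nlinarith
  have hclam : cosh (lam*Y) = cosh (s*x) := by
    rcases abs_cases (t*x) with ⟨h1, _⟩ | ⟨h1, _⟩
    · rw [hYdef, h1, hlamdef]
      congr 1
      field_simp
      try ring
    · rw [hYdef, h1, hlamdef]
      have e : s/t*(-(t*x)) = -(s*x) := by
        field_simp
        try ring
      rw [e, Real.cosh_neg]
  have hcY : cosh Y = cosh (t*x) := by
    rw [hYdef, Real.cosh_abs]
  have hqlam : q/lam = p/s := by
    rw [hqdef, hlamdef]
    field_simp
    try ring
  have hcore := core hlam hq2 hq3 hexc' hY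
  rw [hclam, hcY, hqlam, hqdef] at hcore
  -- positivity of denominator
  have hc1 : 1 < cosh (t*x) := one_lt_cosh.2 (mul_ne_zero ht hxne)
  have hqpos : 0 < p/t := by nlinarith
  have hD : 0 < cosh (t*x) ^ (p/t) - 1 := by
    have : 1 < cosh (t*x) ^ (p/t) := by
      rw [show (1:ℝ) = 1 ^ (p/t) by rw [Real.one_rpow]]
      exact Real.rpow_lt_rpow (by norm_num) hc1 hqpos
    linarith
  -- express numerator/denominator
  have hMs := powerMean_rpow ha hb hs p
  have hMt := powerMean_rpow ha hb ht p
  have hEp : 0 < exp u ^ p := Real.rpow_pos_of_pos (exp_pos u) p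
  have hnum : powerMean s a b ^ p - geomMean a b ^ p
      = exp u ^ p * (cosh (s*x) ^ (p/s) - 1) := by
    rw [hMs, hG]; ring
  have hden : powerMean t a b ^ p - geomMean a b ^ p
      = exp u ^ p * (cosh (t*x) ^ (p/t) - 1) := by
    rw [hMt, hG]; ring
  rw [hnum, hden, mul_div_mul_left _ _ (ne_of_gt hEp)]
  constructor
  · rw [lt_div_iff₀ hD]
    linarith [hcore.1]
  · rw [div_lt_iff₀ hD]
    linarith [hcore.2]
end

section
/- Let s, t, p be nonzero real numbers with s < 0 < t, and suppose p ≥ max(0, (2/3)(s+t)), with the strict inequality p > 0 required in case s = −t. Then for all positive real numbers a ≠ b, s/t < (M_s(a,b)^p − G(a,b)^p)/(M_t(a,b)^p − G(a,b)^p) < 0. -/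
open Real Set


/-- `sinh x < x * cosh x` for `x > 0`. -/
lemma aux_sinh_lt_mul_cosh {x : ℝ} (hx : 0 < x) : Real.sinh x < x * Real.cosh x := by
  have key : StrictMonoOn (fun x : ℝ => x * Real.cosh x - Real.sinh x) (Ici 0) := by
    have hd : ∀ y : ℝ, HasDerivAt (fun x : ℝ => x * Real.cosh x - Real.sinh x)
        (y * Real.sinh y) y := by
      intro y
      have h1 : HasDerivAt (fun x : ℝ => x * Real.cosh x)
          (1 * Real.cosh y + y * Real.sinh y) y :=
        (hasDerivAt_id y).mul (Real.hasDerivAt_cosh y)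
      have h2 := h1.sub (Real.hasDerivAt_sinh y)
      exact h2.congr_deriv (by ring)
    apply strictMonoOn_of_deriv_pos (convex_Ici 0)
    · exact fun y _ => ((hd y).continuousAt).continuousWithinAt
    · intro y hy
      rw [interior_Ici, mem_Ioi] at hy
      rw [(hd y).deriv]
      exact mul_pos hy (Real.sinh_pos_iff.2 hy)
  have := key (self_mem_Ici) (le_of_lt hx : (0:ℝ) ≤ x) hx
  simpa using this

/-- `x < sinh x * cosh x` for `x > 0`. -/
lemma aux_lt_sinh_mul_cosh {x : ℝ} (hx : 0 < x) : x < Real.sinh x * Real.cosh x := by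
  have h1 : x < Real.sinh x := Real.self_lt_sinh_iff.2 hx
  have h2 : (1:ℝ) ≤ Real.cosh x := Real.one_le_cosh x
  nlinarith [Real.sinh_pos_iff.2 hx]

/-- `3 sinh z cosh z < 2 z cosh z ^ 2 + z` for `z > 0`. -/
lemma aux_three_sinh_cosh {z : ℝ} (hz : 0 < z) :
    3 * Real.sinh z * Real.cosh z < 2 * z * Real.cosh z ^ 2 + z := by
  have key : StrictMonoOn
      (fun x : ℝ => 2 * x * Real.cosh x ^ 2 + x - 3 * Real.sinh x * Real.cosh x) (Ici 0) := by
    have hd : ∀ y : ℝ, HasDerivAt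
        (fun x : ℝ => 2 * x * Real.cosh x ^ 2 + x - 3 * Real.sinh x * Real.cosh x)
        (4 * Real.sinh y * (y * Real.cosh y - Real.sinh y)) y := by
      intro y
      have h1 : HasDerivAt (fun x : ℝ => 2 * x * Real.cosh x ^ 2)
          (2 * Real.cosh y ^ 2 + 2 * y * (2 * Real.cosh y * Real.sinh y)) y := by
        have ha : HasDerivAt (fun x : ℝ => 2 * x) 2 y := by
          simpa using (hasDerivAt_id y).const_mul 2
        have hb : HasDerivAt (fun x : ℝ => Real.cosh x ^ 2)
            (2 * Real.cosh y * Real.sinh y) y := by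
          have := (Real.hasDerivAt_cosh y).pow 2
          exact this.congr_deriv (by simp)
        have := ha.mul hb
        exact this
      have h2 : HasDerivAt (fun x : ℝ => 3 * Real.sinh x * Real.cosh x)
          (3 * (Real.cosh y * Real.cosh y + Real.sinh y * Real.sinh y)) y := by
        have := ((Real.hasDerivAt_sinh y).mul (Real.hasDerivAt_cosh y)).const_mul 3
        simpa [mul_assoc] using this
      have h3 := (h1.add (hasDerivAt_id y)).sub h2
      refine h3.congr_deriv ?_
      have hc := Real.cosh_sq y
      nlinarith [hc]
    apply strictMonoOn_of_deriv_pos (convex_Ici 0)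
    · exact fun y _ => ((hd y).continuousAt).continuousWithinAt
    · intro y hy
      rw [interior_Ici, mem_Ioi] at hy
      rw [(hd y).deriv]
      have := aux_sinh_lt_mul_cosh hy
      have hs := Real.sinh_pos_iff.2 hy
      nlinarith
  have := key (self_mem_Ici) (le_of_lt hz : (0:ℝ) ≤ z) hz
  simp only [Real.cosh_zero, Real.sinh_zero] at this
  nlinarith [this]

/-- derivative of `log ∘ cosh`. -/
lemma hasDerivAt_logcosh (x : ℝ) :
    HasDerivAt (fun x : ℝ => Real.log (Real.cosh x)) (Real.sinh x / Real.cosh x) x :=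
  (Real.hasDerivAt_cosh x).log (Real.cosh_pos x).ne'

/-- `x * sinh x / cosh x < 2 log (cosh x)` for `x > 0`. -/
lemma aux_tanh_lt_two_logcosh {x : ℝ} (hx : 0 < x) :
    x * (Real.sinh x / Real.cosh x) < 2 * Real.log (Real.cosh x) := by
  have key : StrictMonoOn
      (fun x : ℝ => 2 * Real.log (Real.cosh x) - x * (Real.sinh x / Real.cosh x)) (Ici 0) := by
    have hd : ∀ y : ℝ, HasDerivAt
        (fun x : ℝ => 2 * Real.log (Real.cosh x) - x * (Real.sinh x / Real.cosh x))
        (2 * (Real.sinh y / Real.cosh y) -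
          (1 * (Real.sinh y / Real.cosh y) +
            y * ((Real.cosh y * Real.cosh y - Real.sinh y * Real.sinh y) / Real.cosh y ^ 2))) y := by
      intro y
      have h1 := (hasDerivAt_logcosh y).const_mul 2
      have h2 : HasDerivAt (fun x : ℝ => Real.sinh x / Real.cosh x)
          ((Real.cosh y * Real.cosh y - Real.sinh y * Real.sinh y) / Real.cosh y ^ 2) y :=
        (Real.hasDerivAt_sinh y).div (Real.hasDerivAt_cosh y) (Real.cosh_pos y).ne'
      exact h1.sub ((hasDerivAt_id y).mul h2)
    apply strictMonoOn_of_deriv_pos (convex_Ici 0)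
    · exact fun y _ => ((hd y).continuousAt).continuousWithinAt
    · intro y hy
      rw [interior_Ici, mem_Ioi] at hy
      rw [(hd y).deriv]
      have hc := Real.cosh_pos y
      have hcs : Real.cosh y * Real.cosh y - Real.sinh y * Real.sinh y = 1 := by
        nlinarith [Real.cosh_sq y]
      rw [hcs]
      have h2 : 2 * (Real.sinh y / Real.cosh y) -
          (1 * (Real.sinh y / Real.cosh y) + y * (1 / Real.cosh y ^ 2))
          = (Real.sinh y * Real.cosh y - y) / Real.cosh y ^ 2 := by
        field_simp
        ring
      rw [h2]
      exact div_pos (sub_pos.2 (aux_lt_sinh_mul_cosh hy)) (by positivity)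
  have := key (self_mem_Ici) (le_of_lt hx : (0:ℝ) ≤ x) hx
  simpa using this

/-- `log cosh / x²` is antitone: for `0 < y ≤ z`, `z² log cosh y ≥ y² log cosh z`. -/
lemma aux_logcosh_div_sq {y z : ℝ} (hy : 0 < y) (hyz : y ≤ z) :
    y ^ 2 * Real.log (Real.cosh z) ≤ z ^ 2 * Real.log (Real.cosh y) := by
  have key : AntitoneOn (fun x : ℝ => Real.log (Real.cosh x) / x ^ 2) (Ioi 0) := by
    have hd : ∀ x : ℝ, 0 < x → HasDerivAt (fun x : ℝ => Real.log (Real.cosh x) / x ^ 2)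
        ((Real.sinh x / Real.cosh x * x ^ 2 - Real.log (Real.cosh x) * (2 * x)) / (x ^ 2) ^ 2)
        x := by
      intro x hx
      have h2 : HasDerivAt (fun x : ℝ => x ^ 2) (2 * x) x := by
        exact ((hasDerivAt_id x).pow 2).congr_deriv (by simp)
      exact (hasDerivAt_logcosh x).div h2 (by positivity)
    apply antitoneOn_of_deriv_nonpos (convex_Ioi 0)
    · exact fun x hx => ((hd x hx).continuousAt).continuousWithinAt
    · intro x hx
      rw [interior_Ioi, mem_Ioi] at hx
      exact ((hd x hx).differentiableAt).differentiableWithinAt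
    · intro x hx
      rw [interior_Ioi, mem_Ioi] at hx
      rw [(hd x hx).deriv]
      apply div_nonpos_of_nonpos_of_nonneg _ (by positivity)
      have := aux_tanh_lt_two_logcosh hx
      nlinarith [this, sq_nonneg x]
  have h1 := key (mem_Ioi.2 hy) (mem_Ioi.2 (lt_of_lt_of_le hy hyz)) hyz
  have hz : 0 < z := lt_of_lt_of_le hy hyz
  rw [div_le_div_iff₀ (by positivity) (by positivity)] at h1
  nlinarith [h1]

noncomputable def qFun (x : ℝ) : ℝ :=
  Real.log (Real.sinh x) - Real.log (Real.cosh x) - Real.log x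

/-- `q` is antitone on positives. -/
lemma qFun_anti {z y : ℝ} (hz : 0 < z) (hzy : z ≤ y) : qFun y ≤ qFun z := by
  have hd : ∀ x : ℝ, 0 < x → HasDerivAt qFun
      (Real.cosh x / Real.sinh x - Real.sinh x / Real.cosh x - x⁻¹) x := by
    intro x hx
    have h1 := (Real.hasDerivAt_sinh x).log (Real.sinh_pos_iff.2 hx).ne'
    exact (h1.sub (hasDerivAt_logcosh x)).sub (Real.hasDerivAt_log hx.ne')
  have key : AntitoneOn qFun (Ioi 0) := by
    apply antitoneOn_of_deriv_nonpos (convex_Ioi 0)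
    · exact fun x hx => ((hd x hx).continuousAt).continuousWithinAt
    · intro x hx
      rw [interior_Ioi, mem_Ioi] at hx
      exact ((hd x hx).differentiableAt).differentiableWithinAt
    · intro x hx
      rw [interior_Ioi, mem_Ioi] at hx
      rw [(hd x hx).deriv]
      have hS := Real.sinh_pos_iff.2 hx
      have hC := Real.cosh_pos x
      have h1 : Real.cosh x / Real.sinh x - Real.sinh x / Real.cosh x
          = 1 / (Real.sinh x * Real.cosh x) := by
        rw [div_sub_div _ _ hS.ne' hC.ne']
        congr 1
        nlinarith [Real.cosh_sq x]
      rw [h1]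
      have h2 : 1 / (Real.sinh x * Real.cosh x) ≤ 1 / x :=
        one_div_le_one_div_of_le hx (le_of_lt (aux_lt_sinh_mul_cosh hx))
      have h3 : (1:ℝ) / x = x⁻¹ := one_div x
      linarith
  exact key (mem_Ioi.2 hz) (mem_Ioi.2 (lt_of_lt_of_le hz hzy)) hzy

/-- Claim K. -/
lemma claimK {y z : ℝ} (hy : 0 < y) (hyz : y < z) :
    qFun y - qFun z < 2 / 3 * ((z - y) * (Real.log (Real.cosh y) / y + Real.log (Real.cosh z) / z)) := by
  set Cy := Real.log (Real.cosh y) / y with hCy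
  set F : ℝ → ℝ := fun z =>
    2 / 3 * ((z - y) * (Cy + Real.log (Real.cosh z) / z)) + qFun z with hF
  have hd : ∀ x : ℝ, 0 < x → HasDerivAt F
      (2 / 3 * (1 * (Cy + Real.log (Real.cosh x) / x) +
        (x - y) * ((Real.sinh x / Real.cosh x * x - Real.log (Real.cosh x) * 1) / x ^ 2)) +
       (Real.cosh x / Real.sinh x - Real.sinh x / Real.cosh x - x⁻¹)) x := by
    intro x hx
    have h1 : HasDerivAt (fun x : ℝ => x - y) 1 x := (hasDerivAt_id x).sub_const y
    have hφ : HasDerivAt (fun x : ℝ => Real.log (Real.cosh x) / x)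
        ((Real.sinh x / Real.cosh x * x - Real.log (Real.cosh x) * 1) / x ^ 2) x :=
      (hasDerivAt_logcosh x).div (hasDerivAt_id x) hx.ne'
    have hφC := hφ.const_add Cy
    have hprod := (h1.mul hφC).const_mul (2/3)
    have hq1 := (Real.hasDerivAt_sinh x).log (Real.sinh_pos_iff.2 hx).ne'
    have hq := (hq1.sub (hasDerivAt_logcosh x)).sub (Real.hasDerivAt_log hx.ne')
    exact hprod.add hq
  have hmono : StrictMonoOn F (Ici y) := by
    apply strictMonoOn_of_deriv_pos (convex_Ici y)
    · exact fun x hx => ((hd x (lt_of_lt_of_le hy hx)).continuousAt).continuousWithinAt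
    · intro x hx
      rw [interior_Ici, mem_Ioi] at hx
      have hx0 : 0 < x := hy.trans hx
      rw [(hd x hx0).deriv]
      set S := Real.sinh x with hS
      set C := Real.cosh x with hC
      have hSpos : 0 < S := Real.sinh_pos_iff.2 hx0
      have hCpos : 0 < C := Real.cosh_pos x
      set Lx := Real.log (Real.cosh x) with hLx
      set Ly := Real.log (Real.cosh y) with hLy
      -- step 1 : y * φ'(x) ≤ Cy
      have hstep1 : y * ((S / C * x - Lx * 1) / x ^ 2) ≤ Cy := by
        have ha : S / C * x - Lx ≤ Lx := by
          have := aux_tanh_lt_two_logcosh hx0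
          rw [← hS, ← hC, ← hLx] at this
          nlinarith
        have hb : y ^ 2 * Lx ≤ x ^ 2 * Ly := aux_logcosh_div_sq hy (le_of_lt hx)
        rw [hCy, mul_one, ← mul_div_assoc,
          div_le_div_iff₀ (by positivity : (0:ℝ) < x ^ 2) hy]
        nlinarith [mul_le_mul_of_nonneg_left ha (sq_nonneg y), hb]
      -- step 2 : bracket ≥ S/C
      have hbrack : 1 * (Cy + Lx / x) +
          (x - y) * ((S / C * x - Lx * 1) / x ^ 2) ≥ S / C := by
        have h2 : x * ((S / C * x - Lx * 1) / x ^ 2) = (S / C * x - Lx) / x := by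
          field_simp
        have : 1 * (Cy + Lx / x) + (x - y) * ((S / C * x - Lx * 1) / x ^ 2)
            ≥ 1 * (Lx / x) + x * ((S / C * x - Lx * 1) / x ^ 2) := by
          nlinarith [hstep1]
        rw [h2] at this
        have h3 : 1 * (Lx / x) + (S / C * x - Lx) / x = S / C := by
          field_simp
          ring
        linarith [this, h3.le, h3.ge]
      -- step 3 : conclude
      have hfin : 0 < 2 / 3 * (S / C) + (C / S - S / C - x⁻¹) := by
        have hkey := aux_three_sinh_cosh hx0
        rw [← hS, ← hC] at hkey
        have hsq : C ^ 2 = S ^ 2 + 1 := Real.cosh_sq x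
        rw [show 2 / 3 * (S / C) + (C / S - S / C - x⁻¹)
            = (3 * x * C ^ 2 - x * S ^ 2 - 3 * S * C) / (3 * x * S * C) by
          field_simp; ring]
        apply div_pos _ (by positivity)
        nlinarith
      calc (0:ℝ) < 2 / 3 * (S / C) + (C / S - S / C - x⁻¹) := hfin
        _ ≤ _ := by nlinarith [hbrack]
  have hFy : F y = qFun y := by simp [hF]
  have := hmono (self_mem_Ici) (mem_Ici.2 (le_of_lt hyz)) hyz
  rw [hFy] at this
  simp only [hF] at this
  linarith

/-- The key analytic proposition. -/
lemma keyProp {u t p c : ℝ} (hu : 0 < u) (ht : 0 < t) (hp : 0 < p) (hc : 0 < c)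
    (hpge : 2 * (t - u) / 3 ≤ p) :
    0 < u * (Real.exp (p / t * Real.log (Real.cosh (t * c))) - 1) +
        t * (Real.exp (-(p / u * Real.log (Real.cosh (u * c)))) - 1) := by
  set Θ : ℝ → ℝ := fun c =>
    u * (Real.exp (p / t * Real.log (Real.cosh (t * c))) - 1) +
      t * (Real.exp (-(p / u * Real.log (Real.cosh (u * c)))) - 1) with hΘ
  have hdln : ∀ (r c : ℝ), HasDerivAt (fun c : ℝ => Real.log (Real.cosh (r * c)))
      (Real.sinh (r * c) * r / Real.cosh (r * c)) c := by
    intro r c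
    have hlin : HasDerivAt (fun c : ℝ => r * c) r c := by
      simpa using (hasDerivAt_id c).const_mul r
    have hcomp : HasDerivAt (fun c : ℝ => Real.cosh (r * c)) (Real.sinh (r * c) * r) c :=
      (Real.hasDerivAt_cosh (r * c)).comp c hlin
    exact hcomp.log (Real.cosh_pos _).ne'
  have hd : ∀ x : ℝ, HasDerivAt Θ
      (u * (Real.exp (p / t * Real.log (Real.cosh (t * x))) *
          (p / t * (Real.sinh (t * x) * t / Real.cosh (t * x)))) +
       t * (Real.exp (-(p / u * Real.log (Real.cosh (u * x)))) *
          (-(p / u * (Real.sinh (u * x) * u / Real.cosh (u * x)))))) x := by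
    intro x
    have h1 := ((((hdln t x).const_mul (p / t)).exp).sub_const 1).const_mul u
    have h2 := (((((hdln u x).const_mul (p / u)).neg).exp).sub_const 1).const_mul t
    exact h1.add h2
  have hmono : StrictMonoOn Θ (Ici 0) := by
    apply strictMonoOn_of_deriv_pos (convex_Ici 0)
    · exact fun x _ => ((hd x).continuousAt).continuousWithinAt
    · intro x hx
      rw [interior_Ici, mem_Ioi] at hx
      rw [(hd x).deriv]
      have hy : 0 < u * x := mul_pos hu hx
      have hz : 0 < t * x := mul_pos ht hx
      set Sy := Real.sinh (u * x) with hSy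
      set Cy := Real.cosh (u * x) with hCy
      set Sz := Real.sinh (t * x) with hSz
      set Cz := Real.cosh (t * x) with hCz
      set L1 := Real.log (Real.cosh (u * x)) with hL1
      set L2 := Real.log (Real.cosh (t * x)) with hL2
      have hSyp : 0 < Sy := Real.sinh_pos_iff.2 hy
      have hSzp : 0 < Sz := Real.sinh_pos_iff.2 hz
      have hCyp : 0 < Cy := Real.cosh_pos _
      have hCzp : 0 < Cz := Real.cosh_pos _
      have hL1p : 0 < L1 := Real.log_pos (Real.one_lt_cosh.2 hy.ne')
      have hL2p : 0 < L2 := Real.log_pos (Real.one_lt_cosh.2 hz.ne')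
      set A := p / u * L1 with hA
      set B := p / t * L2 with hB
      have hAp : 0 < A := mul_pos (div_pos hp hu) hL1p
      have hBp : 0 < B := mul_pos (div_pos hp ht) hL2p
      -- exponent bound
      have hAB : qFun (u * x) - qFun (t * x) < A + B := by
        rcases le_or_gt (t * x) (u * x) with hcase | hcase
        · have := qFun_anti hz hcase
          linarith
        · have h1 := claimK hy hcase
          have h2 : 2 / 3 * ((t * x - u * x) * (L1 / (u * x) + L2 / (t * x))) ≤ A + B := by
            have e1 : A + B = p * (x * (L1 / (u * x) + L2 / (t * x))) := by
              rw [hA, hB]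
              field_simp
            have e2 : 2 / 3 * ((t * x - u * x) * (L1 / (u * x) + L2 / (t * x)))
                = 2 * (t - u) / 3 * (x * (L1 / (u * x) + L2 / (t * x))) := by ring
            have e3 : 0 ≤ x * (L1 / (u * x) + L2 / (t * x)) := by positivity
            rw [e1, e2]
            exact mul_le_mul_of_nonneg_right hpge e3
          calc qFun (u * x) - qFun (t * x)
              < 2 / 3 * ((t * x - u * x) * (L1 / (u * x) + L2 / (t * x))) := h1
            _ ≤ A + B := h2
      have hexpqy : Real.exp (qFun (u * x)) = Sy / Cy / (u * x) := by
        rw [qFun, Real.exp_sub, Real.exp_sub, Real.exp_log hSyp, Real.exp_log hCyp,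
          Real.exp_log hy]
      have hexpqz : Real.exp (qFun (t * x)) = Sz / Cz / (t * x) := by
        rw [qFun, Real.exp_sub, Real.exp_sub, Real.exp_log hSzp, Real.exp_log hCzp,
          Real.exp_log hz]
      have hE : (Sy / Cy / (u * x)) / (Sz / Cz / (t * x)) < Real.exp (A + B) := by
        rw [← hexpqy, ← hexpqz, ← Real.exp_sub]
        exact Real.exp_lt_exp.2 hAB
      have hid : u * ((Sy / Cy / (u * x)) / (Sz / Cz / (t * x))) * (Sz / Cz)
          = t * (Sy / Cy) := by
        field_simp
      have hP : t * (Sy / Cy) < u * Real.exp (A + B) * (Sz / Cz) := by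
        rw [← hid]
        exact mul_lt_mul_of_pos_right (mul_lt_mul_of_pos_left hE hu)
          (div_pos hSzp hCzp)
      -- from hP to the derivative expression
      have hgoal : t * Real.exp (-A) * (Sy / Cy) < u * Real.exp B * (Sz / Cz) := by
        have h1 : Real.exp (-A) * (t * (Sy / Cy)) < Real.exp (-A) * (u * Real.exp (A + B) * (Sz / Cz)) :=
          mul_lt_mul_of_pos_left hP (Real.exp_pos _)
        have h2 : Real.exp (-A) * Real.exp (A + B) = Real.exp B := by
          rw [← Real.exp_add]; congr 1; ring
        calc t * Real.exp (-A) * (Sy / Cy) = Real.exp (-A) * (t * (Sy / Cy)) := by ring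
          _ < Real.exp (-A) * (u * Real.exp (A + B) * (Sz / Cz)) := h1
          _ = u * Real.exp B * (Sz / Cz) := by rw [show Real.exp (-A) * (u * Real.exp (A + B) * (Sz / Cz)) = u * (Real.exp (-A) * Real.exp (A + B)) * (Sz / Cz) from by ring, h2]
      have e4 : u * (Real.exp B * (p / t * (Sz * t / Cz))) +
          t * (Real.exp (-A) * (-(p / u * (Sy * u / Cy))))
          = p * (u * Real.exp B * (Sz / Cz)) - p * (t * Real.exp (-A) * (Sy / Cy)) := by
        field_simp
        ring
      rw [e4]
      have := mul_lt_mul_of_pos_left hgoal hp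
      linarith
  have hΘ0 : Θ 0 = 0 := by simp [hΘ]
  have := hmono (self_mem_Ici) (mem_Ici.2 (le_of_lt hc)) hc
  rw [hΘ0] at this
  exact this

lemma pm_pow {r p a b : ℝ} (hr : r ≠ 0) (ha : 0 < a) (hb : 0 < b) :
    powerMean r a b ^ p = geomMean a b ^ p *
      Real.exp (p / r * Real.log (Real.cosh (r * ((Real.log a - Real.log b) / 2)))) := by
  set m := (Real.log a + Real.log b) / 2 with hm
  set d := (Real.log a - Real.log b) / 2 with hd
  have hG : geomMean a b = Real.exp m := by
    rw [geomMean, show a * b = Real.exp m ^ 2 by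
      rw [sq, ← Real.exp_add, hm,
        show (Real.log a + Real.log b) / 2 + (Real.log a + Real.log b) / 2
          = Real.log a + Real.log b by ring, Real.exp_add, Real.exp_log ha, Real.exp_log hb]]
    exact Real.sqrt_sq (Real.exp_pos m).le
  have hsum : (a ^ r + b ^ r) / 2 = Real.exp (r * m) * Real.cosh (r * d) := by
    rw [Real.rpow_def_of_pos ha, Real.rpow_def_of_pos hb, Real.cosh_eq]
    rw [show Real.exp (r * m) * ((Real.exp (r * d) + Real.exp (-(r * d))) / 2)
        = (Real.exp (r * m + r * d) + Real.exp (r * m + -(r * d))) / 2 by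
      rw [Real.exp_add, Real.exp_add]; ring]
    rw [show r * m + r * d = Real.log a * r by rw [hm, hd]; ring,
      show r * m + -(r * d) = Real.log b * r by rw [hm, hd]; ring]
  have hXpos : 0 < Real.exp (r * m) * Real.cosh (r * d) := by positivity
  rw [powerMean, hsum, ← Real.rpow_mul hXpos.le,
    Real.mul_rpow (Real.exp_pos _).le (Real.cosh_pos _).le,
    Real.rpow_def_of_pos (Real.exp_pos _), Real.log_exp,
    Real.rpow_def_of_pos (Real.cosh_pos _), hG,
    Real.rpow_def_of_pos (Real.exp_pos _), Real.log_exp, ← Real.exp_add, ← Real.exp_add]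
  congr 1
  field_simp

/-- Theorem 3.1(c), first part. -/
theorem ratio_bounds_mixed_large_p (s t p : ℝ) (hs : s ≠ 0) (ht : t ≠ 0) (hp : p ≠ 0)
    (hs0 : s < 0) (h0t : 0 < t)
    (hpge : max 0 (2 / 3 * (s + t)) ≤ p)
    (hexc : s = -t → 0 < p) :
    ∀ a b : ℝ, 0 < a → 0 < b → a ≠ b →
      s / t <
        (powerMean s a b ^ p - geomMean a b ^ p) /
          (powerMean t a b ^ p - geomMean a b ^ p) ∧
      (powerMean s a b ^ p - geomMean a b ^ p) /
          (powerMean t a b ^ p - geomMean a b ^ p) < 0 := by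
  intro a b ha hb hab
  have hp0 : 0 < p := lt_of_le_of_ne (le_trans (le_max_left 0 _) hpge) (Ne.symm hp)
  have hu : 0 < -s := neg_pos.2 hs0
  have hpge2 : 2 * (t - -s) / 3 ≤ p := by
    have := le_trans (le_max_right 0 (2 / 3 * (s + t))) hpge
    linarith
  set c0 := (Real.log a - Real.log b) / 2 with hc0def
  have hc0 : c0 ≠ 0 := by
    rw [hc0def]
    intro h
    apply hab
    have : Real.log a = Real.log b := by linarith [(div_eq_zero_iff.1 h)]
    calc a = Real.exp (Real.log a) := (Real.exp_log ha).symm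
      _ = Real.exp (Real.log b) := by rw [this]
      _ = b := Real.exp_log hb
  set c := |c0| with hcdef
  have hc : 0 < c := abs_pos.2 hc0
  have hcosh_s : Real.cosh (s * c0) = Real.cosh (-s * c) := by
    rw [← Real.cosh_abs (s * c0), ← Real.cosh_abs (-s * c), abs_mul, hcdef, abs_mul,
      abs_of_neg hs0, abs_abs, abs_of_pos hu]
  have hcosh_t : Real.cosh (t * c0) = Real.cosh (t * c) := by
    rw [← Real.cosh_abs (t * c0), ← Real.cosh_abs (t * c), abs_mul, abs_mul, abs_abs]
  set G := geomMean a b with hGdef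
  have hGp : 0 < G ^ p := by
    apply Real.rpow_pos_of_pos
    exact Real.sqrt_pos.2 (mul_pos ha hb)
  have hMs : powerMean s a b ^ p = G ^ p * Real.exp (-(p / -s * Real.log (Real.cosh (-s * c)))) := by
    rw [pm_pow hs ha hb, ← hc0def, hcosh_s]
    congr 2
    rw [show p / s = -(p / -s) by field_simp]
    ring
  have hMt : powerMean t a b ^ p = G ^ p * Real.exp (p / t * Real.log (Real.cosh (t * c))) := by
    rw [pm_pow ht ha hb, ← hc0def, hcosh_t]
  set EA := Real.exp (-(p / -s * Real.log (Real.cosh (-s * c)))) with hEAdef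
  set EB := Real.exp (p / t * Real.log (Real.cosh (t * c))) with hEBdef
  have hL1 : 0 < Real.log (Real.cosh (-s * c)) :=
    Real.log_pos (Real.one_lt_cosh.2 (mul_pos hu hc).ne')
  have hL2 : 0 < Real.log (Real.cosh (t * c)) :=
    Real.log_pos (Real.one_lt_cosh.2 (mul_pos h0t hc).ne')
  have hEA1 : EA < 1 := by
    rw [hEAdef]
    apply Real.exp_lt_one_iff.2
    have : 0 < p / -s * Real.log (Real.cosh (-s * c)) := mul_pos (div_pos hp0 hu) hL1
    linarith
  have hEB1 : 1 < EB := by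
    rw [hEBdef]
    exact Real.one_lt_exp_iff.2 (mul_pos (div_pos hp0 h0t) hL2)
  have hnum : powerMean s a b ^ p - G ^ p = G ^ p * (EA - 1) := by rw [hMs]; ring
  have hden : powerMean t a b ^ p - G ^ p = G ^ p * (EB - 1) := by rw [hMt]; ring
  have hkey := keyProp hu h0t hp0 hc hpge2
  rw [← hEBdef, ← hEAdef] at hkey
  rw [hnum, hden, mul_div_mul_left _ _ hGp.ne']
  constructor
  · rw [div_lt_div_iff₀ h0t (sub_pos.2 hEB1)]
    nlinarith [hkey]
  · exact div_neg_of_neg_of_pos (by linarith) (by linarith)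
end

section
/- Let s and t be nonzero real numbers with s < t < 0. Then for all positive real numbers a ≠ b, 1 < (M_s(a,b) − G(a,b))/(M_t(a,b) − G(a,b)) < s/t. -/
open Real Set Filter Topology

private lemma hdLogHalf (x : ℝ) (hx : 0 < x) :
    HasDerivAt (fun y : ℝ => Real.log ((y + 1) / 2)) (1 / (x + 1)) x := by
  have h : HasDerivAt (fun y : ℝ => (y + 1) / 2) (1 / 2) x :=
    ((hasDerivAt_id x).add_const 1).div_const 2
  have := h.log (by positivity)
  convert this using 1
  field_simp

private lemma hdPhi2 (x : ℝ) (hx : 0 < x) :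
    HasDerivAt (fun y => 4 * Real.log y - 2 * Real.log y / y - 4 * Real.log ((y + 1) / 2))
      ((2 * (x - 1) + 2 * (x + 1) * Real.log x) / (x ^ 2 * (x + 1))) x := by
  have h1 : HasDerivAt (fun y : ℝ => 4 * Real.log y) (4 * x⁻¹) x :=
    (Real.hasDerivAt_log hx.ne').const_mul 4
  have h2 : HasDerivAt (fun y : ℝ => 2 * Real.log y / y)
      ((2 * x⁻¹ * x - 2 * Real.log x * 1) / x ^ 2) x :=
    ((Real.hasDerivAt_log hx.ne').const_mul 2).div (hasDerivAt_id x) hx.ne'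
  have h3 : HasDerivAt (fun y : ℝ => 4 * Real.log ((y + 1) / 2)) (4 * (1 / (x + 1))) x :=
    (hdLogHalf x hx).const_mul 4
  convert (h1.sub h2).sub h3 using 1
  all_goals try rfl
  have hx1 : x + 1 ≠ 0 := by positivity
  field_simp
  ring

private lemma phi2_pos (x : ℝ) (hx : 0 < x) (hx1 : x ≠ 1) :
    0 < 4 * Real.log x - 2 * Real.log x / x - 4 * Real.log ((x + 1) / 2) := by
  have key : ∀ y : ℝ, 0 < y →
      deriv (fun y => 4 * Real.log y - 2 * Real.log y / y - 4 * Real.log ((y + 1) / 2)) y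
      = (2 * (y - 1) + 2 * (y + 1) * Real.log y) / (y ^ 2 * (y + 1)) :=
    fun y hy => (hdPhi2 y hy).deriv
  have hval1 : (fun y => 4 * Real.log y - 2 * Real.log y / y - 4 * Real.log ((y + 1) / 2)) 1
      = 0 := by norm_num
  rcases lt_or_gt_of_ne hx1 with h | h
  · -- x < 1 : strictly decreasing on (0,1]
    have anti : StrictAntiOn
        (fun y => 4 * Real.log y - 2 * Real.log y / y - 4 * Real.log ((y + 1) / 2)) (Ioc 0 1) := by
      apply strictAntiOn_of_deriv_neg (convex_Ioc 0 1)
      · exact fun y hy => ((hdPhi2 y hy.1).continuousAt).continuousWithinAt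
      · intro y hy
        rw [interior_Ioc] at hy
        rw [key y hy.1]
        apply div_neg_of_neg_of_pos
        · have := Real.log_neg hy.1 hy.2
          nlinarith [hy.1, hy.2]
        · exact mul_pos (pow_pos hy.1 2) (by linarith [hy.1])
    have := anti ⟨hx, h.le⟩ ⟨one_pos, le_refl 1⟩ h
    rw [hval1] at this
    linarith
  · have mono : StrictMonoOn
        (fun y => 4 * Real.log y - 2 * Real.log y / y - 4 * Real.log ((y + 1) / 2)) (Ici 1) := by
      apply strictMonoOn_of_deriv_pos (convex_Ici 1)
      · exact fun y hy => ((hdPhi2 y (lt_of_lt_of_le one_pos hy)).continuousAt).continuousWithinAt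
      · intro y hy
        rw [interior_Ici] at hy
        have hy1 : (1:ℝ) < y := hy
        rw [key y (lt_trans one_pos hy1)]
        apply div_pos
        · have := Real.log_pos hy1
          nlinarith
        · have h0 : (0:ℝ) < y := lt_trans one_pos hy
          exact mul_pos (pow_pos h0 2) (by linarith)
    have := mono (self_mem_Ici) (le_of_lt h) h
    rw [hval1] at this
    linarith

private lemma hdPhi1 (x : ℝ) (hx : 0 < x) :
    HasDerivAt (fun y => 4 * y * Real.log y - (Real.log y) ^ 2 - 4 * (y + 1) * Real.log ((y + 1) / 2))
      (4 * Real.log x - 2 * Real.log x / x - 4 * Real.log ((x + 1) / 2)) x := by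
  have h1 : HasDerivAt (fun y : ℝ => 4 * y * Real.log y) (4 * Real.log x + 4) x := by
    have : HasDerivAt (fun y : ℝ => y * Real.log y) (1 * Real.log x + x * x⁻¹) x :=
      (hasDerivAt_id x).mul (Real.hasDerivAt_log hx.ne')
    have h := this.const_mul 4
    convert h using 1
    all_goals try rfl
    · funext y; ring
    · field_simp
  have h2 : HasDerivAt (fun y : ℝ => (Real.log y) ^ 2) (2 * Real.log x * x⁻¹) x := by
    have := (Real.hasDerivAt_log hx.ne').pow 2
    simp at this; exact this
  have h3 : HasDerivAt (fun y : ℝ => 4 * (y + 1) * Real.log ((y + 1) / 2))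
      (4 * Real.log ((x + 1) / 2) + 4) x := by
    have hb : HasDerivAt (fun y : ℝ => 4 * (y + 1)) 4 x := by
      simpa using ((hasDerivAt_id x).add_const 1).const_mul 4
    have := hb.mul (hdLogHalf x hx)
    convert this using 1
    all_goals try rfl
    field_simp
  convert (h1.sub h2).sub h3 using 1
  all_goals try rfl
  field_simp
  ring

private lemma phi1_sign (x : ℝ) (hx : 0 < x) :
    (1 < x → 0 < 4 * x * Real.log x - (Real.log x) ^ 2 - 4 * (x + 1) * Real.log ((x + 1) / 2)) ∧
    (x < 1 → 4 * x * Real.log x - (Real.log x) ^ 2 - 4 * (x + 1) * Real.log ((x + 1) / 2) < 0) := by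
  have key : ∀ y : ℝ, 0 < y →
      deriv (fun y => 4 * y * Real.log y - (Real.log y) ^ 2 - 4 * (y + 1) * Real.log ((y + 1) / 2)) y
      = 4 * Real.log y - 2 * Real.log y / y - 4 * Real.log ((y + 1) / 2) :=
    fun y hy => (hdPhi1 y hy).deriv
  have hval1 : (fun y => 4 * y * Real.log y - (Real.log y) ^ 2
      - 4 * (y + 1) * Real.log ((y + 1) / 2)) 1 = 0 := by norm_num
  have mono1 : StrictMonoOn (fun y => 4 * y * Real.log y - (Real.log y) ^ 2
      - 4 * (y + 1) * Real.log ((y + 1) / 2)) (Ici 1) := by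
    apply strictMonoOn_of_deriv_pos (convex_Ici 1)
    · exact fun y hy => ((hdPhi1 y (lt_of_lt_of_le one_pos hy)).continuousAt).continuousWithinAt
    · intro y hy
      rw [interior_Ici] at hy
      have hy1 : (1:ℝ) < y := hy
      rw [key y (lt_trans one_pos hy1)]
      exact phi2_pos y (lt_trans one_pos hy1) (ne_of_gt hy1)
  have mono2 : StrictMonoOn (fun y => 4 * y * Real.log y - (Real.log y) ^ 2
      - 4 * (y + 1) * Real.log ((y + 1) / 2)) (Ioc 0 1) := by
    apply strictMonoOn_of_deriv_pos (convex_Ioc 0 1)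
    · exact fun y hy => ((hdPhi1 y hy.1).continuousAt).continuousWithinAt
    · intro y hy
      rw [interior_Ioc] at hy
      rw [key y hy.1]
      exact phi2_pos y hy.1 (ne_of_lt hy.2)
  constructor
  · intro h
    have := mono1 self_mem_Ici h.le h
    rw [hval1] at this
    linarith
  · intro h
    have := mono2 ⟨hx, h.le⟩ ⟨one_pos, le_refl 1⟩ h
    rw [hval1] at this
    linarith

private lemma hdPhi (x : ℝ) (hx : 0 < x) :
    HasDerivAt (fun y => 2 * y * (y + 1) * Real.log y - y * (Real.log y) ^ 2
        - 2 * (y + 1) ^ 2 * Real.log ((y + 1) / 2))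
      (4 * x * Real.log x - (Real.log x) ^ 2 - 4 * (x + 1) * Real.log ((x + 1) / 2)) x := by
  have h1 : HasDerivAt (fun y : ℝ => 2 * y * (y + 1) * Real.log y)
      ((4 * x + 2) * Real.log x + 2 * (x + 1)) x := by
    have hp : HasDerivAt (fun y : ℝ => 2 * y * (y + 1)) (4 * x + 2) x := by
      have h0 := ((hasDerivAt_id x).const_mul 2).mul ((hasDerivAt_id x).add_const 1)
      simp only [id_eq] at h0
      convert h0 using 1
      all_goals try rfl
      ring
    have := hp.mul (Real.hasDerivAt_log hx.ne')
    convert this using 1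
    all_goals try rfl
    field_simp
  have h2 : HasDerivAt (fun y : ℝ => y * (Real.log y) ^ 2)
      ((Real.log x) ^ 2 + 2 * Real.log x) x := by
    have hsq : HasDerivAt (fun y : ℝ => (Real.log y) ^ 2) (2 * Real.log x * x⁻¹) x := by
      have := (Real.hasDerivAt_log hx.ne').pow 2
      simp at this; exact this
    have := (hasDerivAt_id x).mul hsq
    convert this using 1
    all_goals try rfl
    simp only [id]; field_simp
    try ring
  have h3 : HasDerivAt (fun y : ℝ => 2 * (y + 1) ^ 2 * Real.log ((y + 1) / 2))
      (4 * (x + 1) * Real.log ((x + 1) / 2) + 2 * (x + 1)) x := by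
    have hp : HasDerivAt (fun y : ℝ => 2 * (y + 1) ^ 2) (4 * (x + 1)) x := by
      have h0 := (((hasDerivAt_id x).add_const 1).pow 2).const_mul 2
      simp only [id_eq] at h0
      convert h0 using 1
      all_goals try rfl
      try ring
    have := hp.mul (hdLogHalf x hx)
    convert this using 1
    all_goals try rfl
    field_simp
  convert (h1.sub h2).sub h3 using 1
  all_goals try rfl
  ring

private lemma Phi_pos (x : ℝ) (hx : 0 < x) (hx1 : x ≠ 1) :
    0 < 2 * x * (x + 1) * Real.log x - x * (Real.log x) ^ 2
      - 2 * (x + 1) ^ 2 * Real.log ((x + 1) / 2) := by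
  have key : ∀ y : ℝ, 0 < y →
      deriv (fun y => 2 * y * (y + 1) * Real.log y - y * (Real.log y) ^ 2
        - 2 * (y + 1) ^ 2 * Real.log ((y + 1) / 2)) y
      = 4 * y * Real.log y - (Real.log y) ^ 2 - 4 * (y + 1) * Real.log ((y + 1) / 2) :=
    fun y hy => (hdPhi y hy).deriv
  have hval1 : (fun y => 2 * y * (y + 1) * Real.log y - y * (Real.log y) ^ 2
      - 2 * (y + 1) ^ 2 * Real.log ((y + 1) / 2)) 1 = 0 := by norm_num
  rcases lt_or_gt_of_ne hx1 with h | h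
  · have anti : StrictAntiOn (fun y => 2 * y * (y + 1) * Real.log y - y * (Real.log y) ^ 2
        - 2 * (y + 1) ^ 2 * Real.log ((y + 1) / 2)) (Ioc 0 1) := by
      apply strictAntiOn_of_deriv_neg (convex_Ioc 0 1)
      · exact fun y hy => ((hdPhi y hy.1).continuousAt).continuousWithinAt
      · intro y hy
        rw [interior_Ioc] at hy
        rw [key y hy.1]
        exact (phi1_sign y hy.1).2 hy.2
    have := anti ⟨hx, h.le⟩ ⟨one_pos, le_refl 1⟩ h
    rw [hval1] at this
    linarith
  · have mono : StrictMonoOn (fun y => 2 * y * (y + 1) * Real.log y - y * (Real.log y) ^ 2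
        - 2 * (y + 1) ^ 2 * Real.log ((y + 1) / 2)) (Ici 1) := by
      apply strictMonoOn_of_deriv_pos (convex_Ici 1)
      · exact fun y hy => ((hdPhi y (lt_of_lt_of_le one_pos hy)).continuousAt).continuousWithinAt
      · intro y hy
        rw [interior_Ici] at hy
        have hy1 : (1:ℝ) < y := hy
        rw [key y (lt_trans one_pos hy1)]
        exact (phi1_sign y (lt_trans one_pos hy1)).1 hy1
    have := mono self_mem_Ici h.le h
    rw [hval1] at this
    linarith




private lemma key_ineq_s17 (u v : ℝ) (hu : 0 < u) (hv : 0 < v) (huv : u ≠ v) :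
    u * v * (Real.log u - Real.log v) ^ 2 / (u + v) ^ 2
      - 2 * (u * Real.log u + v * Real.log v) / (u + v) + 2 * Real.log ((u + v) / 2) < 0 := by
  set x := u / v with hxdef
  have hx : 0 < x := div_pos hu hv
  have hx1 : x ≠ 1 := by
    intro h
    apply huv
    rw [hxdef, div_eq_one_iff_eq hv.ne'] at h
    exact h
  have hu' : u = x * v := by rw [hxdef]; field_simp
  have hlogx : Real.log x = Real.log u - Real.log v := Real.log_div hu.ne' hv.ne'
  have hlogu : Real.log u = Real.log x + Real.log v := by rw [hlogx]; ring
  have hlogA : Real.log ((u + v) / 2) = Real.log ((x + 1) / 2) + Real.log v := by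
    rw [← Real.log_mul (by positivity) hv.ne']
    congr 1
    rw [hu']
    field_simp
  have hPhi := Phi_pos x hx hx1
  have hv1 : v ≠ 0 := hv.ne'
  have hx1' : x + 1 ≠ 0 := by positivity
  have hLHS : u * v * (Real.log u - Real.log v) ^ 2 / (u + v) ^ 2
      - 2 * (u * Real.log u + v * Real.log v) / (u + v) + 2 * Real.log ((u + v) / 2)
      = -(2 * x * (x + 1) * Real.log x - x * (Real.log x) ^ 2
          - 2 * (x + 1) ^ 2 * Real.log ((x + 1) / 2)) / (x + 1) ^ 2 := by
    rw [hlogu, hlogA, hu']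
    field_simp
    ring
  rw [hLHS]
  apply div_neg_of_neg_of_pos
  · linarith
  · positivity

private noncomputable def Af (la lb r : ℝ) : ℝ := (Real.exp (r * la) + Real.exp (r * lb)) / 2
private noncomputable def A1f (la lb r : ℝ) : ℝ :=
  (la * Real.exp (r * la) + lb * Real.exp (r * lb)) / 2
private noncomputable def A2f (la lb r : ℝ) : ℝ :=
  (la ^ 2 * Real.exp (r * la) + lb ^ 2 * Real.exp (r * lb)) / 2
private noncomputable def Lam (la lb r : ℝ) : ℝ := Real.log (Af la lb r)
private noncomputable def Lam1 (la lb r : ℝ) : ℝ := A1f la lb r / Af la lb r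
private noncomputable def Lam2 (la lb r : ℝ) : ℝ :=
  (A2f la lb r * Af la lb r - (A1f la lb r) ^ 2) / (Af la lb r) ^ 2

private lemma Af_pos (la lb r : ℝ) : 0 < Af la lb r := by
  unfold Af; positivity

private lemma hdExp (c r : ℝ) :
    HasDerivAt (fun r : ℝ => Real.exp (r * c)) (c * Real.exp (r * c)) r := by
  have := ((hasDerivAt_id r).mul_const c).exp
  simpa [mul_comm] using this

private lemma hdAf (la lb r : ℝ) : HasDerivAt (Af la lb) (A1f la lb r) r := by
  have := ((hdExp la r).add (hdExp lb r)).div_const 2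
  unfold Af A1f
  convert this using 1
  all_goals try rfl

private lemma hdA1f (la lb r : ℝ) : HasDerivAt (A1f la lb) (A2f la lb r) r := by
  have := (((hdExp la r).const_mul la).add ((hdExp lb r).const_mul lb)).div_const 2
  unfold A1f A2f
  convert this using 1
  all_goals try rfl
  ring

private lemma hdLam (la lb r : ℝ) : HasDerivAt (Lam la lb) (Lam1 la lb r) r := by
  have := (hdAf la lb r).log (Af_pos la lb r).ne'
  unfold Lam Lam1
  exact this

private lemma hdLam1 (la lb r : ℝ) : HasDerivAt (Lam1 la lb) (Lam2 la lb r) r := by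
  have := (hdA1f la lb r).div (hdAf la lb r) (Af_pos la lb r).ne'
  unfold Lam1 Lam2
  convert this using 1
  all_goals try rfl
  ring

private lemma Lam2_pos (la lb : ℝ) (hlab : la ≠ lb) (r : ℝ) : 0 < Lam2 la lb r := by
  have hnum : A2f la lb r * Af la lb r - (A1f la lb r) ^ 2
      = (la - lb) ^ 2 * (Real.exp (r * la) * Real.exp (r * lb)) / 4 := by
    unfold Af A1f A2f; ring
  have hd : (la - lb) ≠ 0 := sub_ne_zero.mpr hlab
  have h1 : 0 < (la - lb) ^ 2 := lt_of_le_of_ne (sq_nonneg _) (Ne.symm (pow_ne_zero 2 hd))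
  unfold Lam2
  rw [hnum]
  have := Af_pos la lb r
  positivity

private lemma Lam_zero (la lb : ℝ) : Lam la lb 0 = 0 := by
  unfold Lam Af; norm_num

private lemma Lam1_zero (la lb : ℝ) : Lam1 la lb 0 = (la + lb) / 2 := by
  unfold Lam1 A1f Af; norm_num

-- V r := r * Lam1 r - Lam r is positive for r < 0
private lemma V_pos (la lb : ℝ) (hlab : la ≠ lb) {r : ℝ} (hr : r < 0) :
    0 < r * Lam1 la lb r - Lam la lb r := by
  have anti : StrictAntiOn (fun r => r * Lam1 la lb r - Lam la lb r) (Iic 0) := by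
    apply strictAntiOn_of_deriv_neg (convex_Iic 0)
    · intro y _
      exact (((hasDerivAt_id y).mul (hdLam1 la lb y)).sub (hdLam la lb y)).continuousAt.continuousWithinAt
    · intro y hy
      rw [interior_Iic] at hy
      have hd : HasDerivAt (fun r => r * Lam1 la lb r - Lam la lb r) (y * Lam2 la lb y) y := by
        have h0 := ((hasDerivAt_id y).mul (hdLam1 la lb y)).sub (hdLam la lb y)
        simp only [id_eq] at h0
        convert h0 using 1
        all_goals try rfl
        ring
      rw [hd.deriv]
      exact mul_neg_of_neg_of_pos hy (Lam2_pos la lb hlab y)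
  have := anti (mem_Iic.mpr hr.le) (mem_Iic.mpr (le_refl 0)) hr
  simpa [Lam_zero] using this

-- L r := Lam r / r is strictly monotone on (-∞, 0)
private lemma L_mono (la lb : ℝ) (hlab : la ≠ lb) :
    StrictMonoOn (fun r => Lam la lb r / r) (Iio 0) := by
  apply strictMonoOn_of_deriv_pos (convex_Iio 0)
  · intro y hy
    exact ((hdLam la lb y).div (hasDerivAt_id y) (ne_of_lt hy)).continuousAt.continuousWithinAt
  · intro y hy
    rw [interior_Iio] at hy
    have hd : HasDerivAt (fun r => Lam la lb r / r)
        ((Lam1 la lb y * y - Lam la lb y * 1) / y ^ 2) y :=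
      (hdLam la lb y).div (hasDerivAt_id y) (ne_of_lt hy)
    rw [hd.deriv]
    apply div_pos
    · have := V_pos la lb hlab hy
      linarith [this]
    · exact lt_of_le_of_ne (sq_nonneg y) (Ne.symm (pow_ne_zero 2 (ne_of_lt hy)))

private noncomputable def L1f (la lb r : ℝ) : ℝ := (Lam1 la lb r * r - Lam la lb r) / r ^ 2
private noncomputable def L2f (la lb r : ℝ) : ℝ :=
  (Lam2 la lb r * r ^ 2 - 2 * (Lam1 la lb r * r - Lam la lb r)) / r ^ 3
private noncomputable def Mff (la lb r : ℝ) : ℝ := Real.exp (Lam la lb r / r)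
private noncomputable def Gff (la lb : ℝ) : ℝ := Real.exp ((la + lb) / 2)
private noncomputable def Wf (la lb r : ℝ) : ℝ :=
  r * (Mff la lb r * L1f la lb r) - Mff la lb r + Gff la lb

private lemma hdMff (la lb : ℝ) {r : ℝ} (hr : r ≠ 0) :
    HasDerivAt (Mff la lb) (Mff la lb r * L1f la lb r) r := by
  have h0 : HasDerivAt (fun r => Lam la lb r / r) (L1f la lb r) r := by
    have := (hdLam la lb r).div (hasDerivAt_id r) hr
    simp only [id_eq] at this
    unfold L1f
    convert this using 1
    all_goals try rfl
    ring
  exact h0.exp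

private lemma hdL1f (la lb : ℝ) {r : ℝ} (hr : r ≠ 0) :
    HasDerivAt (L1f la lb) (L2f la lb r) r := by
  have h0 := ((hdLam1 la lb r).mul (hasDerivAt_id r)).sub (hdLam la lb r)
  simp only [id_eq] at h0
  have h1 := h0.div (hasDerivAt_pow 2 r) (pow_ne_zero 2 hr)
  unfold L1f L2f
  convert h1 using 1
  all_goals try rfl
  have h2 : (2:ℕ) - 1 = 1 := rfl
  rw [h2]
  simp only [Pi.mul_apply, Pi.sub_apply, id]
  field_simp
  ring

private lemma N_neg (la lb : ℝ) (hlab : la ≠ lb) {r : ℝ} (hr : r ≠ 0) :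
    Lam2 la lb r * r ^ 2 - 2 * (Lam1 la lb r * r - Lam la lb r) < 0 := by
  have hne : Real.exp (r * la) ≠ Real.exp (r * lb) := by
    intro h
    rw [Real.exp_eq_exp] at h
    exact hlab (mul_left_cancel₀ hr h)
  have hk := key_ineq_s17 (Real.exp (r * la)) (Real.exp (r * lb))
    (Real.exp_pos _) (Real.exp_pos _) hne
  have heq : Lam2 la lb r * r ^ 2 - 2 * (Lam1 la lb r * r - Lam la lb r)
      = Real.exp (r * la) * Real.exp (r * lb)
          * (Real.log (Real.exp (r * la)) - Real.log (Real.exp (r * lb))) ^ 2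
          / (Real.exp (r * la) + Real.exp (r * lb)) ^ 2
        - 2 * (Real.exp (r * la) * Real.log (Real.exp (r * la))
            + Real.exp (r * lb) * Real.log (Real.exp (r * lb)))
          / (Real.exp (r * la) + Real.exp (r * lb))
        + 2 * Real.log ((Real.exp (r * la) + Real.exp (r * lb)) / 2) := by
    simp only [Lam2, Lam1, Lam, A2f, A1f, Af, Real.log_exp]
    have e1 : (0:ℝ) < Real.exp (r * la) := Real.exp_pos _
    have e2 : (0:ℝ) < Real.exp (r * lb) := Real.exp_pos _
    have hs : Real.exp (r * la) + Real.exp (r * lb) ≠ 0 := by positivity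
    field_simp
    ring
  rw [heq]
  exact hk

private lemma L2f_pos (la lb : ℝ) (hlab : la ≠ lb) {r : ℝ} (hr : r < 0) :
    0 < L2f la lb r := by
  unfold L2f
  apply div_pos_of_neg_of_neg (N_neg la lb hlab (ne_of_lt hr))
  exact Odd.pow_neg (by decide) hr

private lemma hdWf (la lb : ℝ) {r : ℝ} (hr : r ≠ 0) :
    HasDerivAt (Wf la lb)
      (r * (Mff la lb r * (L1f la lb r) ^ 2 + Mff la lb r * L2f la lb r)) r := by
  have hprod := (hdMff la lb hr).mul (hdL1f la lb hr)
  have h0 := (((hasDerivAt_id r).mul hprod).sub (hdMff la lb hr)).add_const (Gff la lb)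
  simp only [id_eq] at h0
  unfold Wf
  convert h0 using 1
  all_goals try rfl
  simp only [Pi.mul_apply, id]
  ring

private lemma Wf_anti (la lb : ℝ) (hlab : la ≠ lb) : StrictAntiOn (Wf la lb) (Iio 0) := by
  apply strictAntiOn_of_deriv_neg (convex_Iio 0)
  · exact fun y hy => (hdWf la lb (ne_of_lt hy)).continuousAt.continuousWithinAt
  · intro y hy
    rw [interior_Iio] at hy
    rw [(hdWf la lb (ne_of_lt hy)).deriv]
    apply mul_neg_of_neg_of_pos hy
    have h1 : 0 < Mff la lb y * L2f la lb y :=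
      mul_pos (Real.exp_pos _) (L2f_pos la lb hlab hy)
    have h2 : 0 ≤ Mff la lb y * (L1f la lb y) ^ 2 :=
      mul_nonneg (Real.exp_pos _).le (sq_nonneg _)
    linarith

private lemma Wf_tendsto (la lb : ℝ) :
    Filter.Tendsto (Wf la lb) (nhdsWithin 0 (Iio 0)) (nhds 0) := by
  have hslope := hasDerivAt_iff_tendsto_slope.mp (hdLam la lb 0)
  have hslope' : Filter.Tendsto (fun r => Lam la lb r / r) (nhdsWithin 0 {(0:ℝ)}ᶜ)
      (nhds (Lam1 la lb 0)) := by
    apply hslope.congr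
    intro x
    rw [slope_def_field, Lam_zero]
    simp
  have hmono : nhdsWithin (0:ℝ) (Iio 0) ≤ nhdsWithin 0 {(0:ℝ)}ᶜ :=
    nhdsWithin_mono 0 (fun x hx => ne_of_lt hx)
  have hL := hslope'.mono_left hmono
  have hMf : Filter.Tendsto (Mff la lb) (nhdsWithin 0 (Iio 0))
      (nhds (Real.exp (Lam1 la lb 0))) :=
    (Real.continuous_exp.continuousAt.tendsto).comp hL
  have hLam1c : Filter.Tendsto (Lam1 la lb) (nhdsWithin 0 (Iio 0))
      (nhds (Lam1 la lb 0)) :=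
    ((hdLam1 la lb 0).continuousAt.tendsto).mono_left nhdsWithin_le_nhds
  have htar := ((hMf.mul (hLam1c.sub hL)).sub hMf).add_const (Gff la lb)
  have hval : Real.exp (Lam1 la lb 0) * (Lam1 la lb 0 - Lam1 la lb 0)
      - Real.exp (Lam1 la lb 0) + Gff la lb = 0 := by
    rw [Lam1_zero]
    unfold Gff
    ring
  rw [hval] at htar
  apply htar.congr'
  filter_upwards [self_mem_nhdsWithin] with y (hy : y ∈ Iio 0)
  have hy' : y ≠ 0 := ne_of_lt hy
  unfold Wf Mff L1f
  field_simp

private lemma Wf_pos (la lb : ℝ) (hlab : la ≠ lb) {r : ℝ} (hr : r < 0) :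
    0 < Wf la lb r := by
  have hge : ∀ x : ℝ, x < 0 → 0 ≤ Wf la lb x := by
    intro x hx
    refine le_of_tendsto (Wf_tendsto la lb) ?_
    filter_upwards [Ioo_mem_nhdsLT hx] with y hy
    exact (Wf_anti la lb hlab hx (hy.2 : y ∈ Iio 0) hy.1).le
  have h2 := Wf_anti la lb hlab hr (mem_Iio.mpr (by linarith))
    (by linarith : r < r / 2)
  have := hge (r / 2) (by linarith)
  linarith

private lemma sigma_mono (la lb : ℝ) (hlab : la ≠ lb) :
    StrictMonoOn (fun r => (Mff la lb r - Gff la lb) / r) (Iio 0) := by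
  apply strictMonoOn_of_deriv_pos (convex_Iio 0)
  · intro y hy
    exact (((hdMff la lb (ne_of_lt hy)).sub_const (Gff la lb)).div
      (hasDerivAt_id y) (ne_of_lt hy)).continuousAt.continuousWithinAt
  · intro y hy
    rw [interior_Iio] at hy
    have hd := ((hdMff la lb (ne_of_lt hy)).sub_const (Gff la lb)).div
      (hasDerivAt_id y) (ne_of_lt hy)
    simp only [id_eq] at hd
    rw [show (fun r => (Mff la lb r - Gff la lb) / r) = ((fun x => Mff la lb x - Gff la lb) / id) from rfl, hd.deriv]
    have hnum : Mff la lb y * L1f la lb y * y - (Mff la lb y - Gff la lb) * 1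
        = Wf la lb y := by
      unfold Wf
      ring
    rw [hnum]
    exact div_pos (Wf_pos la lb hlab hy)
      (lt_of_le_of_ne (sq_nonneg y) (Ne.symm (pow_ne_zero 2 (ne_of_lt hy))))

private lemma amgm_exp (p q : ℝ) (hpq : p ≠ q) :
    Real.exp ((p + q) / 2) < (Real.exp p + Real.exp q) / 2 := by
  have h1 : Real.exp (p / 2) ≠ Real.exp (q / 2) := by
    intro h
    rw [Real.exp_eq_exp] at h
    exact hpq (by linarith)
  have h2 : 0 < (Real.exp (p / 2) - Real.exp (q / 2)) ^ 2 :=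
    lt_of_le_of_ne (sq_nonneg _) (Ne.symm (pow_ne_zero 2 (sub_ne_zero.mpr h1)))
  have e1 : Real.exp p = Real.exp (p / 2) * Real.exp (p / 2) := by
    rw [← Real.exp_add]; norm_num
  have e2 : Real.exp q = Real.exp (q / 2) * Real.exp (q / 2) := by
    rw [← Real.exp_add]; norm_num
  have e3 : Real.exp ((p + q) / 2) = Real.exp (p / 2) * Real.exp (q / 2) := by
    rw [← Real.exp_add]; ring_nf
  rw [e1, e2, e3]
  nlinarith [h2]

private lemma Mff_lt_G (la lb : ℝ) (hlab : la ≠ lb) {t : ℝ} (ht : t < 0) :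
    Mff la lb t < Gff la lb := by
  have hne : t * la ≠ t * lb := fun h => hlab (mul_left_cancel₀ (ne_of_lt ht) h)
  have hAM := amgm_exp (t * la) (t * lb) hne
  have hAf : Real.exp ((t * la + t * lb) / 2) < Af la lb t := hAM
  have hlog : (t * la + t * lb) / 2 < Lam la lb t := by
    have := Real.log_lt_log (Real.exp_pos _) hAf
    rwa [Real.log_exp] at this
  have hdiv : Lam la lb t / t < (la + lb) / 2 := by
    rw [div_lt_iff_of_neg ht]
    nlinarith [hlog]
  exact Real.exp_lt_exp.mpr hdiv

/-- Corollary 3.2(a). -/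
theorem ratio_bounds_p_one_neg (s t : ℝ) (hs : s ≠ 0) (ht : t ≠ 0)
    (hst : s < t) (ht0 : t < 0) :
    ∀ a b : ℝ, 0 < a → 0 < b → a ≠ b →
      1 < (powerMean s a b - geomMean a b) / (powerMean t a b - geomMean a b) ∧
      (powerMean s a b - geomMean a b) / (powerMean t a b - geomMean a b) < s / t := by
  intro a b ha hb hab
  set la := Real.log a with hla
  set lb := Real.log b with hlb
  have hs0 : s < 0 := lt_trans hst ht0
  have hlab : la ≠ lb := by
    intro h
    apply hab
    rw [← Real.exp_log ha, ← Real.exp_log hb, ← hla, ← hlb, h]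
  -- identify powerMean with Mff
  have hM : ∀ r : ℝ, r ≠ 0 → powerMean r a b = Mff la lb r := by
    intro r hr
    unfold powerMean Mff Lam Af
    rw [Real.rpow_def_of_pos ha, Real.rpow_def_of_pos hb]
    rw [Real.rpow_def_of_pos (by positivity)]
    rw [mul_comm la r, mul_comm lb r, mul_one_div]
  -- identify geomMean with Gff
  have hG : geomMean a b = Gff la lb := by
    unfold geomMean Gff
    have hab' : a * b = Real.exp (la + lb) := by
      rw [Real.exp_add, hla, hlb, Real.exp_log ha, Real.exp_log hb]
    rw [hab']
    have : Real.exp (la + lb) = Real.exp ((la + lb) / 2) ^ 2 := by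
      rw [sq, ← Real.exp_add]
      ring_nf
    rw [this, Real.sqrt_sq (Real.exp_pos _).le]
  rw [hM s hs, hM t ht, hG]
  -- key facts
  have hYneg : Mff la lb t - Gff la lb < 0 := sub_neg.mpr (Mff_lt_G la lb hlab ht0)
  have hXY : Mff la lb s < Mff la lb t := by
    have := L_mono la lb hlab (mem_Iio.mpr hs0) (mem_Iio.mpr ht0) hst
    exact Real.exp_lt_exp.mpr this
  have hXneg : Mff la lb s - Gff la lb < 0 := by
    have := Mff_lt_G la lb hlab ht0
    simp only [sub_neg]
    linarith
  have hslope := sigma_mono la lb hlab (mem_Iio.mpr hs0) (mem_Iio.mpr ht0) hst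
  simp only at hslope
  set X := Mff la lb s - Gff la lb with hX
  set Y := Mff la lb t - Gff la lb with hY
  have hX2 : X < Y := by rw [hX, hY]; linarith
  constructor
  · rw [show X / Y = (-X) / (-Y) by rw [neg_div_neg_eq]]
    rw [one_lt_div (by linarith : (0:ℝ) < -Y)]
    linarith
  · have hcross : X * t < Y * s := by
      have h1 : X / s < Y / t := hslope
      rw [show X / s = (-X) / (-s) by rw [neg_div_neg_eq],
        show Y / t = (-Y) / (-t) by rw [neg_div_neg_eq],
        div_lt_div_iff₀ (by linarith : (0:ℝ) < -s) (by linarith : (0:ℝ) < -t)] at h1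
      nlinarith [h1]
    rw [show X / Y = (-X) / (-Y) by rw [neg_div_neg_eq],
      show s / t = (-s) / (-t) by rw [neg_div_neg_eq],
      div_lt_div_iff₀ (by linarith : (0:ℝ) < -Y) (by linarith : (0:ℝ) < -t)]
    nlinarith [hcross]
end

section
/- Let s and t be nonzero real numbers with s < 0 < t ≤ 3/2 − s. Then for all positive real numbers a ≠ b, s/t < (M_s(a,b) − G(a,b))/(M_t(a,b) − G(a,b)) < 0. -/
section RatioBoundsAux

open Real Set

set_option linter.unreachableTactic false
set_option linter.unnecessarySeqFocus false
set_option linter.unusedTactic false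

private lemma nonneg_on_Ici (f f' : ℝ → ℝ)
    (hd : ∀ x, HasDerivAt f (f' x) x) (h0 : f 0 = 0)
    (hf' : ∀ x, 0 < x → 0 ≤ f' x) {x : ℝ} (hx : 0 ≤ x) : 0 ≤ f x := by
  have hmono : MonotoneOn f (Set.Ici (0:ℝ)) :=
    monotoneOn_of_deriv_nonneg (convex_Ici 0)
      (fun y _ => (hd y).continuousAt.continuousWithinAt)
      (fun y _ => (hd y).differentiableAt.differentiableWithinAt)
      (fun y hy => by
        rw [(hd y).deriv]
        exact hf' y (by rwa [interior_Ici] at hy))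
  have h := hmono Set.self_mem_Ici hx hx
  rwa [h0] at h

private lemma pos_on_Ioi (f f' : ℝ → ℝ)
    (hd : ∀ x, HasDerivAt f (f' x) x) (h0 : f 0 = 0)
    (hf' : ∀ x, 0 < x → 0 < f' x) {x : ℝ} (hx : 0 < x) : 0 < f x := by
  have hmono : StrictMonoOn f (Set.Ici (0:ℝ)) :=
    strictMonoOn_of_deriv_pos (convex_Ici 0)
      (fun y _ => (hd y).continuousAt.continuousWithinAt)
      (fun y hy => by
        rw [(hd y).deriv]
        exact hf' y (by rwa [interior_Ici] at hy))
  have h := hmono Set.self_mem_Ici hx.le hx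
  rwa [h0] at h

/-- P1: sinh x < x cosh x for x > 0. -/
private lemma xcosh_sub_sinh_pos {x : ℝ} (hx : 0 < x) : 0 < x * cosh x - sinh x := by
  refine pos_on_Ioi (fun x => x * cosh x - sinh x) (fun x => x * sinh x) (fun x => ?_)
    (by simp) (fun x hx => by (try dsimp only); positivity) hx
  have h := ((hasDerivAt_id x).mul (Real.hasDerivAt_cosh x)).sub (Real.hasDerivAt_sinh x)
  refine h.congr_deriv (Eq.symm ?_)
  simp only [id_eq]
  ring

/-- P2: x ≤ sinh x * cosh x for 0 ≤ x. -/
private lemma sinhcosh_sub_self_nonneg {x : ℝ} (hx : 0 ≤ x) : 0 ≤ sinh x * cosh x - x := by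
  refine nonneg_on_Ici (fun x => sinh x * cosh x - x)
    (fun x => cosh x * cosh x + sinh x * sinh x - 1) (fun x => ?_)
    (by simp) (fun x hx => by (try dsimp only); nlinarith [Real.one_le_cosh x, mul_self_nonneg (sinh x)]) hx
  have h := ((Real.hasDerivAt_sinh x).mul (Real.hasDerivAt_cosh x)).sub (hasDerivAt_id x)
  exact h

/-- P3: K := 2 log cosh x - x sinh x / cosh x ≥ 0 for 0 ≤ x. -/
private lemma two_logcosh_sub_xtanh_nonneg {x : ℝ} (hx : 0 ≤ x) :
    0 ≤ 2 * log (cosh x) - x * sinh x / cosh x := by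
  refine nonneg_on_Ici (fun x => 2 * log (cosh x) - x * sinh x / cosh x)
    (fun x => (sinh x * cosh x - x) / cosh x ^ 2) (fun x => ?_)
    (by simp) (fun x hx => div_nonneg (sinhcosh_sub_self_nonneg hx.le) (by positivity)) hx
  have hc := (Real.cosh_pos x).ne'
  have h1 : HasDerivAt (fun x => log (cosh x)) (sinh x / cosh x) x :=
    (Real.hasDerivAt_cosh x).log hc
  have h2 : HasDerivAt (fun x : ℝ => x * sinh x) (1 * sinh x + x * cosh x) x :=
    (hasDerivAt_id x).mul (Real.hasDerivAt_sinh x)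
  have h3 := h2.div (Real.hasDerivAt_cosh x) hc
  have h := (h1.const_mul 2).sub h3
  refine h.congr_deriv (Eq.symm ?_)
  have hid : cosh x ^ 2 - sinh x ^ 2 = 1 := by
    have := Real.sinh_sq x; linarith
  field_simp
  linear_combination x * hid

/-- P4: 3x + 2x sinh² x - 3 sinh x cosh x > 0 for x > 0. -/
private lemma F2_pos {x : ℝ} (hx : 0 < x) :
    0 < 3 * x + 2 * x * sinh x ^ 2 - 3 * (sinh x * cosh x) := by
  refine pos_on_Ioi (fun x => 3 * x + 2 * x * sinh x ^ 2 - 3 * (sinh x * cosh x))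
    (fun x => 4 * sinh x * (x * cosh x - sinh x)) (fun x => ?_)
    (by simp) (fun x hx => by
      try dsimp only
      have h1 : 0 < sinh x := by positivity
      have h2 := xcosh_sub_sinh_pos hx
      positivity) hx
  have hid : cosh x ^ 2 - sinh x ^ 2 = 1 := by have := Real.sinh_sq x; linarith
  have h1 : HasDerivAt (fun x : ℝ => 3 * x) 3 x := by
    simpa using (hasDerivAt_id x).const_mul (3:ℝ)
  have h2 : HasDerivAt (fun x : ℝ => 2 * x * sinh x ^ 2)
      (2 * sinh x ^ 2 + 2 * x * (2 * sinh x * cosh x)) x := by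
    have ha : HasDerivAt (fun x : ℝ => 2 * x) 2 x := by
      simpa using (hasDerivAt_id x).const_mul (2:ℝ)
    have hb : HasDerivAt (fun x : ℝ => sinh x ^ 2) (2 * sinh x * cosh x) x := by
      have := (Real.hasDerivAt_sinh x).pow 2
      refine this.congr_deriv (Eq.symm ?_) <;> (try push_cast) <;> (try ring)
    have := ha.mul hb
    refine this.congr_deriv (Eq.symm ?_) <;> (try ring)
  have h3 : HasDerivAt (fun x : ℝ => 3 * (sinh x * cosh x))
      (3 * (cosh x * cosh x + sinh x * sinh x)) x := by
    have := ((Real.hasDerivAt_sinh x).mul (Real.hasDerivAt_cosh x)).const_mul (3:ℝ)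
    refine this.congr_deriv (Eq.symm ?_) <;> (try ring)
  have h := (h1.add h2).sub h3
  refine h.congr_deriv (Eq.symm ?_)
  linear_combination (3 : ℝ) * hid

/-- P5: H := 2x sinh x / cosh x - 2 log cosh x - x²/cosh² x ≥ 0 for 0 ≤ x. -/
private lemma H_nonneg {x : ℝ} (hx : 0 ≤ x) :
    0 ≤ 2 * x * sinh x / cosh x - 2 * log (cosh x) - x ^ 2 / cosh x ^ 2 := by
  refine nonneg_on_Ici
    (fun x => 2 * x * sinh x / cosh x - 2 * log (cosh x) - x ^ 2 / cosh x ^ 2)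
    (fun x => 2 * x ^ 2 * sinh x / cosh x ^ 3) (fun x => ?_)
    (by simp) (fun x hx => by (try dsimp only); positivity) hx
  have hc := (Real.cosh_pos x).ne'
  have hc2 : cosh x ^ 2 ≠ 0 := pow_ne_zero 2 hc
  have hid : cosh x ^ 2 - sinh x ^ 2 = 1 := by have := Real.sinh_sq x; linarith
  have hnum : HasDerivAt (fun x : ℝ => 2 * x * sinh x) (2 * sinh x + 2 * x * cosh x) x := by
    have ha : HasDerivAt (fun x : ℝ => 2 * x) 2 x := by
      simpa using (hasDerivAt_id x).const_mul (2:ℝ)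
    have := ha.mul (Real.hasDerivAt_sinh x)
    refine this.congr_deriv (Eq.symm ?_) <;> (try ring)
  have h1 := hnum.div (Real.hasDerivAt_cosh x) hc
  have h2 : HasDerivAt (fun x => 2 * log (cosh x)) (2 * (sinh x / cosh x)) x :=
    ((Real.hasDerivAt_cosh x).log hc).const_mul 2
  have hsq : HasDerivAt (fun x : ℝ => x ^ 2) (2 * x) x := by
    have := hasDerivAt_pow 2 x
    refine this.congr_deriv (Eq.symm ?_) <;> (try push_cast) <;> (try ring)
  have hcsq : HasDerivAt (fun x : ℝ => cosh x ^ 2) (2 * cosh x * sinh x) x := by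
    have := (Real.hasDerivAt_cosh x).pow 2
    refine this.congr_deriv (Eq.symm ?_) <;> (try push_cast) <;> (try ring)
  have h3 := hsq.div hcsq hc2
  have h := (h1.sub h2).sub h3
  refine h.congr_deriv (Eq.symm ?_)
  field_simp
  linear_combination (-(x * cosh x)) * hid

/-- P6: A := (x sinh x / cosh x - log cosh x)/x² is antitone on (0,∞). -/
private lemma A_hasDeriv {x : ℝ} (hx : x ≠ 0) :
    HasDerivAt (fun x => (x * sinh x / cosh x - log (cosh x)) / x ^ 2)
      (-(2 * x * sinh x / cosh x - 2 * log (cosh x) - x ^ 2 / cosh x ^ 2) / x ^ 3) x := by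
  have hc := (Real.cosh_pos x).ne'
  have hid : cosh x ^ 2 - sinh x ^ 2 = 1 := by have := Real.sinh_sq x; linarith
  have hnum : HasDerivAt (fun x : ℝ => x * sinh x) (1 * sinh x + x * cosh x) x :=
    (hasDerivAt_id x).mul (Real.hasDerivAt_sinh x)
  have h1 := hnum.div (Real.hasDerivAt_cosh x) hc
  have h2 := h1.sub ((Real.hasDerivAt_cosh x).log hc)
  have hsq : HasDerivAt (fun x : ℝ => x ^ 2) (2 * x) x := by
    have := hasDerivAt_pow 2 x
    refine this.congr_deriv (Eq.symm ?_) <;> (try push_cast) <;> (try ring)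
  have h := h2.div hsq (pow_ne_zero 2 hx)
  refine h.congr_deriv (Eq.symm ?_)
  simp only [Pi.div_apply, Pi.sub_apply]
  field_simp
  linear_combination (-(x ^ 2)) * hid

private lemma A_antitone : AntitoneOn (fun x => (x * sinh x / cosh x - log (cosh x)) / x ^ 2)
    (Set.Ioi (0:ℝ)) := by
  refine antitoneOn_of_deriv_nonpos (convex_Ioi 0)
    (fun y hy => ((A_hasDeriv (ne_of_gt hy)).continuousAt).continuousWithinAt)
    (fun y hy => by
      rw [interior_Ioi] at hy
      exact ((A_hasDeriv (ne_of_gt hy)).differentiableAt).differentiableWithinAt)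
    (fun y hy => ?_)
  rw [interior_Ioi] at hy
  have hy' : (0:ℝ) < y := hy
  rw [(A_hasDeriv (ne_of_gt hy')).deriv]
  have hH := H_nonneg (le_of_lt hy')
  have : (0:ℝ) < y ^ 3 := by positivity
  exact div_nonpos_of_nonpos_of_nonneg (by linarith) this.le

private lemma sinh_pos' {x : ℝ} (hx : 0 < x) : 0 < sinh x := by positivity

/-- Derivative of log ∘ tanh written with sinh/cosh. -/
private lemma hasDerivAt_logtanh {x : ℝ} (hx : 0 < x) :
    HasDerivAt (fun x => log (sinh x / cosh x)) (1 / (sinh x * cosh x)) x := by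
  have hc := (Real.cosh_pos x).ne'
  have hs := (sinh_pos' hx).ne'
  have hid : cosh x ^ 2 - sinh x ^ 2 = 1 := by have := Real.sinh_sq x; linarith
  have hq := (Real.hasDerivAt_sinh x).div (Real.hasDerivAt_cosh x) hc
  have h := hq.log (div_ne_zero hs hc)
  refine h.congr_deriv (Eq.symm ?_)
  simp only [Pi.div_apply]
  field_simp
  linear_combination (-1 : ℝ) * hid

/-- Derivative of  w ↦ log (cosh w) / w. -/
private lemma hasDerivAt_chat {x : ℝ} (hx : x ≠ 0) :
    HasDerivAt (fun x => log (cosh x) / x)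
      ((x * sinh x / cosh x - log (cosh x)) / x ^ 2) x := by
  have hc := (Real.cosh_pos x).ne'
  have h := ((Real.hasDerivAt_cosh x).log hc).div (hasDerivAt_id x) hx
  refine h.congr_deriv (Eq.symm ?_)
  simp only [id_eq]
  field_simp

/-- Monotonicity of Λ = log x - log tanh x on (0,∞). -/
private lemma Lambda_mono : MonotoneOn (fun x => log x - log (sinh x / cosh x))
    (Set.Ioi (0:ℝ)) := by
  have hD : ∀ x : ℝ, 0 < x → HasDerivAt (fun x => log x - log (sinh x / cosh x))
      ((sinh x * cosh x - x) / (x * (sinh x * cosh x))) x := by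
    intro x hx
    have h := (Real.hasDerivAt_log hx.ne').sub (hasDerivAt_logtanh hx)
    refine h.congr_deriv (Eq.symm ?_)
    have hs := (sinh_pos' hx).ne'
    have hc := (Real.cosh_pos x).ne'
    field_simp
  refine monotoneOn_of_deriv_nonneg (convex_Ioi 0)
    (fun y hy => ((hD y hy).continuousAt).continuousWithinAt)
    (fun y hy => by
      rw [interior_Ioi] at hy
      exact ((hD y hy).differentiableAt).differentiableWithinAt)
    (fun y hy => ?_)
  rw [interior_Ioi] at hy
  have hy' : (0:ℝ) < y := hy
  rw [(hD y hy').deriv]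
  have h1 := sinhcosh_sub_self_nonneg hy'.le
  have h2 : 0 < y * (sinh y * cosh y) := by
    have := sinh_pos' hy'
    have := Real.cosh_pos y
    positivity
  positivity

/-- Key two-point inequality (♦♦). -/
private lemma trapezoid {y z : ℝ} (hy : 0 < y) (hyz : y < z) :
    (log z - log (sinh z / cosh z)) - (log y - log (sinh y / cosh y))
      < 2/3 * ((z - y) * (log (cosh y) / y + log (cosh z) / z)) := by
  set F : ℝ → ℝ := fun w => 2/3 * ((w - y) * (log (cosh y) / y + log (cosh w) / w))
      - (log w - log (sinh w / cosh w)) with hF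
  have hDF : ∀ w : ℝ, 0 < w → HasDerivAt F
      (2/3 * (1 * (log (cosh y) / y + log (cosh w) / w)
         + (w - y) * ((w * sinh w / cosh w - log (cosh w)) / w ^ 2))
       - (w⁻¹ - 1 / (sinh w * cosh w))) w := by
    intro w hw
    have h1 : HasDerivAt (fun w : ℝ => w - y) 1 w := (hasDerivAt_id w).sub_const y
    have h2 : HasDerivAt (fun w : ℝ => log (cosh y) / y + log (cosh w) / w)
        ((w * sinh w / cosh w - log (cosh w)) / w ^ 2) w :=
      (hasDerivAt_chat hw.ne').const_add (log (cosh y) / y)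
    have h3 := (h1.mul h2).const_mul (2/3 : ℝ)
    have h4 := (Real.hasDerivAt_log hw.ne').sub (hasDerivAt_logtanh hw)
    exact h3.sub h4
  have hmono : StrictMonoOn F (Set.Ici y) := by
    refine strictMonoOn_of_deriv_pos (convex_Ici y)
      (fun w hw => ((hDF w (lt_of_lt_of_le hy hw)).continuousAt).continuousWithinAt)
      (fun w hw => ?_)
    rw [interior_Ici] at hw
    have hw' : (0:ℝ) < w := lt_trans hy hw
    rw [(hDF w hw').deriv]
    have hS := sinh_pos' hw'
    have hC := Real.cosh_pos w
    have hSy := sinh_pos' hy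
    have hCy := Real.cosh_pos y
    -- abbreviations
    set Aw := (w * sinh w / cosh w - log (cosh w)) / w ^ 2 with hAw
    set Ay := (y * sinh y / cosh y - log (cosh y)) / y ^ 2 with hAy
    have hAle : Aw ≤ Ay := A_antitone (Set.mem_Ioi.mpr hy) (Set.mem_Ioi.mpr hw') hw.le
    -- ĉ y - y * A y = (2 log cosh y - y sinh y/cosh y)/y ≥ 0
    have hKy : log (cosh y) / y - y * Ay
        = (2 * log (cosh y) - y * sinh y / cosh y) / y := by
      rw [hAy]; field_simp; ring
    have hKy' : 0 ≤ log (cosh y) / y - y * Ay := by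
      rw [hKy]
      exact div_nonneg (two_logcosh_sub_xtanh_nonneg hy.le) hy.le
    -- ĉ w + w * A w = sinh w / cosh w
    have hTw : log (cosh w) / w + w * Aw = sinh w / cosh w := by
      rw [hAw]; field_simp; ring
    -- main lower bound for the bracket
    have hbr : sinh w / cosh w + (log (cosh y) / y - y * Ay)
        ≤ 1 * (log (cosh y) / y + log (cosh w) / w) + (w - y) * Aw := by
      have : 1 * (log (cosh y) / y + log (cosh w) / w) + (w - y) * Aw
          = (log (cosh y) / y - y * Aw) + (log (cosh w) / w + w * Aw) := by ring
      rw [this, hTw]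
      have : log (cosh y) / y - y * Ay ≤ log (cosh y) / y - y * Aw := by nlinarith
      linarith
    -- positivity of 2/3 * (S/C) - 1/w + 1/(SC)
    have hfinal : 0 < 2/3 * (sinh w / cosh w) - w⁻¹ + 1 / (sinh w * cosh w) := by
      have heq : 2/3 * (sinh w / cosh w) - w⁻¹ + 1 / (sinh w * cosh w)
          = (3 * w + 2 * w * sinh w ^ 2 - 3 * (sinh w * cosh w))
            / (3 * (w * (sinh w * cosh w))) := by
        field_simp
        ring
      rw [heq]
      exact div_pos (F2_pos hw') (by positivity)
    nlinarith [hKy', hbr]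
  have h := hmono (Set.self_mem_Ici) (le_of_lt hyz) hyz
  have hFy : F y = -(log y - log (sinh y / cosh y)) := by
    rw [hF]; simp
  rw [hFy] at h
  rw [hF] at h
  linarith

/-- The master inequality. -/
private lemma master {p t u : ℝ} (hp : 0 < p) (ht : 0 < t) (htp : t ≤ p + 3/2) (hu : 0 < u) :
    0 < p * (exp (log (cosh (t * u)) / t) - 1)
        - t * (1 - exp (-(log (cosh (p * u)) / p))) := by
  set Φ : ℝ → ℝ := fun u => p * (exp (log (cosh (t * u)) / t) - 1)
      - t * (1 - exp (-(log (cosh (p * u)) / p))) with hΦdef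
  have hDΦ : ∀ u : ℝ, HasDerivAt Φ
      (p * (exp (log (cosh (t * u)) / t) * (sinh (t * u) * t / cosh (t * u) / t))
        - t * -(exp (-(log (cosh (p * u)) / p)) * -(sinh (p * u) * p / cosh (p * u) / p))) u := by
    intro u
    have hzt : HasDerivAt (fun u : ℝ => t * u) t u := by
      simpa using (hasDerivAt_id u).const_mul t
    have hct : HasDerivAt (fun u : ℝ => cosh (t * u)) (sinh (t * u) * t) u :=
      (Real.hasDerivAt_cosh (t * u)).comp u hzt
    have hXt : HasDerivAt (fun u : ℝ => log (cosh (t * u)) / t)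
        (sinh (t * u) * t / cosh (t * u) / t) u :=
      (hct.log (Real.cosh_pos _).ne').div_const t
    have term1 := ((hXt.exp).sub_const 1).const_mul p
    have hzp : HasDerivAt (fun u : ℝ => p * u) p u := by
      simpa using (hasDerivAt_id u).const_mul p
    have hcp : HasDerivAt (fun u : ℝ => cosh (p * u)) (sinh (p * u) * p) u :=
      (Real.hasDerivAt_cosh (p * u)).comp u hzp
    have hXp : HasDerivAt (fun u : ℝ => -(log (cosh (p * u)) / p))
        (-(sinh (p * u) * p / cosh (p * u) / p)) u :=
      ((hcp.log (Real.cosh_pos _).ne').div_const p).neg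
    have term2 := ((hXp.exp).const_sub 1).const_mul t
    exact term1.sub term2
  have hmono : StrictMonoOn Φ (Set.Ici (0:ℝ)) := by
    refine strictMonoOn_of_deriv_pos (convex_Ici 0)
      (fun w _ => ((hDΦ w).continuousAt).continuousWithinAt)
      (fun w hw => ?_)
    rw [interior_Ici] at hw
    have hw' : (0:ℝ) < w := hw
    rw [(hDΦ w).deriv]
    have hz0 : 0 < t * w := mul_pos ht hw'
    have hy0 : 0 < p * w := mul_pos hp hw'
    have hSz := sinh_pos' hz0
    have hSy := sinh_pos' hy0
    have hCz := Real.cosh_pos (t * w)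
    have hCy := Real.cosh_pos (p * w)
    have hXpos : 0 < log (cosh (t * w)) / t :=
      div_pos (Real.log_pos (Real.one_lt_cosh.mpr hz0.ne')) ht
    have hθpos : 0 < log (cosh (p * w)) / p :=
      div_pos (Real.log_pos (Real.one_lt_cosh.mpr hy0.ne')) hp
    -- simplify the derivative expression
    have heq : p * (exp (log (cosh (t * w)) / t) * (sinh (t * w) * t / cosh (t * w) / t))
        - t * -(exp (-(log (cosh (p * w)) / p)) * -(sinh (p * w) * p / cosh (p * w) / p))
        = p * exp (log (cosh (t * w)) / t) * (sinh (t * w) / cosh (t * w))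
          - t * exp (-(log (cosh (p * w)) / p)) * (sinh (p * w) / cosh (p * w)) := by
      field_simp
    rw [heq]
    rw [sub_pos]
    have e1 : t * exp (-(log (cosh (p * w)) / p)) * (sinh (p * w) / cosh (p * w))
        = exp (log t + -(log (cosh (p * w)) / p) + log (sinh (p * w) / cosh (p * w))) := by
      rw [exp_add, exp_add, exp_log ht, exp_log (div_pos hSy hCy)]
    have e2 : p * exp (log (cosh (t * w)) / t) * (sinh (t * w) / cosh (t * w))
        = exp (log p + log (cosh (t * w)) / t + log (sinh (t * w) / cosh (t * w))) := by
      rw [exp_add, exp_add, exp_log hp, exp_log (div_pos hSz hCz)]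
    rw [e1, e2]
    apply Real.exp_lt_exp.mpr
    have hlz : log (t * w) = log t + log w := log_mul ht.ne' hw'.ne'
    have hly : log (p * w) = log p + log w := log_mul hp.ne' hw'.ne'
    rcases le_or_gt (t * w) (p * w) with hle | hlt
    · -- t ≤ p case : Λ monotone
      have hΛ := Lambda_mono (Set.mem_Ioi.mpr hz0) (Set.mem_Ioi.mpr hy0) hle
      simp only at hΛ
      linarith [hΛ, hXpos, hθpos, hlz.symm, hly.symm]
    · -- p < t case : trapezoid
      have hT := trapezoid hy0 hlt
      have hchatz : log (cosh (t * w)) / t = w * (log (cosh (t * w)) / (t * w)) := by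
        field_simp
      have hchaty : log (cosh (p * w)) / p = w * (log (cosh (p * w)) / (p * w)) := by
        field_simp
      have hsum : 2/3 * ((t * w - p * w) * (log (cosh (p * w)) / (p * w)
            + log (cosh (t * w)) / (t * w)))
          ≤ log (cosh (t * w)) / t + log (cosh (p * w)) / p := by
        rw [hchatz, hchaty]
        skip
        have hcc : 0 < log (cosh (p * w)) / (p * w) + log (cosh (t * w)) / (t * w) := by
          have h1 := div_pos (Real.log_pos (Real.one_lt_cosh.mpr hz0.ne')) hz0
          have h2 := div_pos (Real.log_pos (Real.one_lt_cosh.mpr hy0.ne')) hy0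
          linarith
        have hzy : t * w - p * w ≤ 3/2 * w := by nlinarith
        nlinarith
      linarith [hT, hsum, hlz, hly]
  have h0 : Φ 0 = 0 := by
    rw [hΦdef]
    simp
  have h := hmono (Set.self_mem_Ici) (le_of_lt hu : (0:ℝ) ≤ u) hu
  rw [h0] at h
  exact h

private lemma powerMean_eq {r a b : ℝ} (hr : r ≠ 0) (ha : 0 < a) (hb : 0 < b) :
    powerMean r a b
      = Real.sqrt (a * b) * exp (log (cosh (r * ((log a - log b) / 2))) / r) := by
  have hm : (a ^ r + b ^ r) / 2
      = exp (r * ((log a + log b) / 2)) * cosh (r * ((log a - log b) / 2)) := by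
    rw [Real.rpow_def_of_pos ha, Real.rpow_def_of_pos hb, Real.cosh_eq, Real.exp_neg]
    rw [show log a * r = r * ((log a + log b) / 2) + r * ((log a - log b) / 2) by ring,
        show log b * r = r * ((log a + log b) / 2) - r * ((log a - log b) / 2) by ring,
        Real.exp_add, Real.exp_sub]
    have hh := Real.exp_pos (r * ((log a - log b) / 2))
    field_simp
  have hpos : 0 < exp (r * ((log a + log b) / 2)) * cosh (r * ((log a - log b) / 2)) :=
    mul_pos (Real.exp_pos _) (Real.cosh_pos _)
  have hsq : Real.sqrt (a * b) = exp ((log a + log b) / 2) := by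
    have h2 : exp ((log a + log b) / 2) ^ 2 = a * b := by
      rw [sq, ← Real.exp_add,
        show (log a + log b) / 2 + (log a + log b) / 2 = log a + log b by ring,
        Real.exp_add, Real.exp_log ha, Real.exp_log hb]
    rw [← h2, Real.sqrt_sq (Real.exp_pos _).le]
  unfold powerMean
  rw [hm, Real.rpow_def_of_pos hpos,
    Real.log_mul (Real.exp_pos _).ne' (Real.cosh_pos _).ne', Real.log_exp, hsq,
    ← Real.exp_add]
  congr 1
  field_simp

/-- Corollary 3.2(b). -/
theorem ratio_bounds_p_one_mixed (s t : ℝ) (hs : s ≠ 0) (ht : t ≠ 0)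
    (hs0 : s < 0) (h0t : 0 < t) (ht32 : t ≤ 3 / 2 - s) :
    ∀ a b : ℝ, 0 < a → 0 < b → a ≠ b →
      s / t < (powerMean s a b - geomMean a b) / (powerMean t a b - geomMean a b) ∧
      (powerMean s a b - geomMean a b) / (powerMean t a b - geomMean a b) < 0 := by
  intro a b ha hb hab
  set p : ℝ := -s with hp_def
  have hp : 0 < p := by simp [hp_def]; linarith
  have htp : t ≤ p + 3/2 := by rw [hp_def]; linarith
  set d : ℝ := (log a - log b) / 2 with hd_def
  have hd : d ≠ 0 := by
    rw [hd_def]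
    intro h
    have : log a = log b := by linarith [h, sub_eq_zero.mp (by linarith : log a - log b = 0)]
    exact hab (Real.log_injOn_pos (Set.mem_Ioi.mpr ha) (Set.mem_Ioi.mpr hb) this)
  set u : ℝ := |d| with hu_def
  have hu : 0 < u := abs_pos.mpr hd
  set G : ℝ := Real.sqrt (a * b) with hG_def
  have hG : 0 < G := Real.sqrt_pos.mpr (by positivity)
  -- cosh(r*d) = cosh(|r|*u)
  have hcosh_ev : ∀ r : ℝ, cosh (r * d) = cosh (|r| * u) := by
    intro r
    rw [hu_def, ← abs_mul, Real.cosh_abs]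
  -- power mean expressions
  have hMt : powerMean t a b = G * exp (log (cosh (t * u)) / t) := by
    rw [powerMean_eq ht ha hb, ← hd_def, ← hG_def, hcosh_ev t, abs_of_pos h0t]
  have hMs : powerMean s a b = G * exp (-(log (cosh (p * u)) / p)) := by
    rw [powerMean_eq hs ha hb, ← hd_def, ← hG_def, hcosh_ev s, abs_of_neg hs0, ← hp_def,
      show s = -p by rw [hp_def]; ring, div_neg]
  have hGeq : geomMean a b = G := rfl
  -- positivity facts
  have hz0 : 0 < t * u := mul_pos h0t hu
  have hy0 : 0 < p * u := mul_pos hp hu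
  have hX : 0 < log (cosh (t * u)) / t :=
    div_pos (Real.log_pos (Real.one_lt_cosh.mpr hz0.ne')) h0t
  have hθ : 0 < log (cosh (p * u)) / p :=
    div_pos (Real.log_pos (Real.one_lt_cosh.mpr hy0.ne')) hp
  have hD : 0 < powerMean t a b - geomMean a b := by
    rw [hMt, hGeq]
    have : 1 < exp (log (cosh (t * u)) / t) := by
      calc (1:ℝ) = exp 0 := by rw [Real.exp_zero]
      _ < _ := Real.exp_lt_exp.mpr hX
    nlinarith
  have hN : powerMean s a b - geomMean a b < 0 := by
    rw [hMs, hGeq]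
    have : exp (-(log (cosh (p * u)) / p)) < 1 := by
      rw [Real.exp_lt_one_iff]; linarith
    nlinarith
  constructor
  · rw [div_lt_div_iff₀ h0t hD]
    have hm := master hp h0t htp hu
    rw [hMt, hMs, hGeq, show s = -p by rw [hp_def]; ring]
    nlinarith [mul_pos hG hm]
  · exact div_neg_of_neg_of_pos hN hD

end RatioBoundsAux
end
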